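/- arXiv:1502.03416 — 13 statements merged into one kernel-verified Lean document; each statement's English description precedes it below -/
import Mathlib

section
/- Fix n, p ∈ ℕ with all columns x₁,…,x_p of the design matrix X nonzero, y ∈ ℝⁿ and σ² > 0. Then the function γ ↦ ℓ(γ) attains its maximum over Θ = [0,∞)^p, i.e. there exists γ̂ ∈ Θ with ℓ(γ̂) ≥ ℓ(γ) for all γ ∈ Θ. -/
open Matrix

private lemma dot_self_pos' {n : ℕ} {v : Fin n → ℝ} (hv : v ≠ 0) : 0 < v ⬝ᵥ v := by
  obtain ⟨i, hi⟩ := Function.ne_iff.mp hv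
  have hi' : v i ≠ 0 := hi
  exact Finset.sum_pos' (fun j _ => mul_self_nonneg _)
    ⟨i, Finset.mem_univ i, mul_self_pos.mpr hi'⟩

private lemma sum_mulVec' {n : ℕ} {ι : Type*} (s : Finset ι)
    (M : ι → Matrix (Fin n) (Fin n) ℝ) (v : Fin n → ℝ) :
    (∑ j ∈ s, M j) *ᵥ v = ∑ j ∈ s, M j *ᵥ v := by
  induction s using Finset.cons_induction with
  | empty => simp
  | cons a s ha ih => simp [Finset.sum_cons, Matrix.add_mulVec, ih]

private lemma dotProduct_sum' {n : ℕ} {ι : Type*} (s : Finset ι) (v : Fin n → ℝ)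
    (w : ι → Fin n → ℝ) : v ⬝ᵥ (∑ j ∈ s, w j) = ∑ j ∈ s, v ⬝ᵥ w j := by
  induction s using Finset.cons_induction with
  | empty => simp
  | cons a s ha ih => simp [Finset.sum_cons, dotProduct_add, ih]

private lemma vecMulVec_mulVec' {n : ℕ} (a v : Fin n → ℝ) :
    vecMulVec a a *ᵥ v = (a ⬝ᵥ v) • a := by
  ext i
  simp only [mulVec, vecMulVec_apply, dotProduct, Pi.smul_apply, smul_eq_mul,
    Finset.sum_mul]
  exact Finset.sum_congr rfl fun j _ => by ring

private lemma quad_ge {n p : ℕ} (x : Fin p → Fin n → ℝ) (σ2 : ℝ)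
    {γ : Fin p → ℝ} (hγ : ∀ j, 0 ≤ γ j) (v : Fin n → ℝ) :
    σ2 * (v ⬝ᵥ v) ≤ v ⬝ᵥ ((σ2 • (1 : Matrix (Fin n) (Fin n) ℝ)
      + ∑ j : Fin p, γ j • vecMulVec (x j) (x j)) *ᵥ v) := by
  rw [Matrix.add_mulVec, Matrix.smul_mulVec, Matrix.one_mulVec, dotProduct_add,
    dotProduct_smul, sum_mulVec', dotProduct_sum']
  have h2 : 0 ≤ ∑ j : Fin p, v ⬝ᵥ (γ j • vecMulVec (x j) (x j)) *ᵥ v := by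
    apply Finset.sum_nonneg
    intro j _
    rw [Matrix.smul_mulVec, vecMulVec_mulVec', dotProduct_smul, dotProduct_smul,
      smul_eq_mul, smul_eq_mul, dotProduct_comm v (x j)]
    exact mul_nonneg (hγ j) (mul_self_nonneg _)
  simp only [smul_eq_mul]
  linarith

private lemma C_posdef {n p : ℕ} (x : Fin p → Fin n → ℝ) {σ2 : ℝ} (hσ : 0 < σ2)
    {γ : Fin p → ℝ} (hγ : ∀ j, 0 ≤ γ j) :
    (σ2 • (1 : Matrix (Fin n) (Fin n) ℝ)
      + ∑ j : Fin p, γ j • vecMulVec (x j) (x j)).PosDef := by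
  refine Matrix.PosDef.of_dotProduct_mulVec_pos ?_ ?_
  · -- Hermitian
    unfold Matrix.IsHermitian
    ext i k
    simp only [conjTranspose_apply, Matrix.add_apply, Matrix.smul_apply, Matrix.one_apply,
      Matrix.sum_apply, vecMulVec_apply, star_trivial, smul_eq_mul]
    by_cases h : i = k <;> simp [h, eq_comm, mul_comm]
  · intro v hv
    have hsv : star v = v := by simp
    rw [hsv]
    have h1 : 0 < σ2 * (v ⬝ᵥ v) := mul_pos hσ (dot_self_pos' hv)
    exact h1.trans_le (quad_ge x σ2 hγ v)

/-- Existence of a maximizer of the sparse Bayesian learning marginal log-likelihood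
`L(γ) = -½ log det C_γ - ½ yᵀ C_γ⁻¹ y`, with `C_γ = σ² Iₙ + Σ_j γ_j x_j x_jᵀ`, over
`Θ = [0,∞)^p`, when all columns `x_j` of the design matrix are nonzero. -/
theorem sbl_maximizer_exists (n p : ℕ) (y : Fin n → ℝ)
    (x : Fin p → Fin n → ℝ) (hxne : ∀ j, x j ≠ 0)
    (σ2 : ℝ) (hσ : 0 < σ2)
    (C : (Fin p → ℝ) → Matrix (Fin n) (Fin n) ℝ)
    (hC : ∀ γ, C γ = σ2 • (1 : Matrix (Fin n) (Fin n) ℝ) +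
      ∑ j : Fin p, γ j • vecMulVec (x j) (x j))
    (L : (Fin p → ℝ) → ℝ)
    (hL : ∀ γ, L γ = -(1/2) * Real.log (C γ).det - (1/2) * (y ⬝ᵥ (C γ)⁻¹.mulVec y)) :
    ∃ γhat : Fin p → ℝ, (∀ j, 0 ≤ γhat j) ∧
      ∀ γ : Fin p → ℝ, (∀ j, 0 ≤ γ j) → L γ ≤ L γhat := by
  -- trivial case n = 0
  rcases Nat.eq_zero_or_pos n with hn | hn
  · haveI : IsEmpty (Fin n) := ⟨fun i => absurd i.2 (by omega)⟩
    have h0 : ∀ δ : Fin p → ℝ, L δ = 0 := by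
      intro δ
      rw [hL, Matrix.det_isEmpty]
      simp [dotProduct]
    exact ⟨0, fun j => le_rfl, fun γ hγ => by rw [h0, h0]⟩
  -- trivial case p = 0
  rcases Nat.eq_zero_or_pos p with hp | hp
  · haveI : IsEmpty (Fin p) := ⟨fun i => absurd i.2 (by omega)⟩
    refine ⟨0, fun j => le_rfl, fun γ hγ => ?_⟩
    have : γ = 0 := funext fun i => isEmptyElim i
    rw [this]
  haveI : Nonempty (Fin n) := Fin.pos_iff_nonempty.mp hn
  haveI : Nonempty (Fin p) := Fin.pos_iff_nonempty.mp hp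
  have hn' : (0:ℝ) < n := by exact_mod_cast hn
  -- basic facts
  set m : Fin p → ℝ := fun j => x j ⬝ᵥ x j with hm
  have hmpos : ∀ j, 0 < m j := fun j => dot_self_pos' (hxne j)
  set mmin : ℝ := Finset.univ.inf' Finset.univ_nonempty m with hmmin
  have hmminpos : 0 < mmin := by
    rw [hmmin, Finset.lt_inf'_iff]
    exact fun j _ => hmpos j
  have hmmin_le : ∀ j, mmin ≤ m j := fun j => Finset.inf'_le _ (Finset.mem_univ j)
  have hpd : ∀ γ : Fin p → ℝ, (∀ j, 0 ≤ γ j) → (C γ).PosDef := by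
    intro γ hγ; rw [hC]; exact C_posdef x hσ hγ
  have hdetpos : ∀ γ : Fin p → ℝ, (∀ j, 0 ≤ γ j) → 0 < (C γ).det :=
    fun γ hγ => (hpd γ hγ).det_pos
  have hquadnn : ∀ γ : Fin p → ℝ, (∀ j, 0 ≤ γ j) → 0 ≤ y ⬝ᵥ (C γ)⁻¹.mulVec y := by
    intro γ hγ
    rcases eq_or_ne y 0 with rfl | hy
    · simp
    · have h := ((hpd γ hγ).inv).dotProduct_mulVec_pos hy
      have hsy : star y = y := by simp
      rw [hsy] at h
      exact h.le
  have hub : ∀ γ : Fin p → ℝ, (∀ j, 0 ≤ γ j) → L γ ≤ -(1/2) * Real.log ((C γ).det) := by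
    intro γ hγ
    rw [hL]
    have := hquadnn γ hγ
    linarith
  -- determinant lower bound
  have hdetlb : ∀ γ : Fin p → ℝ, (∀ j, 0 ≤ γ j) → ∀ j,
      σ2 ^ (n-1) * (γ j * m j) / n ≤ (C γ).det := by
    intro γ hγ j
    have hH := (hpd γ hγ).1
    set μ := hH.eigenvalues with hμ
    have hμge : ∀ i, σ2 ≤ μ i := by
      intro i
      have hv := hH.mulVec_eigenvectorBasis i
      set v : Fin n → ℝ := ⇑(hH.eigenvectorBasis i) with hvdef
      have hvv : v ⬝ᵥ v = 1 := by
        have h1 : ‖hH.eigenvectorBasis i‖ = 1 := hH.eigenvectorBasis.orthonormal.1 i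
        have h2 : (inner ℝ (hH.eigenvectorBasis i) (hH.eigenvectorBasis i) : ℝ) = 1 := by
          rw [real_inner_self_eq_norm_sq, h1]; norm_num
        rw [EuclideanSpace.inner_eq_star_dotProduct] at h2
        simpa using h2
      have hq := quad_ge x σ2 hγ v
      rw [← hC, hv, dotProduct_smul, smul_eq_mul, hvv] at hq
      simpa [hvv] using hq
    have htrace : (C γ).trace = ∑ i, μ i := by
      simpa [hμ] using hH.trace_eq_sum_eigenvalues
    have htrace_eq : (C γ).trace = n * σ2 + ∑ j', γ j' * m j' := by
      rw [hC, Matrix.trace_add, Matrix.trace_smul, Matrix.trace_one, Matrix.trace_sum]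
      have hterm : ∀ j' : Fin p, Matrix.trace (γ j' • vecMulVec (x j') (x j')) = γ j' * m j' := by
        intro j'
        rw [Matrix.trace_smul, smul_eq_mul]
        congr 1
      rw [Finset.sum_congr rfl fun j' _ => hterm j']
      simp only [smul_eq_mul, Fintype.card_fin]
      ring
    have hex : ∃ i, (C γ).trace / n ≤ μ i := by
      by_contra hcon
      push_neg at hcon
      have h1 : ∑ i, μ i < ∑ _i : Fin n, (C γ).trace / n :=
        Finset.sum_lt_sum_of_nonempty Finset.univ_nonempty fun i _ => hcon i
      rw [Finset.sum_const, Finset.card_univ, Fintype.card_fin, nsmul_eq_mul,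
        ← htrace] at h1
      have : (n:ℝ) * ((C γ).trace / n) = (C γ).trace := by field_simp
      rw [this] at h1
      exact lt_irrefl _ h1
    obtain ⟨i₀, hi₀⟩ := hex
    have hdet : (C γ).det = ∏ i, μ i := by
      have := hH.det_eq_prod_eigenvalues
      simpa using this
    have hprod : σ2 ^ (n-1) * μ i₀ ≤ ∏ i, μ i := by
      have h1 : σ2 ^ (n-1) ≤ ∏ i ∈ Finset.univ.erase i₀, μ i := by
        have he : σ2 ^ (n-1) = ∏ _i ∈ Finset.univ.erase i₀, σ2 := by
          rw [Finset.prod_const, Finset.card_erase_of_mem (Finset.mem_univ _),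
            Finset.card_univ, Fintype.card_fin]
        rw [he]
        exact Finset.prod_le_prod (fun i _ => hσ.le) (fun i _ => hμge i)
      calc σ2 ^ (n-1) * μ i₀ ≤ (∏ i ∈ Finset.univ.erase i₀, μ i) * μ i₀ :=
            mul_le_mul_of_nonneg_right h1 (hσ.le.trans (hμge i₀))
        _ = ∏ i, μ i := Finset.prod_erase_mul _ _ (Finset.mem_univ i₀)
    have hTge : γ j * m j ≤ (C γ).trace := by
      rw [htrace_eq]
      have h1 : γ j * m j ≤ ∑ j', γ j' * m j' :=
        Finset.single_le_sum (fun j' _ => mul_nonneg (hγ j') (hmpos j').le)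
          (Finset.mem_univ j)
      have h2 : 0 ≤ (n:ℝ) * σ2 := by positivity
      linarith
    have hσp : (0:ℝ) ≤ σ2 ^ (n-1) := by positivity
    calc σ2 ^ (n-1) * (γ j * m j) / n ≤ σ2 ^ (n-1) * (C γ).trace / n := by
          gcongr
      _ = σ2 ^ (n-1) * ((C γ).trace / n) := by ring
      _ ≤ σ2 ^ (n-1) * μ i₀ := by gcongr
      _ ≤ ∏ i, μ i := hprod
      _ = (C γ).det := hdet.symm
  -- continuity
  have hCcont : Continuous C := by
    have hCe : C = fun γ => σ2 • (1 : Matrix (Fin n) (Fin n) ℝ) +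
        ∑ j : Fin p, γ j • vecMulVec (x j) (x j) := funext hC
    rw [hCe]
    exact continuous_const.add
      (continuous_finset_sum _ fun j _ => (continuous_apply j).smul continuous_const)
  have hdetcont : Continuous fun γ => (C γ).det := hCcont.matrix_det
  have hLcont : ∀ γ₀ : Fin p → ℝ, (C γ₀).det ≠ 0 → ContinuousAt L γ₀ := by
    intro γ₀ h0
    have hS : IsOpen {γ : Fin p → ℝ | (C γ).det ≠ 0} :=
      isOpen_compl_singleton.preimage hdetcont
    have heq : ∀ γ ∈ {γ : Fin p → ℝ | (C γ).det ≠ 0},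
        L γ = -(1/2) * Real.log ((C γ).det)
          - (1/2) * (y ⬝ᵥ (((C γ).det)⁻¹ • (C γ).adjugate) *ᵥ y) := by
      intro γ _
      rw [hL, Matrix.inv_def, Ring.inverse_eq_inv']
    have hA : ContinuousAt (fun γ => -(1/2) * Real.log ((C γ).det)
        - (1/2) * (y ⬝ᵥ (((C γ).det)⁻¹ • (C γ).adjugate) *ᵥ y)) γ₀ := by
      apply ContinuousAt.sub
      · exact continuousAt_const.mul (hdetcont.continuousAt.log h0)
      · apply continuousAt_const.mul
        have h1 : Continuous fun M : Matrix (Fin n) (Fin n) ℝ => y ⬝ᵥ M *ᵥ y :=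
          continuous_const.dotProduct (continuous_id.matrix_mulVec continuous_const)
        exact h1.continuousAt.comp
          ((hdetcont.continuousAt.inv₀ h0).smul hCcont.matrix_adjugate.continuousAt)
    exact hA.congr (Filter.eventuallyEq_of_mem (hS.mem_nhds h0) fun γ hγ => (heq γ hγ).symm)
  -- choose the radius R
  set c : ℝ := σ2 ^ (n-1) * mmin / n with hc
  have hcpos : 0 < c := by rw [hc]; positivity
  set R : ℝ := max 1 (Real.exp (-2 * L 0) / c) with hRdef
  have hR1 : (1:ℝ) ≤ R := le_max_left _ _
  have hcoerc : ∀ γ : Fin p → ℝ, (∀ j, 0 ≤ γ j) → ∀ j, R < γ j → L γ ≤ L 0 := by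
    intro γ hγ j hj
    have h1 : Real.exp (-2 * L 0) ≤ (C γ).det := by
      have h2 := hdetlb γ hγ j
      have h3 : Real.exp (-2 * L 0) ≤ σ2 ^ (n-1) * (γ j * m j) / n := by
        have he : Real.exp (-2 * L 0) = (Real.exp (-2 * L 0) / c) * c := by
          field_simp
        rw [he]
        have hRγ : R ≤ γ j := hj.le
        calc (Real.exp (-2 * L 0) / c) * c ≤ R * c :=
              mul_le_mul_of_nonneg_right (le_max_right _ _) hcpos.le
          _ ≤ γ j * c := mul_le_mul_of_nonneg_right hRγ hcpos.le
          _ = σ2 ^ (n-1) * (γ j * mmin) / n := by rw [hc]; ring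
          _ ≤ σ2 ^ (n-1) * (γ j * m j) / n := by
              gcongr
              · exact (zero_le_one.trans hR1).trans hRγ
              · exact hmmin_le j
      exact h3.trans h2
    have h4 : -2 * L 0 ≤ Real.log ((C γ).det) := by
      have := Real.log_le_log (Real.exp_pos _) h1
      rwa [Real.log_exp] at this
    have h5 := hub γ hγ
    linarith
  -- compactness argument
  set K : Set (Fin p → ℝ) := Set.Icc 0 (fun _ => R) with hK
  have hKc : IsCompact K := isCompact_Icc
  have hKΘ : ∀ γ ∈ K, ∀ j, 0 ≤ γ j := fun γ hγ j => hγ.1 j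
  have h0K : (0 : Fin p → ℝ) ∈ K :=
    ⟨le_rfl, fun i => zero_le_one.trans hR1⟩
  have hcont : ContinuousOn L K := fun γ hγ =>
    (hLcont γ (hdetpos γ (hKΘ γ hγ)).ne').continuousWithinAt
  obtain ⟨γhat, hγhatK, hmax⟩ := hKc.exists_isMaxOn ⟨0, h0K⟩ hcont
  refine ⟨γhat, hKΘ _ hγhatK, ?_⟩
  intro γ hγ
  by_cases hKmem : γ ∈ K
  · exact hmax hKmem
  · have hex : ∃ j, R < γ j := by
      by_contra hcon
      push_neg at hcon
      exact hKmem ⟨fun j => hγ j, fun j => hcon j⟩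
    obtain ⟨j, hj⟩ := hex
    calc L γ ≤ L 0 := hcoerc γ hγ j hj
      _ ≤ L γhat := hmax h0K
end

section
/- Let γ̂ ∈ Θ = [0,∞)^p be any maximizer of ℓ over Θ, and assume all columns x_j are nonzero. For each j ∈ {1,…,p} set C_j := σ²·Iₙ + Σ_{k≠j} γ̂_k x_k x_kᵀ. Then for every j: if (x_jᵀ C_j⁻¹ y)² > x_jᵀ C_j⁻¹ x_j then γ̂_j = ((x_jᵀ C_j⁻¹ y)² − x_jᵀ C_j⁻¹ x_j) / (x_jᵀ C_j⁻¹ x_j)², and otherwise γ̂_j = 0. -/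
open Matrix

section SBLAux

variable {n p : ℕ}

private lemma aux_vmv_mulVec (u v w : Fin n → ℝ) :
    (vecMulVec u v) *ᵥ w = (v ⬝ᵥ w) • u := by
  ext i
  simp [vecMulVec_apply, mulVec, dotProduct, Finset.sum_mul, Finset.mul_sum]
  ring_nf

private lemma aux_mul_vmv (M : Matrix (Fin n) (Fin n) ℝ) (u v : Fin n → ℝ) :
    M * vecMulVec u v = vecMulVec (M *ᵥ u) v := by
  ext i j
  simp [vecMulVec_apply, mul_apply, mulVec, dotProduct, Finset.sum_mul]
  exact Finset.sum_congr rfl fun k _ => by ring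

private lemma aux_vmv_mul_vmv (u v w z : Fin n → ℝ) :
    vecMulVec u v * vecMulVec w z = (v ⬝ᵥ w) • vecMulVec u z := by
  ext i j
  simp [vecMulVec_apply, mul_apply, dotProduct, Finset.sum_mul, Finset.mul_sum]
  exact Finset.sum_congr rfl fun k _ => by ring

private lemma aux_smul_vmv (t : ℝ) (u v : Fin n → ℝ) :
    t • vecMulVec u v = vecMulVec (t • u) v := by
  ext i j
  simp [vecMulVec_apply, Matrix.smul_apply, mul_assoc]

private lemma aux_symm_dot {M : Matrix (Fin n) (Fin n) ℝ} (hM : Mᵀ = M) (a b : Fin n → ℝ) :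
    a ⬝ᵥ M *ᵥ b = b ⬝ᵥ M *ᵥ a := by
  rw [dotProduct_mulVec, ← hM, vecMul_transpose, dotProduct_comm, hM]

private lemma aux_posDef (σ2 : ℝ) (hσ : 0 < σ2) (x : Fin p → Fin n → ℝ)
    (γ : Fin p → ℝ) (hγ : ∀ k, 0 ≤ γ k) (S : Finset (Fin p)) :
    (σ2 • (1 : Matrix (Fin n) (Fin n) ℝ) + ∑ k ∈ S, γ k • vecMulVec (x k) (x k)).PosDef := by
  refine posDef_iff_dotProduct_mulVec.mpr ⟨?_, ?_⟩
  · have hterm : ∀ k, (γ k • vecMulVec (x k) (x k) : Matrix (Fin n) (Fin n) ℝ).IsHermitian := by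
      intro k
      show _ᴴ = _
      ext i j
      simp [conjTranspose_apply, Matrix.smul_apply, vecMulVec_apply, mul_comm]
    have h1 : (σ2 • (1 : Matrix (Fin n) (Fin n) ℝ)).IsHermitian := by
      show _ᴴ = _
      rw [conjTranspose_smul, conjTranspose_one, star_trivial]
    refine h1.add ?_
    show _ᴴ = _
    rw [conjTranspose_sum]
    exact Finset.sum_congr rfl fun k _ => hterm k
  · intro z hz
    have hstar : star z = z := by
      funext i; exact star_trivial _
    rw [hstar, add_mulVec, dotProduct_add, smul_mulVec, one_mulVec]
    have h1 : (0:ℝ) < z ⬝ᵥ σ2 • z := by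
      rw [dotProduct_smul, smul_eq_mul]
      have : (0:ℝ) < z ⬝ᵥ z := by
        have := dotProduct_star_self_pos_iff (v := z) (R := ℝ)
        rw [hstar] at this
        exact this.mpr hz
      positivity
    have h2 : (0:ℝ) ≤ z ⬝ᵥ (∑ k ∈ S, γ k • vecMulVec (x k) (x k)) *ᵥ z := by
      rw [show (∑ k ∈ S, γ k • vecMulVec (x k) (x k)) *ᵥ z
          = ∑ k ∈ S, (γ k • vecMulVec (x k) (x k)) *ᵥ z from
        map_sum (mulVec.addMonoidHomLeft z) _ S]
      rw [show z ⬝ᵥ ∑ k ∈ S, (γ k • vecMulVec (x k) (x k)) *ᵥ z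
          = ∑ k ∈ S, z ⬝ᵥ ((γ k • vecMulVec (x k) (x k)) *ᵥ z) by
        simp only [dotProduct, Finset.sum_apply, Finset.mul_sum]
        exact Finset.sum_comm]
      refine Finset.sum_nonneg fun k _ => ?_
      rw [smul_mulVec, aux_vmv_mulVec, dotProduct_smul, dotProduct_smul,
        smul_eq_mul, smul_eq_mul]
      have : (0:ℝ) ≤ (x k ⬝ᵥ z) * (z ⬝ᵥ x k) := by
        rw [dotProduct_comm]; exact mul_self_nonneg _
      exact mul_nonneg (hγ k) this
    linarith

private lemma aux_inv_eq {A : Matrix (Fin n) (Fin n) ℝ} (hA : A.PosDef) (u : Fin n → ℝ)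
    {t : ℝ} (ht : 0 ≤ t) :
    (A + t • vecMulVec u u)⁻¹
      = A⁻¹ - (t / (1 + t * (u ⬝ᵥ A⁻¹ *ᵥ u))) • (A⁻¹ * vecMulVec u u * A⁻¹) := by
  set B := A⁻¹ with hB
  set V := vecMulVec u u with hV
  set s := u ⬝ᵥ B *ᵥ u with hs
  have hs0 : 0 ≤ s := by
    rcases eq_or_ne u 0 with h | h
    · simp [hs, h]
    · exact le_of_lt (by simpa using hA.inv.dotProduct_mulVec_pos h)
  have hd : (0:ℝ) < 1 + t * s := by positivity
  have hdet : IsUnit A.det := isUnit_iff_ne_zero.mpr hA.det_pos.ne'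
  have h1 : A * B = 1 := A.mul_nonsing_inv hdet
  have h2 : B * V = vecMulVec (B *ᵥ u) u := aux_mul_vmv B u u
  have h3 : V * (B * V) = s • V := by
    rw [h2, aux_vmv_mul_vmv]
  set c := t / (1 + t * s) with hc
  have key : (A + t • V) * (B - c • (B * V * B)) = 1 := by
    rw [add_mul, mul_sub, mul_sub, Matrix.mul_smul, Matrix.mul_smul,
      Matrix.smul_mul, Matrix.smul_mul, smul_smul]
    rw [show A * (B * V * B) = V * B by
        rw [← Matrix.mul_assoc, ← Matrix.mul_assoc, h1, Matrix.one_mul],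
      show V * (B * V * B) = s • (V * B) by
        rw [← Matrix.mul_assoc, show V * (B * V) = s • V from h3, Matrix.smul_mul],
      h1, smul_smul]
    have hcoef : t - (t * (c * s)) - c = 0 := by
      rw [hc]; field_simp; ring
    match_scalars
    · simp
    · simp
      linarith [hcoef]
  exact inv_eq_right_inv key

private lemma aux_det_eq {A : Matrix (Fin n) (Fin n) ℝ} (hA : A.PosDef) (u : Fin n → ℝ)
    (t : ℝ) :
    (A + t • vecMulVec u u).det = A.det * (1 + t * (u ⬝ᵥ A⁻¹ *ᵥ u)) := by
  have hdet : IsUnit A.det := isUnit_iff_ne_zero.mpr hA.det_pos.ne'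
  have h1 : A * A⁻¹ = 1 := A.mul_nonsing_inv hdet
  have hfac : A + t • vecMulVec u u = A * (1 + t • (A⁻¹ * vecMulVec u u)) := by
    rw [Matrix.mul_add, Matrix.mul_one, Matrix.mul_smul, ← Matrix.mul_assoc, h1,
      Matrix.one_mul]
  rw [hfac, det_mul]
  congr 1
  rw [aux_mul_vmv, aux_smul_vmv, vecMulVec_eq Unit, det_one_add_replicateCol_mul_replicateRow]
  rw [dotProduct_smul, smul_eq_mul]

private lemma aux_quad_eq {A : Matrix (Fin n) (Fin n) ℝ} (hA : A.PosDef) (u y : Fin n → ℝ)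
    {t : ℝ} (ht : 0 ≤ t) :
    y ⬝ᵥ (A + t • vecMulVec u u)⁻¹ *ᵥ y
      = y ⬝ᵥ A⁻¹ *ᵥ y
        - (t / (1 + t * (u ⬝ᵥ A⁻¹ *ᵥ u))) * (u ⬝ᵥ A⁻¹ *ᵥ y) ^ 2 := by
  have hsym : (A⁻¹)ᵀ = A⁻¹ := by
    have h := hA.inv.isHermitian
    ext i j
    have := congrFun (congrFun h i) j
    simpa [conjTranspose_apply] using this
  rw [aux_inv_eq hA u ht, sub_mulVec, smul_mulVec, dotProduct_sub, dotProduct_smul]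
  congr 1
  rw [show (A⁻¹ * vecMulVec u u * A⁻¹) *ᵥ y = A⁻¹ *ᵥ (vecMulVec u u *ᵥ (A⁻¹ *ᵥ y)) by
      rw [mulVec_mulVec, mulVec_mulVec],
    aux_vmv_mulVec, mulVec_smul, dotProduct_smul, smul_eq_mul, smul_eq_mul]
  rw [aux_symm_dot hsym y u]
  ring

private lemma aux_scalar {s q t0 : ℝ} (hs : 0 < s) (ht0 : 0 ≤ t0)
    (h : ∀ t, 0 ≤ t →
      -(1/2) * Real.log (1 + t * s) + (1/2) * (t / (1 + t * s) * q ^ 2)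
        ≤ -(1/2) * Real.log (1 + t0 * s) + (1/2) * (t0 / (1 + t0 * s) * q ^ 2)) :
    if s < q ^ 2 then t0 = (q ^ 2 - s) / s ^ 2 else t0 = 0 := by
  have hd0 : (0:ℝ) < 1 + t0 * s := by positivity
  by_cases hq : s < q ^ 2
  · rw [if_pos hq]
    set tstar : ℝ := (q ^ 2 - s) / s ^ 2 with htstar
    have hq2 : (0:ℝ) < q ^ 2 := hs.trans hq
    have htstar0 : 0 ≤ tstar := div_nonneg (by linarith) (by positivity)
    have hds : 1 + tstar * s = q ^ 2 / s := by
      rw [htstar]; field_simp; ring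
    have hdstar : (0:ℝ) < 1 + tstar * s := by positivity
    by_contra hne
    have hd0ne : 1 + t0 * s ≠ 1 + tstar * s := by
      intro hcon
      apply hne
      have : t0 * s = tstar * s := by linarith
      exact mul_right_cancel₀ hs.ne' this
    have hwpos : 0 < (1 + tstar * s) / (1 + t0 * s) := div_pos hdstar hd0
    have hwne : (1 + tstar * s) / (1 + t0 * s) ≠ 1 := by
      intro hcon
      rw [div_eq_one_iff_eq hd0.ne'] at hcon
      exact hd0ne hcon.symm
    have hlog := Real.log_lt_sub_one_of_pos hwpos hwne
    rw [Real.log_div hdstar.ne' hd0.ne'] at hlog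
    have e1 : tstar / (1 + tstar * s) * q ^ 2 = tstar * s := by
      rw [hds, div_div_eq_mul_div, div_mul_cancel₀ _ hq2.ne']
    have e2 : t0 / (1 + t0 * s) * q ^ 2
        = (1 + tstar * s) - (1 + tstar * s) / (1 + t0 * s) := by
      rw [hds]; field_simp; ring
    have hts := h tstar htstar0
    linarith
  · rw [if_neg hq]
    by_contra h0
    have ht0pos : 0 < t0 := lt_of_le_of_ne ht0 (Ne.symm h0)
    have hd1 : (1:ℝ) < 1 + t0 * s := by nlinarith
    have hwpos : (0:ℝ) < 1 / (1 + t0 * s) := by positivity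
    have hwne : 1 / (1 + t0 * s) ≠ 1 := by
      intro hcon
      rw [div_eq_one_iff_eq hd0.ne'] at hcon
      linarith
    have hlog : Real.log (1 / (1 + t0 * s)) < 1 / (1 + t0 * s) - 1 :=
      Real.log_lt_sub_one_of_pos hwpos hwne
    rw [one_div, Real.log_inv] at hlog
    have hmul : t0 * q ^ 2 ≤ t0 * s :=
      mul_le_mul_of_nonneg_left (le_of_not_gt hq) ht0
    have h2 : t0 * s / (1 + t0 * s) = 1 - 1 / (1 + t0 * s) := by
      field_simp
      ring
    have h1 : t0 / (1 + t0 * s) * q ^ 2 ≤ 1 - 1 / (1 + t0 * s) := by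
      rw [div_mul_eq_mul_div, ← h2]
      gcongr
    have hzero := h 0 le_rfl
    simp only [zero_mul, add_zero, mul_zero, zero_div, Real.log_one] at hzero
    rw [one_div] at h1
    linarith

end SBLAux

/-- Coordinatewise characterization of any maximizer `γhat` of the sparse Bayesian learning
marginal log-likelihood over `Θ = [0,∞)^p`: with
`C_j = σ² Iₙ + Σ_{k≠j} γhat_k x_k x_kᵀ`, for every `j`,
`γhat_j = ((x_jᵀC_j⁻¹y)² - x_jᵀC_j⁻¹x_j)/(x_jᵀC_j⁻¹x_j)²` if `(x_jᵀC_j⁻¹y)² > x_jᵀC_j⁻¹x_j`,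
and `γhat_j = 0` otherwise. -/
theorem sbl_maximizer_fixed_point (n p : ℕ) (y : Fin n → ℝ)
    (x : Fin p → Fin n → ℝ) (hxne : ∀ j, x j ≠ 0)
    (σ2 : ℝ) (hσ : 0 < σ2)
    (C : (Fin p → ℝ) → Matrix (Fin n) (Fin n) ℝ)
    (hC : ∀ γ, C γ = σ2 • (1 : Matrix (Fin n) (Fin n) ℝ) +
      ∑ j : Fin p, γ j • vecMulVec (x j) (x j))
    (L : (Fin p → ℝ) → ℝ)
    (hL : ∀ γ, L γ = -(1/2) * Real.log (C γ).det - (1/2) * (y ⬝ᵥ (C γ)⁻¹.mulVec y))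
    (γhat : Fin p → ℝ) (hpos : ∀ j, 0 ≤ γhat j)
    (hmax : ∀ γ : Fin p → ℝ, (∀ j, 0 ≤ γ j) → L γ ≤ L γhat)
    (Cj : Fin p → Matrix (Fin n) (Fin n) ℝ)
    (hCj : ∀ j, Cj j = σ2 • (1 : Matrix (Fin n) (Fin n) ℝ) +
      ∑ k ∈ Finset.univ.erase j, γhat k • vecMulVec (x k) (x k)) :
    ∀ j : Fin p,
      if x j ⬝ᵥ (Cj j)⁻¹.mulVec (x j) < (x j ⬝ᵥ (Cj j)⁻¹.mulVec y)^2
      then γhat j = ((x j ⬝ᵥ (Cj j)⁻¹.mulVec y)^2 - x j ⬝ᵥ (Cj j)⁻¹.mulVec (x j)) /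
        (x j ⬝ᵥ (Cj j)⁻¹.mulVec (x j))^2
      else γhat j = 0 := by
  intro j
  have hApd : (Cj j).PosDef := by
    rw [hCj j]
    exact aux_posDef σ2 hσ x γhat hpos _
  set s : ℝ := x j ⬝ᵥ (Cj j)⁻¹.mulVec (x j) with hsdef
  set q : ℝ := x j ⬝ᵥ (Cj j)⁻¹.mulVec y with hqdef
  have hs_pos : 0 < s := by
    have h := hApd.inv.dotProduct_mulVec_pos (hxne j)
    have hstar : star (x j) = x j := funext fun i => star_trivial _
    rw [hstar] at h
    exact h
  -- the perturbed covariance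
  have key : ∀ t : ℝ, C (Function.update γhat j t)
      = Cj j + t • vecMulVec (x j) (x j) := by
    intro t
    rw [hC, hCj]
    rw [← Finset.add_sum_erase _ _ (Finset.mem_univ j)]
    rw [Function.update_self]
    rw [Finset.sum_congr rfl (fun k hk => by
      rw [Function.update_of_ne (Finset.ne_of_mem_erase hk)])]
    abel
  have hdetpos := hApd.det_pos
  -- value of L along the j-th coordinate
  have hLt : ∀ t : ℝ, 0 ≤ t →
      L (Function.update γhat j t)
        = (-(1/2) * Real.log (Cj j).det - (1/2) * (y ⬝ᵥ (Cj j)⁻¹.mulVec y))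
          + (-(1/2) * Real.log (1 + t * s) + (1/2) * (t / (1 + t * s) * q ^ 2)) := by
    intro t ht
    have hd : (0:ℝ) < 1 + t * s := by positivity
    rw [hL, key t, aux_det_eq hApd, aux_quad_eq hApd _ _ ht,
      Real.log_mul hdetpos.ne' hd.ne']
    rw [← hsdef, ← hqdef]
    ring
  -- the one-dimensional maximality property
  have hφ : ∀ t, 0 ≤ t →
      -(1/2) * Real.log (1 + t * s) + (1/2) * (t / (1 + t * s) * q ^ 2)
        ≤ -(1/2) * Real.log (1 + γhat j * s) + (1/2) * (γhat j / (1 + γhat j * s) * q ^ 2) := by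
    intro t ht
    have hup : ∀ k, 0 ≤ Function.update γhat j t k := by
      intro k
      rcases eq_or_ne k j with rfl | hk
      · rw [Function.update_self]; exact ht
      · rw [Function.update_of_ne hk]; exact hpos k
    have h1 := hmax (Function.update γhat j t) hup
    rw [hLt t ht] at h1
    have h2 : L γhat = L (Function.update γhat j (γhat j)) := by
      rw [Function.update_eq_self]
    rw [h2, hLt (γhat j) (hpos j)] at h1
    linarith
  exact aux_scalar hs_pos (hpos j) hφ
end

section
/- For every γ ∈ Θ = [0,∞)^p and every index i ∈ {1,…,p}, one has ℓ(γ) ≤ −(n/2) log σ² − ½ log(1 + γ_i ‖x_i‖²/σ²). In particular, if x_i ≠ 0 then ℓ(γ) → −∞ as γ_i → ∞ uniformly over the other coordinates. -/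
open Matrix

private lemma sbl_psd_svv {n : ℕ} {c : ℝ} (hc : 0 ≤ c) (v : Fin n → ℝ) :
    (c • vecMulVec v v).PosSemidef := by
  refine PosSemidef.of_dotProduct_mulVec_nonneg ?_ ?_
  · ext i j
    simp [conjTranspose_apply, vecMulVec_apply, mul_comm]
  · intro z
    have h : ∀ i, ((c • vecMulVec v v) *ᵥ z) i = c * v i * (v ⬝ᵥ z) := by
      intro i
      simp only [mulVec, dotProduct, Matrix.smul_apply, vecMulVec_apply, smul_eq_mul]
      rw [Finset.mul_sum]
      exact Finset.sum_congr rfl fun j _ => by ring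
    have h2 : star z ⬝ᵥ ((c • vecMulVec v v) *ᵥ z) = c * (v ⬝ᵥ z) * (v ⬝ᵥ z) := by
      simp only [star_trivial, dotProduct]
      calc ∑ i, z i * ((c • vecMulVec v v) *ᵥ z) i
          = ∑ i, c * (v ⬝ᵥ z) * (v i * z i) := by
            exact Finset.sum_congr rfl fun i _ => by rw [h i]; ring
        _ = c * (v ⬝ᵥ z) * ∑ i, v i * z i := by rw [Finset.mul_sum]
        _ = c * (v ⬝ᵥ z) * (v ⬝ᵥ z) := rfl
    rw [h2]
    nlinarith [mul_self_nonneg (v ⬝ᵥ z)]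

private lemma sbl_pd_smul_one {n : ℕ} {σ2 : ℝ} (h : 0 < σ2) :
    (σ2 • (1 : Matrix (Fin n) (Fin n) ℝ)).PosDef := by
  have heq : σ2 • (1 : Matrix (Fin n) (Fin n) ℝ) = diagonal (fun _ => σ2) := by
    ext i j
    by_cases hij : i = j <;> simp [hij, Matrix.one_apply, diagonal]
  rw [heq]
  exact (posDef_diagonal_iff).mpr fun _ => h

open MatrixOrder in
/-- Determinant monotonicity: `det A ≤ det (A + B)` for `A` positive definite and
`B` positive semidefinite. -/
private lemma sbl_det_le_det_add {n : ℕ} {A B : Matrix (Fin n) (Fin n) ℝ}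
    (hA : A.PosDef) (hB : B.PosSemidef) : A.det ≤ (A + B).det := by
  classical
  set R := CFC.sqrt A with hRdef
  have hR : R.PosSemidef := (CFC.sqrt_nonneg A).posSemidef
  have hRR : R * R = A := CFC.sqrt_mul_sqrt_self A hA.posSemidef.nonneg
  have hdetA : 0 < A.det := hA.det_pos
  have hdetR : IsUnit R.det := by
    refine Ne.isUnit ?_
    intro h
    rw [← hRR, det_mul, h, mul_zero] at hdetA
    exact lt_irrefl _ hdetA
  have hRinvH : (R⁻¹).IsHermitian := hR.1.inv
  set S := R⁻¹ * B * R⁻¹ with hSdef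
  have hS : S.PosSemidef := by
    have := hB.mul_mul_conjTranspose_same R⁻¹
    rwa [hRinvH.eq] at this
  have h1 : R * R⁻¹ = 1 := mul_nonsing_inv R hdetR
  have h2 : R⁻¹ * R = 1 := nonsing_inv_mul R hdetR
  have key : A + B = R * (1 + S) * R := by
    have hRS : R * S * R = B := by
      rw [hSdef]
      calc R * (R⁻¹ * B * R⁻¹) * R = R * R⁻¹ * B * (R⁻¹ * R) := by
            simp only [Matrix.mul_assoc]
        _ = B := by rw [h1, h2, Matrix.one_mul, Matrix.mul_one]
    rw [Matrix.mul_add, Matrix.mul_one, Matrix.add_mul, hRR, hRS]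
  have hdet1S : 1 ≤ (1 + S).det := by
    have hH := hS.1
    have spec := hH.spectral_theorem
    set U := (hH.eigenvectorUnitary : Matrix (Fin n) (Fin n) ℝ) with hU
    have hUU : U * star U = 1 := (Matrix.mem_unitaryGroup_iff).mp hH.eigenvectorUnitary.2
    have hone : 1 + S = U * (1 + diagonal (RCLike.ofReal ∘ hH.eigenvalues)) * star U := by
      rw [Matrix.mul_add, Matrix.add_mul, Matrix.mul_one, hUU]
      conv_lhs => rw [spec, Unitary.conjStarAlgAut_apply]
    have hdetU : (1 + S).det = ((1 : Matrix (Fin n) (Fin n) ℝ) + diagonal (RCLike.ofReal ∘ hH.eigenvalues)).det := by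
      rw [hone, det_mul_right_comm, hUU, Matrix.one_mul]
    rw [hdetU]
    have hdiag : (1 : Matrix (Fin n) (Fin n) ℝ) + diagonal (RCLike.ofReal ∘ hH.eigenvalues)
        = diagonal (fun i => 1 + hH.eigenvalues i) := by
      rw [← diagonal_one, diagonal_add]
      congr 1
    rw [hdiag, det_diagonal]
    calc (1 : ℝ) = ∏ _i : Fin n, (1 : ℝ) := by simp
      _ ≤ ∏ i, (1 + hH.eigenvalues i) :=
          Finset.prod_le_prod (fun i _ => zero_le_one)
            (fun i _ => by have := hS.eigenvalues_nonneg i; linarith)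
  calc A.det = A.det * 1 := (mul_one _).symm
    _ ≤ A.det * (1 + S).det := by
        exact mul_le_mul_of_nonneg_left hdet1S hdetA.le
    _ = (A + B).det := by
        rw [key, det_mul, det_mul, ← hRR, det_mul]
        ring

/-- Upper bound on the sparse Bayesian learning marginal log-likelihood:
for every `γ ∈ Θ = [0,∞)^p` and every `i`,
`ℓ(γ) ≤ -(n/2) log σ² - ½ log(1 + γ_i ‖x_i‖²/σ²)`.
In particular, if `x_i ≠ 0` then `ℓ(γ) → -∞` as `γ_i → ∞`, uniformly over the
other coordinates. -/
theorem sbl_loglik_upper_bound (n p : ℕ) (y : Fin n → ℝ)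
    (x : Fin p → Fin n → ℝ)
    (σ2 : ℝ) (hσ : 0 < σ2)
    (C : (Fin p → ℝ) → Matrix (Fin n) (Fin n) ℝ)
    (hC : ∀ γ, C γ = σ2 • (1 : Matrix (Fin n) (Fin n) ℝ) +
      ∑ j : Fin p, γ j • vecMulVec (x j) (x j))
    (L : (Fin p → ℝ) → ℝ)
    (hL : ∀ γ, L γ = -(1/2) * Real.log (C γ).det - (1/2) * (y ⬝ᵥ (C γ)⁻¹.mulVec y)) :
    (∀ γ : Fin p → ℝ, (∀ j, 0 ≤ γ j) → ∀ i : Fin p,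
      L γ ≤ -((n : ℝ)/2) * Real.log σ2 - (1/2) * Real.log (1 + γ i * (x i ⬝ᵥ x i) / σ2)) ∧
    (∀ i : Fin p, x i ≠ 0 → ∀ M : ℝ, ∃ T : ℝ, ∀ γ : Fin p → ℝ,
      (∀ j, 0 ≤ γ j) → T ≤ γ i → L γ ≤ M) := by
  classical
  have hxx : ∀ j, 0 ≤ x j ⬝ᵥ x j := fun j =>
    Finset.sum_nonneg fun k _ => mul_self_nonneg _
  have hbound : ∀ γ : Fin p → ℝ, (∀ j, 0 ≤ γ j) → ∀ i : Fin p,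
      L γ ≤ -((n : ℝ)/2) * Real.log σ2 - (1/2) * Real.log (1 + γ i * (x i ⬝ᵥ x i) / σ2) := by
    intro γ hγ i
    set Ai : Matrix (Fin n) (Fin n) ℝ :=
      σ2 • (1 : Matrix (Fin n) (Fin n) ℝ) + γ i • vecMulVec (x i) (x i) with hAidef
    have hAipd : Ai.PosDef := (sbl_pd_smul_one hσ).add_posSemidef (sbl_psd_svv (hγ i) (x i))
    have hBpsd : (∑ j ∈ Finset.univ.erase i, γ j • vecMulVec (x j) (x j)).PosSemidef := by
      refine Finset.sum_induction _ _ (fun a b ha hb => ha.add hb) PosSemidef.zero ?_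
      intro j _
      exact sbl_psd_svv (hγ j) (x j)
    have hsplit : C γ = Ai + ∑ j ∈ Finset.univ.erase i, γ j • vecMulVec (x j) (x j) := by
      rw [hC γ, ← Finset.add_sum_erase Finset.univ _ (Finset.mem_univ i), ← add_assoc]
    have hCpd : (C γ).PosDef := by
      rw [hsplit]; exact hAipd.add_posSemidef hBpsd
    have hdetle : Ai.det ≤ (C γ).det := by
      rw [hsplit]; exact sbl_det_le_det_add hAipd hBpsd
    have hq : 0 < 1 + γ i * (x i ⬝ᵥ x i) / σ2 := by
      have : 0 ≤ γ i * (x i ⬝ᵥ x i) / σ2 := div_nonneg (mul_nonneg (hγ i) (hxx i)) hσ.le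
      linarith
    have hdetAi : Ai.det = σ2 ^ n * (1 + γ i * (x i ⬝ᵥ x i) / σ2) := by
      have hAi2 : Ai = σ2 • ((1 : Matrix (Fin n) (Fin n) ℝ) +
          vecMulVec ((γ i / σ2) • x i) (x i)) := by
        rw [hAidef, smul_add]
        congr 1
        ext a b
        simp only [Matrix.smul_apply, vecMulVec_apply, smul_eq_mul, Pi.smul_apply]
        field_simp
      rw [hAi2, det_smul, vecMulVec_eq Unit, det_one_add_replicateCol_mul_replicateRow]
      have hdp : x i ⬝ᵥ (γ i / σ2) • x i = (γ i / σ2) * (x i ⬝ᵥ x i) := by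
        simp [dotProduct_smul, smul_eq_mul]
      rw [hdp, Fintype.card_fin]
      ring
    have hdetAipos : 0 < Ai.det := hAipd.det_pos
    have hlog : Real.log Ai.det ≤ Real.log (C γ).det :=
      Real.log_le_log hdetAipos hdetle
    have hlogAi : Real.log Ai.det
        = (n : ℝ) * Real.log σ2 + Real.log (1 + γ i * (x i ⬝ᵥ x i) / σ2) := by
      rw [hdetAi, Real.log_mul (pow_pos hσ n).ne' hq.ne', Real.log_pow]
    have hquad : 0 ≤ y ⬝ᵥ (C γ)⁻¹.mulVec y := by
      have := hCpd.inv.posSemidef.dotProduct_mulVec_nonneg y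
      simpa using this
    rw [hL γ]
    have := hlogAi ▸ hlog
    linarith
  refine ⟨hbound, ?_⟩
  intro i hxi M
  set c : ℝ := x i ⬝ᵥ x i with hcdef
  have hc : 0 < c := by
    rcases lt_or_eq_of_le (hxx i) with h | h
    · exact h
    · exact absurd (dotProduct_self_eq_zero.mp h.symm) hxi
  set K : ℝ := -2 * M - (n : ℝ) * Real.log σ2 with hKdef
  refine ⟨max 0 ((Real.exp K - 1) * σ2 / c), ?_⟩
  intro γ hγ hT
  have hTγ : (Real.exp K - 1) * σ2 / c ≤ γ i := le_trans (le_max_right _ _) hT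
  have hKle : K ≤ Real.log (1 + γ i * c / σ2) := by
    have h2 : (Real.exp K - 1) * σ2 ≤ γ i * c := by
      have := mul_le_mul_of_nonneg_right hTγ hc.le
      rwa [div_mul_cancel₀ _ hc.ne'] at this
    have h3 : Real.exp K ≤ 1 + γ i * c / σ2 := by
      have h4 : (Real.exp K - 1) ≤ γ i * c / σ2 := by
        rw [le_div_iff₀ hσ]; linarith
      linarith
    calc K = Real.log (Real.exp K) := (Real.log_exp K).symm
      _ ≤ Real.log (1 + γ i * c / σ2) := Real.log_le_log (Real.exp_pos K) h3
  have := hbound γ hγ i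
  rw [← hcdef] at this
  calc L γ ≤ -((n : ℝ)/2) * Real.log σ2 - (1/2) * Real.log (1 + γ i * c / σ2) := this
    _ ≤ -((n : ℝ)/2) * Real.log σ2 - (1/2) * K := by linarith
    _ = M := by rw [hKdef]; ring
end

section
/- Let a ∈ ℝ and b > 0, and define h : [0,∞) → ℝ by h(t) := −½ log(1 + t b) + ½ t a² / (1 + t b). If a² ≤ b then h attains its maximum over [0,∞) at t = 0, i.e. h(t) ≤ h(0) for all t ≥ 0. If a² > b then h attains its maximum over [0,∞) at t⋆ := (a² − b)/b², i.e. h(t) ≤ h(t⋆) for all t ≥ 0. -/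
/-- The one-dimensional maximization underlying the coordinatewise characterization of the
sparse Bayesian learning maximizer: with `b = xᵀA⁻¹x > 0` and `a = xᵀA⁻¹y`, the profile
log-likelihood `h(t) = -½ log(1 + t b) + ½ t a² / (1 + t b)` attains its maximum over `[0,∞)`
at `t = 0` when `a² ≤ b`, and at `t⋆ = (a² - b)/b²` when `a² > b`. -/
theorem sbl_scalar_profile_max (a b : ℝ) (hb : 0 < b)
    (h : ℝ → ℝ)
    (hh : ∀ t, h t = -(1/2) * Real.log (1 + t * b) + (1/2) * t * a^2 / (1 + t * b)) :
    (a^2 ≤ b → ∀ t, 0 ≤ t → h t ≤ h 0) ∧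
    (b < a^2 → ∀ t, 0 ≤ t → h t ≤ h ((a^2 - b) / b^2)) := by
  constructor
  · intro hab t ht
    have hu : 0 < 1 + t * b := by nlinarith
    have h0 : h 0 = 0 := by rw [hh 0]; simp
    rw [hh t, h0]
    have hlog := Real.log_le_sub_one_of_pos (one_div_pos.mpr hu)
    rw [Real.log_div one_ne_zero (ne_of_gt hu), Real.log_one] at hlog
    -- hlog : 0 - log (1+t*b) ≤ 1/(1+t*b) - 1
    have h2 : t * a ^ 2 ≤ (1 + t * b) - 1 := by nlinarith [mul_le_mul_of_nonneg_left hab ht]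
    have hinv : (1 + t * b) * (1 / (1 + t * b)) = 1 := by
      field_simp
    have h3 : (1/2) * t * a ^ 2 / (1 + t * b) ≤ (1/2) * (1 - 1 / (1 + t * b)) := by
      rw [div_le_iff₀ hu]
      nlinarith [h2, hinv]
    linarith
  · intro hab t ht
    have ha2 : 0 < a ^ 2 := lt_trans hb hab
    have hu : 0 < 1 + t * b := by nlinarith
    have hc : 0 < a ^ 2 / b := div_pos ha2 hb
    have hstar : 1 + (a ^ 2 - b) / b ^ 2 * b = a ^ 2 / b := by
      field_simp; ring
    rw [hh t, hh _, hstar]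
    have hlog := Real.log_le_sub_one_of_pos (div_pos hc hu)
    rw [Real.log_div (ne_of_gt hc) (ne_of_gt hu)] at hlog
    -- hlog : log (a^2/b) - log (1+t*b) ≤ (a^2/b)/(1+t*b) - 1
    have halg : (1/2) * t * a ^ 2 / (1 + t * b)
        - (1/2) * ((a ^ 2 - b) / b ^ 2) * a ^ 2 / (a ^ 2 / b)
        = (1/2) * (1 - (a ^ 2 / b) / (1 + t * b)) := by
      have ha : a ≠ 0 := by rintro rfl; norm_num at ha2
      field_simp
      ring
    linarith [halg]
end

section
/- Assume the columns of X are pairwise orthogonal and x_j ≠ 0 for a fixed index j with β⋆_j = 0. Then the law of Y := Xβ⋆ + ε satisfies P[⟨x_j, Y⟩² ≤ σ²‖x_j‖²] = P[Z² ≤ 1], where Z is a standard Gaussian random variable (law gaussianReal 0 1). Equivalently, under the orthogonal design the SBL hyperparameter estimate γ̂_{n,j} equals 0 exactly on the event {⟨x_j,Y⟩² ≤ σ²‖x_j‖²}, and this event has probability P[Z² ≤ 1] ≈ 0.68, independently of the sample size. -/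
open Matrix MeasureTheory ProbabilityTheory Real NNReal


lemma pdf_conv_pointwise (v1 v2 : ℝ≥0) (hv1 : v1 ≠ 0) (hv2 : v2 ≠ 0) (a b : ℝ) :
    gaussianPDFReal 0 v2 (a - b) * gaussianPDFReal 0 v1 b
      = gaussianPDFReal 0 (v1 + v2) a
        * gaussianPDFReal ((v1 : ℝ) * a / ((v1 : ℝ) + v2)) (v1 * v2 / (v1 + v2)) b := by
  have hA : (0:ℝ) < v1 := lt_of_le_of_ne v1.coe_nonneg (by exact_mod_cast hv1.symm)
  have hB : (0:ℝ) < v2 := lt_of_le_of_ne v2.coe_nonneg (by exact_mod_cast hv2.symm)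
  have hAB : (0:ℝ) < (v1:ℝ) + v2 := by positivity
  simp only [gaussianPDFReal, NNReal.coe_add, NNReal.coe_div, NNReal.coe_mul, sub_zero]
  rw [mul_mul_mul_comm, mul_mul_mul_comm ((√(2 * π * ((v1:ℝ) + v2)))⁻¹), ← Real.exp_add,
    ← Real.exp_add]
  congr 1
  · rw [← mul_inv, ← mul_inv, ← Real.sqrt_mul (by positivity), ← Real.sqrt_mul (by positivity)]
    congr 1
    field_simp
  · congr 1
    field_simp
    ring

lemma lintegral_conv (v1 v2 : ℝ≥0) (hv1 : v1 ≠ 0) (hv2 : v2 ≠ 0) (a : ℝ) :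
    ∫⁻ b, gaussianPDF 0 v1 b * gaussianPDF 0 v2 (a - b) = gaussianPDF 0 (v1 + v2) a := by
  have hv12 : v1 * v2 / (v1 + v2) ≠ 0 := by
    rw [ne_eq, div_eq_zero_iff]
    push_neg
    exact ⟨mul_ne_zero hv1 hv2, fun h => hv1 (by simpa using (add_eq_zero.mp h).1)⟩
  calc ∫⁻ b, gaussianPDF 0 v1 b * gaussianPDF 0 v2 (a - b)
      = ∫⁻ b, gaussianPDF 0 (v1 + v2) a
          * gaussianPDF ((v1 : ℝ) * a / ((v1 : ℝ) + v2)) (v1 * v2 / (v1 + v2)) b := by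
        congr 1 with b
        rw [gaussianPDF, gaussianPDF, gaussianPDF, gaussianPDF,
          ← ENNReal.ofReal_mul (gaussianPDFReal_nonneg _ _ _),
          ← ENNReal.ofReal_mul (gaussianPDFReal_nonneg _ _ _), mul_comm
            (gaussianPDFReal 0 v1 b), pdf_conv_pointwise v1 v2 hv1 hv2 a b]
    _ = gaussianPDF 0 (v1 + v2) a := by
        rw [lintegral_const_mul _ (measurable_gaussianPDF _ _),
          lintegral_gaussianPDF_eq_one _ hv12, mul_one]

lemma gaussian_conv (v1 v2 : ℝ≥0) :
    Measure.map (fun p : ℝ × ℝ => p.1 + p.2)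
        ((gaussianReal 0 v1).prod (gaussianReal 0 v2))
      = gaussianReal 0 (v1 + v2) := by
  rcases eq_or_ne v1 0 with rfl | hv1
  · rw [gaussianReal_zero_var, Measure.dirac_prod,
      Measure.map_map (by fun_prop) (by fun_prop)]
    simp [Function.comp_def]
  rcases eq_or_ne v2 0 with rfl | hv2
  · rw [gaussianReal_zero_var, Measure.prod_dirac,
      Measure.map_map (by fun_prop) (by fun_prop)]
    simp [Function.comp_def]
  ext s hs
  rw [Measure.map_apply (by fun_prop) hs,
    Measure.prod_apply (show MeasurableSet ((fun p : ℝ × ℝ => p.1 + p.2) ⁻¹' s) from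
      (measurable_fst.add measurable_snd) hs)]
  have h1 : ∀ a : ℝ, (gaussianReal 0 v2) (Prod.mk a ⁻¹' ((fun p : ℝ × ℝ => p.1 + p.2) ⁻¹' s))
      = ∫⁻ y in s, gaussianPDF 0 v2 (y - a) := by
    intro a
    have : Prod.mk a ⁻¹' ((fun p : ℝ × ℝ => p.1 + p.2) ⁻¹' s) = (fun b => a + b) ⁻¹' s := rfl
    rw [this, ← Measure.map_apply (by fun_prop) hs, gaussianReal_map_const_add,
      gaussianReal_of_var_ne_zero _ hv2, withDensity_apply _ hs]
    congr 1 with y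
    rw [gaussianPDF, gaussianPDF, gaussianPDFReal_sub, zero_add]
  simp_rw [h1]
  rw [gaussianReal_of_var_ne_zero (μ := 0) (v := v1 + v2) (by simp [hv1]),
    gaussianReal_of_var_ne_zero _ hv1, withDensity_apply _ hs]
  have hmeas : Measurable fun x : ℝ => ∫⁻ y in s, gaussianPDF 0 v2 (y - x) := by
    apply Measurable.lintegral_prod_right' (f := fun p : ℝ × ℝ => gaussianPDF 0 v2 (p.2 - p.1))
    exact (measurable_gaussianPDF 0 v2).comp (measurable_snd.sub measurable_fst)
  rw [lintegral_withDensity_eq_lintegral_mul _ (measurable_gaussianPDF _ _) hmeas]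
  have h2 : ∀ a : ℝ, gaussianPDF 0 v1 a * ∫⁻ y in s, gaussianPDF 0 v2 (y - a)
      = ∫⁻ y in s, gaussianPDF 0 v1 a * gaussianPDF 0 v2 (y - a) := fun a =>
    (lintegral_const_mul _ ((measurable_gaussianPDF 0 v2).comp
      (measurable_id.sub measurable_const))).symm
  simp only [Pi.mul_apply]
  simp_rw [h2]
  rw [lintegral_lintegral_swap]
  · refine setLIntegral_congr_fun hs (fun y _ => ?_)
    exact lintegral_conv v1 v2 hv1 hv2 y
  · apply Measurable.aemeasurable
    exact ((measurable_gaussianPDF 0 v1).comp measurable_fst).mul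
      ((measurable_gaussianPDF 0 v2).comp (measurable_snd.sub measurable_fst))

lemma map_linear_comb (σ2 : ℝ≥0) : ∀ (n : ℕ) (c : Fin n → ℝ),
    Measure.map (fun ε : Fin n → ℝ => ∑ i, c i * ε i)
        (Measure.pi fun _ : Fin n => gaussianReal 0 σ2)
      = gaussianReal 0 (∑ i, Real.toNNReal ((c i)^2) * σ2) := by
  intro n
  induction n with
  | zero =>
    intro c
    simp only [Finset.univ_eq_empty, Finset.sum_empty]
    rw [Measure.map_const, measure_univ, one_smul, gaussianReal_zero_var]
  | succ n ih =>
    intro c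
    have hmp := measurePreserving_piFinSuccAbove (fun _ : Fin (n+1) => gaussianReal 0 σ2) 0
    set e := MeasurableEquiv.piFinSuccAbove (fun _ : Fin (n+1) => ℝ) 0 with he
    have hfe : (fun ε : Fin (n+1) → ℝ => ∑ i, c i * ε i)
        = (fun q : ℝ × (Fin n → ℝ) => c 0 * q.1 + ∑ j, c j.succ * q.2 j) ∘ e := by
      funext ε
      simp [he, Fin.sum_univ_succ, Fin.removeNth, Fin.zero_succAbove, Fin.tail]
    have hg : Measurable (fun q : ℝ × (Fin n → ℝ) => c 0 * q.1 + ∑ j, c j.succ * q.2 j) := by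
      fun_prop
    rw [hfe, ← Measure.map_map hg e.measurable, hmp.map_eq]
    have hsplit : (fun q : ℝ × (Fin n → ℝ) => c 0 * q.1 + ∑ j, c j.succ * q.2 j)
        = (fun p : ℝ × ℝ => p.1 + p.2)
          ∘ (Prod.map (fun a => c 0 * a) (fun w : Fin n → ℝ => ∑ j, c j.succ * w j)) := rfl
    rw [hsplit, ← Measure.map_map (by fun_prop) (by fun_prop),
      ← Measure.map_prod_map _ _ (by fun_prop) (by fun_prop),
      ih (fun j => c j.succ)]
    have h0 : Measure.map (fun a => c 0 * a) (gaussianReal 0 σ2)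
        = gaussianReal 0 (Real.toNNReal ((c 0)^2) * σ2) := by
      have := gaussianReal_map_const_mul (μ := 0) (v := σ2) (c 0)
      rw [mul_zero] at this
      convert this using 3
      ext
      simp [Real.coe_toNNReal _ (sq_nonneg (c 0))]
    rw [h0, gaussian_conv, Fin.sum_univ_succ]

/-- Under an orthogonal design with Gaussian noise `ε ~ N(0, σ² Iₙ)` and `Y = Xβ⋆ + ε`,
if `β⋆_j = 0` then the event `{⟨x_j, Y⟩² ≤ σ²‖x_j‖²}` — which, under the orthogonal
design, is exactly the event on which the SBL hyperparameter estimate `γhat_{n,j}`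
equals `0` — has probability `P[Z² ≤ 1] ≈ 0.68` where `Z ~ N(0,1)`, independently of
the sample size. -/
theorem sbl_zero_probability_orthogonal (n p : ℕ)
    (X : Matrix (Fin n) (Fin p) ℝ)
    (x : Fin p → Fin n → ℝ) (hx : ∀ j, x j = fun i => X i j)
    (horth : ∀ j k, j ≠ k → x j ⬝ᵥ x k = 0)
    (β : Fin p → ℝ) (σ2 : NNReal) (hσ : 0 < σ2)
    (j : Fin p) (hxj : x j ≠ 0) (hβj : β j = 0) :
    Measure.pi (fun _ : Fin n => gaussianReal 0 σ2)
        {ε : Fin n → ℝ | (x j ⬝ᵥ (X.mulVec β + ε))^2 ≤ (σ2 : ℝ) * (x j ⬝ᵥ x j)}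
      = gaussianReal 0 1 {z : ℝ | z^2 ≤ 1} := by
  classical
  -- the deterministic part vanishes
  have hXβ : x j ⬝ᵥ X.mulVec β = 0 := by
    have h1 : x j ⬝ᵥ X.mulVec β = ∑ k, (x j ⬝ᵥ x k) * β k := by
      simp only [dotProduct, Matrix.mulVec, Finset.mul_sum]
      rw [Finset.sum_comm]
      refine Finset.sum_congr rfl fun k _ => ?_
      rw [Finset.sum_mul]
      refine Finset.sum_congr rfl fun i _ => ?_
      simp only [hx]
      ring
    rw [h1]
    refine Finset.sum_eq_zero fun k _ => ?_
    by_cases hk : k = j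
    · subst hk; rw [hβj, mul_zero]
    · rw [horth j k (fun h => hk h.symm), zero_mul]
  have hset : ∀ ε : Fin n → ℝ, x j ⬝ᵥ (X.mulVec β + ε) = x j ⬝ᵥ ε := by
    intro ε
    rw [dotProduct_add, hXβ, zero_add]
  -- positivity of the squared norm
  have hS : 0 < x j ⬝ᵥ x j := by
    obtain ⟨i, hi⟩ : ∃ i, x j i ≠ 0 := by
      by_contra h
      push_neg at h
      exact hxj (funext h)
    exact Finset.sum_pos' (fun i _ => mul_self_nonneg _)
      ⟨i, Finset.mem_univ i, mul_self_pos.mpr hi⟩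
  have hD : (0:ℝ) < (σ2 : ℝ) * (x j ⬝ᵥ x j) := by positivity
  -- rewrite the event and push forward
  have hmeasf : Measurable fun ε : Fin n → ℝ => ∑ i, x j i * ε i := by
    exact Finset.measurable_sum _ fun i _ => (measurable_pi_apply i).const_mul _
  have hmset : MeasurableSet {y : ℝ | y^2 ≤ (σ2 : ℝ) * (x j ⬝ᵥ x j)} :=
    measurableSet_le (by fun_prop) measurable_const
  have hev : {ε : Fin n → ℝ | (x j ⬝ᵥ (X.mulVec β + ε))^2 ≤ (σ2 : ℝ) * (x j ⬝ᵥ x j)}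
      = (fun ε : Fin n → ℝ => ∑ i, x j i * ε i) ⁻¹'
          {y : ℝ | y^2 ≤ (σ2 : ℝ) * (x j ⬝ᵥ x j)} := by
    ext ε
    simp only [Set.mem_setOf_eq, Set.mem_preimage, hset ε]
    rfl
  rw [hev, ← Measure.map_apply hmeasf hmset, map_linear_comb σ2 n (x j)]
  set V : ℝ≥0 := ∑ i, Real.toNNReal ((x j i)^2) * σ2 with hV
  have hVcoe : (V : ℝ) = (σ2 : ℝ) * (x j ⬝ᵥ x j) := by
    rw [hV]
    push_cast
    rw [Finset.sum_congr rfl fun i _ => by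
      rw [Real.coe_toNNReal _ (sq_nonneg (x j i))], ← Finset.sum_mul, mul_comm]
    congr 1
    exact Finset.sum_congr rfl fun i _ => (sq (x j i)).symm ▸ (sq (x j i))
  -- normalize
  set c : ℝ := (Real.sqrt ((σ2 : ℝ) * (x j ⬝ᵥ x j)))⁻¹ with hc
  have hc2 : c^2 = ((σ2 : ℝ) * (x j ⬝ᵥ x j))⁻¹ := by
    rw [hc, inv_pow, Real.sq_sqrt hD.le]
  have hone : (c^2).toNNReal * V = 1 := by
    apply NNReal.coe_injective
    push_cast
    rw [Real.coe_toNNReal _ (sq_nonneg c), hVcoe, hc2, inv_mul_cancel₀ hD.ne']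
  have hmap := gaussianReal_map_const_mul (μ := 0) (v := V) c
  rw [mul_zero, ← Real.toNNReal_of_nonneg (sq_nonneg c), hone] at hmap
  have hms1 : MeasurableSet {z : ℝ | z^2 ≤ 1} :=
    measurableSet_le (by fun_prop) measurable_const
  rw [← hmap, Measure.map_apply (measurable_const_mul c) hms1]
  congr 1
  ext y
  simp only [Set.mem_preimage, Set.mem_setOf_eq, mul_pow, hc2]
  rw [inv_mul_le_iff₀ hD, mul_one]
end

section
/- Let σ² > 0 and B > 0, define Ψ : [0,∞) → ℝ by Ψ(x) := B (x/(σ²+x))² + σ² x/(σ²+x), and let (x_k) be defined by any x₀ > 0 and x_{k+1} := Ψ(x_k). Then: if B ≤ σ², the sequence (x_k) converges to 0; if B > σ², the sequence (x_k) converges to B − σ². (This is the EM recursion for one hyperparameter under an orthogonal design, with B = ⟨y, x_j⟩²/‖x_j‖² and x_k = ‖x_j‖² γ_j^{(k)}; hence the EM iterates converge to the SBL maximizer.) -/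
/-- Convergence of the EM recursion for one hyperparameter under an orthogonal design:
with `Ψ(x) = B (x/(σ²+x))² + σ² x/(σ²+x)` and `x_{k+1} = Ψ(x_k)`, `x₀ > 0`, the sequence
converges to `0` if `B ≤ σ²` and to `B - σ²` if `B > σ²`. -/
theorem sbl_em_recursion_converges (σ2 B : ℝ) (hσ : 0 < σ2) (hB : 0 < B)
    (Ψ : ℝ → ℝ)
    (hΨ : ∀ x, Ψ x = B * (x / (σ2 + x))^2 + σ2 * x / (σ2 + x))
    (u : ℕ → ℝ) (h0 : 0 < u 0) (hrec : ∀ k, u (k + 1) = Ψ (u k)) :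
    (B ≤ σ2 → Filter.Tendsto u Filter.atTop (nhds 0)) ∧
    (σ2 < B → Filter.Tendsto u Filter.atTop (nhds (B - σ2))) := by
  -- key algebraic identity
  have key : ∀ x : ℝ, 0 ≤ x → Ψ x = x + x^2 * (B - σ2 - x) / (σ2 + x)^2 := by
    intro x hx
    have hne : σ2 + x ≠ 0 := by positivity
    rw [hΨ]; field_simp; ring
  -- positivity of the iterates
  have hpos : ∀ k, 0 < u k := by
    intro k
    induction k with
    | zero => exact h0
    | succ n ih =>
      have hne : 0 < σ2 + u n := by linarith
      rw [hrec, hΨ]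
      have h1 : 0 ≤ B * (u n / (σ2 + u n))^2 := by positivity
      have h2 : 0 < σ2 * u n / (σ2 + u n) := div_pos (mul_pos hσ ih) hne
      linarith
  -- monotonicity of Ψ on [0, ∞)
  have mono : ∀ x y : ℝ, 0 ≤ x → x ≤ y → Ψ x ≤ Ψ y := by
    intro x y hx hxy
    have hdx : 0 < σ2 + x := by linarith
    have hdy : 0 < σ2 + y := by linarith
    have h1 : x / (σ2 + x) ≤ y / (σ2 + y) := by
      rw [div_le_div_iff₀ hdx hdy]; nlinarith
    have h0' : 0 ≤ x / (σ2 + x) := div_nonneg hx hdx.le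
    have h2 : (x / (σ2 + x))^2 ≤ (y / (σ2 + y))^2 := by
      exact pow_le_pow_left₀ h0' h1 2
    rw [hΨ, hΨ, mul_div_assoc, mul_div_assoc]
    nlinarith
  -- fixed points
  have hfix : ∀ L : ℝ, 0 ≤ L → Ψ L = L → L = 0 ∨ L = B - σ2 := by
    intro L hL h
    rw [key L hL] at h
    have hden : (0:ℝ) < (σ2 + L)^2 := by positivity
    have h' : L^2 * (B - σ2 - L) = 0 := by
      have : L^2 * (B - σ2 - L) / (σ2 + L)^2 = 0 := by linarith
      field_simp at this
      rw [mul_zero] at this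
      exact this
    rcases mul_eq_zero.mp h' with h1 | h1
    · left; exact pow_eq_zero_iff (n := 2) (by norm_num) |>.mp h1
    · right; linarith
  -- the limit of the sequence is a fixed point
  have hlim : ∀ L : ℝ, 0 ≤ L → Filter.Tendsto u Filter.atTop (nhds L) → Ψ L = L := by
    intro L hL hT
    have hne : σ2 + L ≠ 0 := by positivity
    have hc : ContinuousAt Ψ L := by
      have hfun : Ψ = fun x => B * (x / (σ2 + x))^2 + σ2 * x / (σ2 + x) := funext hΨ
      rw [hfun]
      exact ((continuousAt_const.mul ((continuousAt_id.div
        (continuousAt_const.add continuousAt_id) hne).pow 2)).add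
        ((continuousAt_const.mul continuousAt_id).div
        (continuousAt_const.add continuousAt_id) hne))
    have h1 : Filter.Tendsto (fun k => u (k + 1)) Filter.atTop (nhds L) :=
      hT.comp (Filter.tendsto_add_atTop_nat 1)
    have h2 : Filter.Tendsto (fun k => Ψ (u k)) Filter.atTop (nhds (Ψ L)) :=
      hc.tendsto.comp hT
    simp only [← hrec] at h2
    exact tendsto_nhds_unique h2 h1
  constructor
  · -- case B ≤ σ2 : decreasing to 0
    intro hBσ
    have hdec : ∀ n, u (n + 1) ≤ u n := by
      intro n
      rw [hrec, key _ (hpos n).le]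
      have : u n ^ 2 * (B - σ2 - u n) / (σ2 + u n)^2 ≤ 0 := by
        apply div_nonpos_of_nonpos_of_nonneg
        · nlinarith [hpos n, sq_nonneg (u n)]
        · positivity
      linarith
    have hanti : Antitone u := antitone_nat_of_succ_le hdec
    have hbdd : BddBelow (Set.range u) := ⟨0, by rintro x ⟨k, rfl⟩; exact (hpos k).le⟩
    have hT : Filter.Tendsto u Filter.atTop (nhds (⨅ k, u k)) :=
      tendsto_atTop_ciInf hanti hbdd
    have hL : 0 ≤ ⨅ k, u k := le_ciInf fun k => (hpos k).le
    have := hfix _ hL (hlim _ hL hT)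
    have hL0 : (⨅ k, u k) = 0 := by
      rcases this with h | h
      · exact h
      · linarith
    rwa [hL0] at hT
  · -- case σ2 < B : converges to B - σ2
    intro hBσ
    set M := B - σ2 with hM
    have hMpos : 0 < M := by simp [hM]; linarith
    have hΨM : Ψ M = M := by rw [key M hMpos.le]; ring_nf
    rcases le_total (u 0) M with hc0 | hc0
    · -- increasing, bounded above by M
      have hub : ∀ k, u k ≤ M := by
        intro k
        induction k with
        | zero => exact hc0
        | succ n ih => rw [hrec, ← hΨM]; exact mono _ _ (hpos n).le ih
      have hinc : Monotone u := by
        apply monotone_nat_of_le_succ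
        intro n
        rw [hrec, key _ (hpos n).le]
        have : 0 ≤ u n ^ 2 * (B - σ2 - u n) / (σ2 + u n)^2 := by
          apply div_nonneg _ (by positivity)
          have := hub n
          nlinarith [sq_nonneg (u n)]
        linarith
      have hbdd : BddAbove (Set.range u) := ⟨M, by rintro x ⟨k, rfl⟩; exact hub k⟩
      have hT : Filter.Tendsto u Filter.atTop (nhds (⨆ k, u k)) :=
        tendsto_atTop_ciSup hinc hbdd
      have hL1 : u 0 ≤ ⨆ k, u k := le_ciSup hbdd 0
      have hL : 0 ≤ ⨆ k, u k := le_trans h0.le hL1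
      have := hfix _ hL (hlim _ hL hT)
      have hLM : (⨆ k, u k) = M := by
        rcases this with h | h
        · linarith
        · exact h
      rwa [hLM] at hT
    · -- decreasing, bounded below by M
      have hlb : ∀ k, M ≤ u k := by
        intro k
        induction k with
        | zero => exact hc0
        | succ n ih => rw [hrec, ← hΨM]; exact mono _ _ hMpos.le ih
      have hdec : ∀ n, u (n + 1) ≤ u n := by
        intro n
        rw [hrec, key _ (hpos n).le]
        have : u n ^ 2 * (B - σ2 - u n) / (σ2 + u n)^2 ≤ 0 := by
          apply div_nonpos_of_nonpos_of_nonneg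
          · have := hlb n
            nlinarith [sq_nonneg (u n)]
          · positivity
        linarith
      have hanti : Antitone u := antitone_nat_of_succ_le hdec
      have hbdd : BddBelow (Set.range u) := ⟨M, by rintro x ⟨k, rfl⟩; exact hlb k⟩
      have hT : Filter.Tendsto u Filter.atTop (nhds (⨅ k, u k)) :=
        tendsto_atTop_ciInf hanti hbdd
      have hL1 : M ≤ ⨅ k, u k := le_ciInf hlb
      have hL : 0 ≤ ⨅ k, u k := le_trans hMpos.le hL1
      have := hfix _ hL (hlim _ hL hT)
      have hLM : (⨅ k, u k) = M := by
        rcases this with h | h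
        · linarith
        · exact h
      rwa [hLM] at hT
end

section
/- Let σ² > 0 and 0 < B ≤ σ², and define Ψ : [0,∞) → ℝ by Ψ(x) := B (x/(σ²+x))² + σ² x/(σ²+x). Then Ψ is concave on [0,∞) (its second derivative Ψ''(x) = (−2σ²x(σ²+2B) + 2σ⁴(B−σ²))/(σ²+x)⁴ is ≤ 0 for all x ≥ 0), and consequently Ψ(x) ≤ x for all x ≥ 0. -/
private lemma sbl_hasDerivAt (σ2 B x : ℝ) (hd : σ2 + x ≠ 0) :
    HasDerivAt (fun t => B * (t / (σ2 + t))^2 + σ2 * t / (σ2 + t))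
      (2*B*σ2*x/(σ2+x)^3 + σ2^2/(σ2+x)^2) x := by
  have h1 : HasDerivAt (fun t : ℝ => t / (σ2 + t)) (σ2 / (σ2 + x)^2) x := by
    have := (hasDerivAt_id x).div ((hasDerivAt_const x σ2).add (hasDerivAt_id x)) hd
    refine this.congr_deriv ?_
    simp only [Pi.add_apply, id]
    ring
  have h2 := ((h1.pow 2).const_mul B).add (h1.const_mul σ2)
  have hfun : (fun t => B * (t / (σ2 + t))^2 + σ2 * t / (σ2 + t))
      = fun t => B * (t / (σ2 + t))^2 + σ2 * (t / (σ2 + t)) := by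
    funext t; rw [mul_div_assoc]
  rw [hfun]
  refine h2.congr_deriv ?_
  rw [show (2:ℕ) - 1 = 1 from rfl, pow_one]
  push_cast
  field_simp

/-- When `0 < B ≤ σ²`, the one-coordinate EM update map
`Ψ(x) = B (x/(σ²+x))² + σ² x/(σ²+x)` is concave on `[0,∞)`, and consequently `Ψ(x) ≤ x`
for all `x ≥ 0`. -/
theorem sbl_em_map_concave (σ2 B : ℝ) (hσ : 0 < σ2) (hB : 0 < B) (hBσ : B ≤ σ2)
    (Ψ : ℝ → ℝ)
    (hΨ : ∀ x, Ψ x = B * (x / (σ2 + x))^2 + σ2 * x / (σ2 + x)) :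
    ConcaveOn ℝ (Set.Ici 0) Ψ ∧ ∀ x : ℝ, 0 ≤ x → Ψ x ≤ x := by
  have hΨfun : Ψ = fun t => B * (t / (σ2 + t))^2 + σ2 * t / (σ2 + t) := funext hΨ
  have hpos : ∀ x : ℝ, 0 ≤ x → (0:ℝ) < σ2 + x := fun x hx => by linarith
  constructor
  · apply AntitoneOn.concaveOn_of_deriv (convex_Ici 0)
    · intro x hx
      exact ((sbl_hasDerivAt σ2 B x (hpos x hx).ne').continuousAt.congr
        (by filter_upwards with t using (hΨ t).symm)).continuousWithinAt
    · intro x hx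
      rw [interior_Ici] at hx
      rw [hΨfun]
      exact (sbl_hasDerivAt σ2 B x (hpos x (le_of_lt hx)).ne').differentiableAt.differentiableWithinAt
    · rw [interior_Ici]
      have hderiv : ∀ x : ℝ, 0 < x → deriv Ψ x = 2*B*σ2*x/(σ2+x)^3 + σ2^2/(σ2+x)^2 := by
        intro x hx
        rw [hΨfun]
        exact (sbl_hasDerivAt σ2 B x (hpos x hx.le).ne').deriv
      intro x hx y hy hxy
      rw [hderiv x hx, hderiv y hy]
      have hdx : (0:ℝ) < σ2 + x := hpos x (le_of_lt hx)
      have hdy : (0:ℝ) < σ2 + y := hpos y (le_of_lt hy)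
      have hx' : (0:ℝ) < x := hx
      have hy' : (0:ℝ) < y := hy
      have key : (2*B*σ2*x/(σ2+x)^3 + σ2^2/(σ2+x)^2) - (2*B*σ2*y/(σ2+y)^3 + σ2^2/(σ2+y)^2)
          = (y - x) * (σ2^2*(σ2+x)*(σ2+y)*(2*σ2+x+y) - 2*B*σ2*(σ2^3 - 3*σ2*x*y - x*y*(x+y)))
            / ((σ2+x)^3*(σ2+y)^3) := by
        field_simp
        ring
      have hbr : 0 ≤ σ2^2*(σ2+x)*(σ2+y)*(2*σ2+x+y) - 2*B*σ2*(σ2^3 - 3*σ2*x*y - x*y*(x+y)) := by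
        nlinarith [mul_nonneg (sub_nonneg.2 hBσ) (by positivity : (0:ℝ) ≤ σ2^4),
          mul_nonneg (by positivity : (0:ℝ) ≤ σ2^4) (by linarith : (0:ℝ) ≤ x+y),
          mul_nonneg (by positivity : (0:ℝ) ≤ σ2^3) (sq_nonneg (x+y)),
          mul_nonneg (by positivity : (0:ℝ) ≤ σ2^3) (mul_pos hx' hy').le,
          mul_nonneg (mul_nonneg (by positivity : (0:ℝ) ≤ σ2^2) (by linarith : (0:ℝ) ≤ x+y)) (mul_pos hx' hy').le,
          mul_nonneg (mul_nonneg hB.le (by positivity : (0:ℝ) ≤ σ2^2)) (mul_pos hx' hy').le,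
          mul_nonneg (mul_nonneg (mul_nonneg hB.le hσ.le) (by linarith : (0:ℝ) ≤ x+y)) (mul_pos hx' hy').le]
      have : 0 ≤ (y - x) * (σ2^2*(σ2+x)*(σ2+y)*(2*σ2+x+y) - 2*B*σ2*(σ2^3 - 3*σ2*x*y - x*y*(x+y)))
            / ((σ2+x)^3*(σ2+y)^3) :=
        div_nonneg (mul_nonneg (by linarith) hbr) (by positivity)
      linarith [key, this]
  · intro x hx
    have hd : (0:ℝ) < σ2 + x := hpos x hx
    have key : x - Ψ x = x^2 * (σ2 + x - B) / (σ2 + x)^2 := by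
      rw [hΨ]; field_simp; ring
    nlinarith [key, div_nonneg (mul_nonneg (sq_nonneg x) (by linarith : (0:ℝ) ≤ σ2 + x - B)) (sq_nonneg (σ2 + x))]
end

section
/- Let σ² > 0 and B > σ², and define Ψ : [0,∞) → ℝ by Ψ(x) := B (x/(σ²+x))² + σ² x/(σ²+x). Then the fixed points of Ψ in [0,∞) are exactly 0 and x⋆ := B − σ²; moreover Ψ(x) ≥ x for all x ∈ [0, x⋆] and Ψ(x) < x for all x > x⋆; and Ψ(x) ∈ [0, σ² + B] for all x ≥ 0. -/
/-- When `B > σ² > 0`, the fixed points of the one-coordinate EM update map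
`Ψ(x) = B (x/(σ²+x))² + σ² x/(σ²+x)` in `[0,∞)` are exactly `0` and `x⋆ = B - σ²`;
moreover `Ψ(x) ≥ x` on `[0, x⋆]`, `Ψ(x) < x` for `x > x⋆`, and `Ψ(x) ∈ [0, σ² + B]`
for all `x ≥ 0`. -/
theorem sbl_em_map_fixed_points (σ2 B : ℝ) (hσ : 0 < σ2) (hB : σ2 < B)
    (Ψ : ℝ → ℝ)
    (hΨ : ∀ x, Ψ x = B * (x / (σ2 + x))^2 + σ2 * x / (σ2 + x)) :
    (∀ x : ℝ, 0 ≤ x → (Ψ x = x ↔ x = 0 ∨ x = B - σ2)) ∧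
    (∀ x : ℝ, 0 ≤ x → x ≤ B - σ2 → x ≤ Ψ x) ∧
    (∀ x : ℝ, B - σ2 < x → Ψ x < x) ∧
    (∀ x : ℝ, 0 ≤ x → Ψ x ∈ Set.Icc 0 (σ2 + B)) := by
  have key : ∀ x : ℝ, 0 ≤ x → Ψ x - x = x ^ 2 * (B - σ2 - x) / (σ2 + x) ^ 2 := by
    intro x hx
    have hpos : (0:ℝ) < σ2 + x := by linarith
    rw [hΨ]
    field_simp
    ring
  refine ⟨?_, ?_, ?_, ?_⟩
  · intro x hx
    have hk := key x hx
    have hpos : (0:ℝ) < σ2 + x := by linarith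
    constructor
    · intro h
      rw [h, sub_self] at hk
      field_simp at hk
      replace hk : x = 0 ∨ B - σ2 - x = 0 := by
        simpa using (show x ^ 2 * (B - σ2 - x) = 0 by linarith [hk])
      rcases hk with h1 | h1
      · left; exact h1
      · right; linarith
    · rintro (rfl | rfl)
      · rw [hΨ]; simp
      · have : Ψ (B - σ2) - (B - σ2) = 0 := by
          rw [key (B - σ2) (by linarith)]; simp
        linarith
  · intro x hx hle
    have hk := key x hx
    have hpos : (0:ℝ) < σ2 + x := by linarith
    have : 0 ≤ x ^ 2 * (B - σ2 - x) / (σ2 + x) ^ 2 :=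
      div_nonneg (mul_nonneg (sq_nonneg x) (by linarith)) (by positivity)
    linarith
  · intro x hgt
    have hx : 0 ≤ x := by linarith
    have hk := key x hx
    have hpos : (0:ℝ) < σ2 + x := by linarith
    have hxpos : 0 < x := by linarith
    have : x ^ 2 * (B - σ2 - x) / (σ2 + x) ^ 2 < 0 := by
      apply div_neg_of_neg_of_pos
      · exact mul_neg_of_pos_of_neg (by positivity) (by linarith)
      · positivity
    linarith
  · intro x hx
    have hpos : (0:ℝ) < σ2 + x := by linarith
    have hB0 : 0 < B := by linarith
    constructor
    · rw [hΨ]; positivity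
    · rw [hΨ]
      have h1 : B * (x / (σ2 + x)) ^ 2 ≤ B := by
        have ht : x / (σ2 + x) ≤ 1 := by
          rw [div_le_one hpos]; linarith
        have ht0 : 0 ≤ x / (σ2 + x) := div_nonneg hx hpos.le
        nlinarith [mul_nonneg (sub_nonneg.2 ht) (by linarith : (0:ℝ) ≤ 1 + x / (σ2 + x))]
      have h2 : σ2 * x / (σ2 + x) ≤ σ2 := by
        rw [div_le_iff₀ hpos]; nlinarith
      linarith
end

section
/- In addition to the hypotheses of the error-bound theorem (orthogonal nonzero columns, s = |{j : β⋆_j ≠ 0}| with log s ≥ 1, c₀ > 2, z⋆ = c₀ log p, c = min_j ‖x_j‖²/n, M = 4(2+c₀)/c, and β̃ the explicit thresholded SBL estimator), assume min_{j : β⋆_j ≠ 0} |β⋆_j| > sqrt(M σ² s log(p)/n). Then P[ sign(β̃) = sign(β⋆) ] ≥ 1 − p^{−c₀ s/8} − e^{−s} − p^{−(c₀/2 − 1)}, where sign(u) ∈ {−1,0,1}^p records the coordinatewise sign of u. -/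
open Matrix MeasureTheory ProbabilityTheory
open scoped ENNReal

section AuxLemmas

open Real

lemma pdf_conv_identity (v w : NNReal) (hv : v ≠ 0) (hw : w ≠ 0) (a c : ℝ) :
    gaussianPDFReal 0 v a * gaussianPDFReal 0 w (c - a)
      = gaussianPDFReal 0 (v + w) c * gaussianPDFReal (v * c / (v + w)) (v * w / (v + w)) a := by
  have hV : 0 < (v : ℝ) := lt_of_le_of_ne v.2 (by exact_mod_cast (Ne.symm hv))
  have hW : 0 < (w : ℝ) := lt_of_le_of_ne w.2 (by exact_mod_cast (Ne.symm hw))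
  have hVW : 0 < (v : ℝ) + w := by linarith
  have hpi : (0:ℝ) < 2 * π := by positivity
  simp only [gaussianPDFReal_def, NNReal.coe_add, NNReal.coe_div, NNReal.coe_mul, sub_zero,
    zero_sub]
  rw [mul_mul_mul_comm, mul_mul_mul_comm ((Real.sqrt (2 * π * ((v:ℝ)+w)))⁻¹), ← Real.exp_add,
    ← Real.exp_add]
  congr 1
  · rw [← mul_inv, ← mul_inv, ← Real.sqrt_mul (by positivity), ← Real.sqrt_mul (by positivity)]
    congr 2
    field_simp
  · congr 1
    field_simp
    ring

lemma gaussianPDF_conv (v w : NNReal) (hv : v ≠ 0) (hw : w ≠ 0) (c : ℝ) :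
    ∫⁻ a, gaussianPDF 0 v a * gaussianPDF 0 w (c - a) = gaussianPDF 0 (v + w) c := by
  have hvw : v + w ≠ 0 := by simp [hv]
  have huw : v * w / (v + w) ≠ 0 := by
    simp [div_eq_zero_iff, hv, hw, hvw]
  calc ∫⁻ a, gaussianPDF 0 v a * gaussianPDF 0 w (c - a)
      = ∫⁻ a, gaussianPDF 0 (v + w) c * gaussianPDF (v * c / (v + w)) (v * w / (v + w)) a := by
        congr 1; funext a
        rw [gaussianPDF, gaussianPDF, gaussianPDF, gaussianPDF,
          ← ENNReal.ofReal_mul (gaussianPDFReal_nonneg _ _ _),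
          ← ENNReal.ofReal_mul (gaussianPDFReal_nonneg _ _ _), pdf_conv_identity v w hv hw a c]
    _ = gaussianPDF 0 (v + w) c := by
        rw [lintegral_const_mul _ (measurable_gaussianPDF _ _),
          lintegral_gaussianPDF_eq_one _ huw, mul_one]

lemma gaussianReal_conv (v w : NNReal) :
    Measure.map (fun q : ℝ × ℝ => q.1 + q.2) ((gaussianReal 0 v).prod (gaussianReal 0 w))
      = gaussianReal 0 (v + w) := by
  by_cases hv : v = 0
  · subst hv
    rw [zero_add, gaussianReal_zero_var, Measure.dirac_prod,
      Measure.map_map (by fun_prop) (by fun_prop)]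
    have h : ((fun q : ℝ × ℝ => q.1 + q.2) ∘ (Prod.mk (0:ℝ))) = fun b : ℝ => (0:ℝ) + b := rfl
    rw [h]
    simpa using gaussianReal_map_const_add (μ := 0) (v := w) 0
  by_cases hw : w = 0
  · subst hw
    rw [add_zero, gaussianReal_zero_var, Measure.prod_dirac,
      Measure.map_map (by fun_prop) (by fun_prop)]
    have h : ((fun q : ℝ × ℝ => q.1 + q.2) ∘ (fun a : ℝ => (a, (0:ℝ)))) = fun a : ℝ => a + 0 := rfl
    rw [h]
    simpa using gaussianReal_map_add_const (μ := 0) (v := v) 0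
  have hvw : v + w ≠ 0 := by simp [hv]
  ext s hs
  rw [Measure.map_apply (by fun_prop) hs,
    Measure.prod_apply (hs.preimage (by fun_prop)),
    gaussianReal_of_var_ne_zero 0 hv, gaussianReal_of_var_ne_zero 0 hw,
    gaussianReal_of_var_ne_zero 0 hvw, withDensity_apply _ hs]
  have h1 : ∀ a : ℝ, (Prod.mk a ⁻¹' ((fun q : ℝ × ℝ => q.1 + q.2) ⁻¹' s)) = {b : ℝ | a + b ∈ s} :=
    fun a => rfl
  have hmble : ∀ a : ℝ, MeasurableSet {b : ℝ | a + b ∈ s} :=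
    fun a => hs.preimage (by fun_prop)
  have h2 : ∀ a : ℝ, (volume.withDensity (gaussianPDF 0 w)) {b : ℝ | a + b ∈ s}
      = ∫⁻ c, s.indicator (fun _ => (1:ℝ≥0∞)) c * gaussianPDF 0 w (c - a) := by
    intro a
    rw [withDensity_apply _ (hmble a), ← lintegral_indicator (hmble a)]
    have := lintegral_add_left_eq_self (μ := (volume : Measure ℝ))
      (fun c => s.indicator (fun _ => (1:ℝ≥0∞)) c * gaussianPDF 0 w (c - a)) a
    rw [← this]
    congr 1; funext b
    simp only [add_sub_cancel_left]
    by_cases hb : a + b ∈ s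
    · simp [Set.indicator_apply, hb]
    · simp [Set.indicator_apply, hb]
  simp_rw [h1, h2]
  rw [lintegral_withDensity_eq_lintegral_mul _ (measurable_gaussianPDF 0 v) (by
    apply Measurable.lintegral_prod_right
    exact (measurable_const.indicator hs).comp measurable_snd |>.mul
      ((measurable_gaussianPDF 0 w).comp (measurable_snd.sub measurable_fst)))]
  simp only [Pi.mul_apply]
  have h3 : ∀ a : ℝ, gaussianPDF 0 v a * ∫⁻ c, s.indicator (fun _ => (1:ℝ≥0∞)) c * gaussianPDF 0 w (c - a)
      = ∫⁻ c, gaussianPDF 0 v a * (s.indicator (fun _ => (1:ℝ≥0∞)) c * gaussianPDF 0 w (c - a)) := by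
    intro a
    rw [lintegral_const_mul _ (by
      exact (measurable_const.indicator hs).mul
        ((measurable_gaussianPDF 0 w).comp (measurable_id.sub_const a)))]
  simp_rw [h3]
  rw [lintegral_lintegral_swap (by
    apply Measurable.aemeasurable
    exact ((measurable_gaussianPDF 0 v).comp measurable_fst).mul
      (((measurable_const.indicator hs).comp measurable_snd).mul
        ((measurable_gaussianPDF 0 w).comp (measurable_snd.sub measurable_fst))))]
  rw [← lintegral_indicator hs]
  congr 1; funext c
  calc ∫⁻ a, gaussianPDF 0 v a * (s.indicator (fun _ => (1:ℝ≥0∞)) c * gaussianPDF 0 w (c - a))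
      = s.indicator (fun _ => (1:ℝ≥0∞)) c * ∫⁻ a, gaussianPDF 0 v a * gaussianPDF 0 w (c - a) := by
        rw [← lintegral_const_mul _ (by
          exact (measurable_gaussianPDF 0 v).mul
            ((measurable_gaussianPDF 0 w).comp (measurable_const.sub measurable_id)))]
        congr 1; funext a; ring
    _ = s.indicator (gaussianPDF 0 (v + w)) c := by
        rw [gaussianPDF_conv v w hv hw c]
        by_cases hcs : c ∈ s <;> simp [Set.indicator_apply, hcs]

lemma map_weighted_sum_pi (σ2 : NNReal) : ∀ (n : ℕ) (v : Fin n → ℝ),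
    Measure.map (fun ε : Fin n → ℝ => ∑ i, v i * ε i)
        (Measure.pi fun _ : Fin n => gaussianReal 0 σ2)
      = gaussianReal 0 ((∑ i, (v i)^2).toNNReal * σ2) := by
  intro n
  induction n with
  | zero =>
    intro v
    simp only [Finset.univ_eq_empty, Finset.sum_empty, Real.toNNReal_zero, zero_mul]
    rw [show (fun ε : Fin 0 → ℝ => (0:ℝ)) = fun _ => 0 from rfl, Measure.map_const]
    simp [gaussianReal_zero_var]
  | succ n ih =>
    intro v
    have hmp := measurePreserving_piFinSuccAbove (fun _ : Fin (n+1) => gaussianReal 0 σ2) 0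
    have hcomp : (fun ε : Fin (n+1) → ℝ => ∑ i, v i * ε i)
        = (fun q : ℝ × (Fin n → ℝ) => v 0 * q.1 + ∑ i : Fin n, v (Fin.succAbove 0 i) * q.2 i)
          ∘ (MeasurableEquiv.piFinSuccAbove (fun _ : Fin (n+1) => ℝ) 0) := by
      funext ε
      rw [Fin.sum_univ_succAbove (fun i => v i * ε i) 0]
      rfl
    rw [hcomp, ← Measure.map_map (by
        apply Measurable.add
        · exact measurable_fst.const_mul _
        · exact Finset.measurable_sum _ fun i _ => ((measurable_pi_apply i).comp measurable_snd).const_mul _)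
      (MeasurableEquiv.piFinSuccAbove (fun _ : Fin (n+1) => ℝ) 0).measurable,
      hmp.map_eq]
    have hsplit : (fun q : ℝ × (Fin n → ℝ) => v 0 * q.1 + ∑ i : Fin n, v (Fin.succAbove 0 i) * q.2 i)
        = (fun q : ℝ × ℝ => q.1 + q.2)
          ∘ (Prod.map (fun a : ℝ => v 0 * a) (fun η : Fin n → ℝ => ∑ i, v (Fin.succAbove 0 i) * η i)) := rfl
    have hf : Measurable (fun a : ℝ => v 0 * a) := by fun_prop
    have hg : Measurable (fun η : Fin n → ℝ => ∑ i, v (Fin.succAbove 0 i) * η i) :=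
      Finset.measurable_sum _ fun i _ => (measurable_pi_apply i).const_mul _
    rw [hsplit, ← Measure.map_map (by fun_prop) (hf.prodMap hg),
      ← Measure.map_prod_map _ _ hf hg]
    have h1 : Measure.map (fun a : ℝ => v 0 * a) (gaussianReal 0 σ2)
        = gaussianReal 0 (NNReal.mk ((v 0)^2) (sq_nonneg _) * σ2) := by
      simpa using gaussianReal_map_const_mul (μ := 0) (v := σ2) (v 0)
    rw [h1, ih, gaussianReal_conv]
    congr 1
    rw [Fin.sum_univ_succAbove (fun i => (v i)^2) 0]
    ext1
    push_cast [Real.coe_toNNReal _ (by positivity : (0:ℝ) ≤ ∑ i : Fin n, (v (Fin.succAbove 0 i))^2),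
      Real.coe_toNNReal _ (by positivity : (0:ℝ) ≤ (v 0)^2 + ∑ i : Fin n, (v (Fin.succAbove 0 i))^2)]
    ring

lemma gaussian_tail_one_sided (v : NNReal) (hv : v ≠ 0) (t : ℝ) (ht : Real.sqrt v ≤ t) :
    gaussianReal 0 v {y : ℝ | t ≤ y} ≤ ENNReal.ofReal (2/5 * Real.exp (-t^2 / (2*(v:ℝ)))) := by
  have hV : 0 < (v : ℝ) := lt_of_le_of_ne v.2 (by exact_mod_cast (Ne.symm hv))
  have ht0 : 0 < t := lt_of_lt_of_le (Real.sqrt_pos.mpr hV) ht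
  have hpi : (0:ℝ) < 2 * π := by positivity
  have hset : {y : ℝ | t ≤ y} = Set.Ici t := rfl
  rw [gaussianReal_apply_eq_integral 0 hv]
  apply ENNReal.ofReal_le_ofReal
  rw [hset, MeasureTheory.integral_Ici_eq_integral_Ioi]
  have hint : IntegrableOn (fun x => x * Real.exp (-x^2/(2*(v:ℝ)))) (Set.Ioi t) := by
    have h := integrable_mul_exp_neg_mul_sq (b := 1/(2*(v:ℝ))) (by positivity)
    have heq : (fun x : ℝ => x * Real.exp (-x^2/(2*(v:ℝ))))
        = fun x => x * Real.exp (-(1/(2*(v:ℝ))) * x^2) := by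
      funext x; rw [show -x^2/(2*(v:ℝ)) = -(1/(2*(v:ℝ))) * x^2 by field_simp]
    rw [heq]; exact h.integrableOn
  have hFTC : ∫ x in Set.Ioi t, x * Real.exp (-x^2/(2*(v:ℝ)))
      = v * Real.exp (-t^2/(2*(v:ℝ))) := by
    have hderiv : ∀ x ∈ Set.Ioi t, HasDerivAt (fun y => -(v:ℝ) * Real.exp (-y^2/(2*(v:ℝ))))
        (x * Real.exp (-x^2/(2*(v:ℝ)))) x := by
      intro x _
      have h1 : HasDerivAt (fun y : ℝ => -y^2/(2*(v:ℝ))) (-x/(v:ℝ)) x := by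
        have h := ((hasDerivAt_pow 2 x).neg).div_const (2*(v:ℝ))
        refine h.congr_deriv ?_
        push_cast
        field_simp
      have h2 := (h1.exp).const_mul (-(v:ℝ))
      refine h2.congr_deriv ?_
      field_simp
    have hcont : ContinuousWithinAt (fun y => -(v:ℝ) * Real.exp (-y^2/(2*(v:ℝ))))
        (Set.Ici t) t := (Continuous.continuousWithinAt (by fun_prop))
    have htend : Filter.Tendsto (fun y => -(v:ℝ) * Real.exp (-y^2/(2*(v:ℝ))))
        Filter.atTop (nhds 0) := by
      rw [show (0:ℝ) = -(v:ℝ) * 0 by ring]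
      apply Filter.Tendsto.const_mul
      apply Real.tendsto_exp_atBot.comp
      have heq2 : (fun y : ℝ => -y^2/(2*(v:ℝ))) = fun y => -(y^2/(2*(v:ℝ))) := by
        funext y; ring
      rw [heq2]
      apply Filter.tendsto_neg_atTop_atBot.comp
      exact (Filter.tendsto_pow_atTop (by norm_num : (2:ℕ) ≠ 0)).atTop_div_const (by positivity)
    have h := integral_Ioi_of_hasDerivAt_of_tendsto hcont hderiv hint htend
    rw [h]; ring
  calc ∫ x in Set.Ioi t, gaussianPDFReal 0 v x
      ≤ ∫ x in Set.Ioi t, (t * Real.sqrt (2*π*(v:ℝ)))⁻¹ * (x * Real.exp (-x^2/(2*(v:ℝ)))) := by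
        apply setIntegral_mono_on
        · exact (integrable_gaussianPDFReal 0 v).integrableOn
        · exact hint.const_mul _
        · exact measurableSet_Ioi
        · intro x hx
          have hx1 : t ≤ x := le_of_lt hx
          have hsq : (0:ℝ) < Real.sqrt (2*π*(v:ℝ)) := Real.sqrt_pos.mpr (by positivity)
          have h1 : 1 ≤ x / t := (one_le_div ht0).mpr hx1
          simp only [gaussianPDFReal_def, sub_zero]
          calc (Real.sqrt (2*π*(v:ℝ)))⁻¹ * Real.exp (-x^2/(2*(v:ℝ)))
              ≤ (x/t) * ((Real.sqrt (2*π*(v:ℝ)))⁻¹ * Real.exp (-x^2/(2*(v:ℝ)))) :=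
                le_mul_of_one_le_left (by positivity) h1
            _ = (t * Real.sqrt (2*π*(v:ℝ)))⁻¹ * (x * Real.exp (-x^2/(2*(v:ℝ)))) := by
                field_simp
    _ = (t * Real.sqrt (2*π*(v:ℝ)))⁻¹ * ((v:ℝ) * Real.exp (-t^2/(2*(v:ℝ)))) := by
        rw [MeasureTheory.integral_const_mul, hFTC]
    _ ≤ 2/5 * Real.exp (-t^2 / (2*(v:ℝ))) := by
        have hsqrt : Real.sqrt (2*π*(v:ℝ)) = Real.sqrt (2*π) * Real.sqrt v :=
          Real.sqrt_mul (by positivity) _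
        have h25 : (5:ℝ)/2 ≤ Real.sqrt (2*π) := by
          rw [show (5:ℝ)/2 = Real.sqrt ((5/2)^2) by rw [Real.sqrt_sq (by norm_num)]]
          apply Real.sqrt_le_sqrt
          nlinarith [Real.pi_gt_d6]
        have hs : Real.sqrt v * Real.sqrt v = (v:ℝ) := Real.mul_self_sqrt v.2
        have hsv : 0 < Real.sqrt (v:ℝ) := Real.sqrt_pos.mpr hV
        have hden : (5/2) * (v:ℝ) ≤ t * (Real.sqrt (2*π) * Real.sqrt v) := by
          nlinarith [mul_le_mul_of_nonneg_right ht (by positivity : (0:ℝ) ≤ Real.sqrt (2*π) * Real.sqrt v),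
            mul_le_mul_of_nonneg_right h25 hV.le, hs, Real.sqrt_nonneg (2*π)]
        have hcoef : (t * Real.sqrt (2*π*(v:ℝ)))⁻¹ * (v:ℝ) ≤ 2/5 := by
          rw [hsqrt]
          calc (t * (Real.sqrt (2*π) * Real.sqrt v))⁻¹ * (v:ℝ)
              ≤ ((5/2) * (v:ℝ))⁻¹ * (v:ℝ) := by
                apply mul_le_mul_of_nonneg_right _ hV.le
                exact inv_anti₀ (by positivity) hden
            _ = 2/5 := by field_simp
        have hexp := Real.exp_pos (-t^2/(2*(v:ℝ)))
        calc (t * Real.sqrt (2*π*(v:ℝ)))⁻¹ * ((v:ℝ) * Real.exp (-t^2/(2*(v:ℝ))))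
            = ((t * Real.sqrt (2*π*(v:ℝ)))⁻¹ * (v:ℝ)) * Real.exp (-t^2/(2*(v:ℝ))) := by ring
          _ ≤ 2/5 * Real.exp (-t^2 / (2*(v:ℝ))) :=
              mul_le_mul_of_nonneg_right hcoef hexp.le

lemma gaussian_tail_two_sided (v : NNReal) (hv : v ≠ 0) (t : ℝ) (ht : Real.sqrt v ≤ t) :
    gaussianReal 0 v {y : ℝ | t ≤ |y|} ≤ ENNReal.ofReal (4/5 * Real.exp (-t^2 / (2*(v:ℝ)))) := by
  have hsub : {y : ℝ | t ≤ |y|} ⊆ {y : ℝ | t ≤ y} ∪ {y : ℝ | y ≤ -t} := by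
    intro y hy
    simp only [Set.mem_setOf_eq] at hy
    rcases abs_cases y with ⟨h1, _⟩ | ⟨h1, _⟩
    · left; simp only [Set.mem_setOf_eq]; linarith [hy.trans_eq h1]
    · right; simp only [Set.mem_setOf_eq]; linarith [hy.trans_eq h1]
  have hmap : (gaussianReal 0 v).map (fun y : ℝ => -1 * y) = gaussianReal 0 v := by
    rw [gaussianReal_map_const_mul (μ := 0) (v := v) (-1), mul_zero]
    norm_num
  have hneg : gaussianReal 0 v {y : ℝ | y ≤ -t} = gaussianReal 0 v {y : ℝ | t ≤ y} := by
    conv_rhs => rw [← hmap]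
    rw [Measure.map_apply (show Measurable fun y : ℝ => -1 * y by fun_prop)
      (show MeasurableSet {y : ℝ | t ≤ y} from measurableSet_Ici)]
    congr 1
    ext y
    simp only [Set.mem_preimage, Set.mem_setOf_eq]
    constructor <;> intro h <;> [skip; skip] <;> linarith [h]
  calc gaussianReal 0 v {y : ℝ | t ≤ |y|}
      ≤ gaussianReal 0 v ({y : ℝ | t ≤ y} ∪ {y : ℝ | y ≤ -t}) := measure_mono hsub
    _ ≤ gaussianReal 0 v {y : ℝ | t ≤ y} + gaussianReal 0 v {y : ℝ | y ≤ -t} :=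
        measure_union_le _ _
    _ ≤ ENNReal.ofReal (2/5 * Real.exp (-t^2 / (2*(v:ℝ))))
        + ENNReal.ofReal (2/5 * Real.exp (-t^2 / (2*(v:ℝ)))) := by
        rw [hneg]
        exact add_le_add (gaussian_tail_one_sided v hv t ht) (gaussian_tail_one_sided v hv t ht)
    _ = ENNReal.ofReal (4/5 * Real.exp (-t^2 / (2*(v:ℝ)))) := by
        rw [← ENNReal.ofReal_add (by positivity) (by positivity)]
        congr 1; ring

end AuxLemmas

set_option maxHeartbeats 2000000 in
/-- Sign recovery for the hard-thresholded sparse Bayesian learning estimator under an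
orthogonal design: under the hypotheses of the error-bound theorem, if additionally
`min_{j : β⋆_j ≠ 0} |β⋆_j| > sqrt(M σ² s log(p)/n)`, then
`P[sign(β̃) = sign(β⋆)] ≥ 1 - p^{-c₀s/8} - e^{-s} - p^{-(c₀/2 - 1)}`, where the sign is
taken coordinatewise (`Real.sign` is `0` at `0`, `1` on positives, `-1` on negatives). -/
theorem sbl_thresholded_sign_recovery (n p : ℕ) (hn : 0 < n) (hp : 0 < p)
    (X : Matrix (Fin n) (Fin p) ℝ)
    (x : Fin p → Fin n → ℝ) (hx : ∀ j, x j = fun i => X i j)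
    (horth : ∀ j k, j ≠ k → x j ⬝ᵥ x k = 0) (hxne : ∀ j, x j ≠ 0)
    (β : Fin p → ℝ) (σ2 : NNReal) (hσ : 0 < σ2)
    (s : ℕ) (hs : s = (Finset.univ.filter fun j => β j ≠ 0).card)
    (hlogs : 1 ≤ Real.log s)
    (c₀ : ℝ) (hc₀ : 2 < c₀) (z : ℝ) (hz : z = c₀ * Real.log p)
    (c : ℝ) (hc : c = ⨅ j : Fin p, (x j ⬝ᵥ x j) / n)
    (M : ℝ) (hM : M = 4 * (2 + c₀) / c)
    (βt : (Fin n → ℝ) → Fin p → ℝ)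
    (hβt : ∀ ε j, βt ε j =
      if (σ2 : ℝ) * (x j ⬝ᵥ x j) * (1 + z) < (x j ⬝ᵥ (X.mulVec β + ε))^2
      then (x j ⬝ᵥ (X.mulVec β + ε)) / (x j ⬝ᵥ x j)
        - (σ2 : ℝ) / (x j ⬝ᵥ (X.mulVec β + ε))
      else 0)
    (hmin : ∀ j, β j ≠ 0 →
      Real.sqrt (M * σ2 * s * Real.log p / n) < |β j|) :
    ENNReal.ofReal (1 - (p : ℝ)^(-(c₀ * s) / 8) - Real.exp (-(s : ℝ))
        - (p : ℝ)^(-(c₀ / 2 - 1))) ≤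
      Measure.pi (fun _ : Fin n => gaussianReal 0 σ2)
        {ε : Fin n → ℝ | ∀ j : Fin p, Real.sign (βt ε j) = Real.sign (β j)} := by
  classical
  set μ := Measure.pi (fun _ : Fin n => gaussianReal 0 σ2) with hμdef
  haveI : IsProbabilityMeasure μ := by rw [hμdef]; infer_instance
  -- basic positivity facts
  have hnR : (0:ℝ) < n := by exact_mod_cast hn
  have hpR : (0:ℝ) < p := by exact_mod_cast hp
  have hsp : s ≤ p := by
    rw [hs]
    exact le_trans (Finset.card_filter_le _ _) (by simp)
  have hs0 : 0 < s := by
    rcases Nat.eq_zero_or_pos s with h0 | h0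
    · rw [h0] at hlogs; norm_num at hlogs
    · exact h0
  have hsR : (1:ℝ) ≤ s := by exact_mod_cast hs0
  set L := Real.log p with hLdef
  have hL1 : 1 ≤ L := by
    refine le_trans hlogs (Real.log_le_log (by exact_mod_cast hs0) ?_)
    exact_mod_cast hsp
  have hc₀0 : (0:ℝ) < c₀ := by linarith
  have hz0 : 0 ≤ z := by rw [hz]; positivity
  have hσR : (0:ℝ) < σ2 := hσ
  have hN : ∀ j, 0 < x j ⬝ᵥ x j := by
    intro j
    have hne := hxne j
    rw [Function.ne_iff] at hne
    obtain ⟨i0, hi0⟩ := hne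
    rw [dotProduct]
    apply Finset.sum_pos' (fun i _ => mul_self_nonneg _)
    exact ⟨i0, Finset.mem_univ _, mul_self_pos.mpr hi0⟩
  have hcn : ∀ j, c * n ≤ x j ⬝ᵥ x j := by
    intro j
    have h1 : c ≤ (x j ⬝ᵥ x j) / n := by
      rw [hc]
      exact ciInf_le (Finite.bddBelow_range _) j
    calc c * n ≤ ((x j ⬝ᵥ x j) / n) * n := by nlinarith
      _ = x j ⬝ᵥ x j := by field_simp
  have hcpos : 0 < c := by
    haveI : Nonempty (Fin p) := ⟨⟨0, hp⟩⟩
    obtain ⟨j0, hj0⟩ := Finite.exists_min (fun j => (x j ⬝ᵥ x j) / (n:ℝ))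
    rw [hc]
    exact lt_of_lt_of_le (div_pos (hN j0) hnR) (le_ciInf hj0)
  have hMpos : 0 < M := by rw [hM]; positivity
  -- mean of the dot products
  have hXmk : ∀ (i : Fin n) (k : Fin p), X i k = x k i := fun i k => (congrFun (hx k) i).symm
  have hXb : ∀ j, x j ⬝ᵥ X.mulVec β = (x j ⬝ᵥ x j) * β j := by
    intro j
    have h1 : x j ⬝ᵥ X.mulVec β = ∑ k, (x j ⬝ᵥ x k) * β k := by
      simp only [dotProduct, Matrix.mulVec, Finset.mul_sum]
      rw [Finset.sum_comm]
      refine Finset.sum_congr rfl fun k _ => ?_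
      rw [Finset.sum_mul]
      refine Finset.sum_congr rfl fun i _ => ?_
      rw [hXmk i k]; ring
    rw [h1]
    rw [Finset.sum_eq_single j (fun k _ hk => by rw [horth j k (Ne.symm hk), zero_mul])
      (fun h => absurd (Finset.mem_univ j) h)]
  -- notation
  set τ : Fin p → ℝ := fun j => Real.sqrt ((σ2:ℝ) * (x j ⬝ᵥ x j) * (1+z)) with hτdef
  set m : Fin p → ℝ := fun j => (x j ⬝ᵥ x j) * |β j| - τ j with hmdef
  set Bad : Fin p → Set (Fin n → ℝ) :=
    fun j => {ε | (if β j = 0 then τ j else m j) ≤ |x j ⬝ᵥ ε|} with hBaddef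
  have hτ0 : ∀ j, 0 ≤ τ j := fun j => Real.sqrt_nonneg _
  have harg : ∀ j, 0 ≤ (σ2:ℝ) * (x j ⬝ᵥ x j) * (1+z) :=
    fun j => mul_nonneg (mul_nonneg σ2.coe_nonneg (hN j).le) (by linarith)
  have hτsq : ∀ j, τ j ^ 2 = (σ2:ℝ) * (x j ⬝ᵥ x j) * (1+z) := fun j => Real.sq_sqrt (harg j)
  -- variance
  set V : Fin p → NNReal := fun j => (x j ⬝ᵥ x j).toNNReal * σ2 with hVdef
  have hVcoe : ∀ j, ((V j : ℝ)) = (x j ⬝ᵥ x j) * σ2 := fun j => by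
    simp [hVdef, NNReal.coe_mul, Real.coe_toNNReal _ (hN j).le]
  have hVpos : ∀ j, 0 < ((V j : ℝ)) := fun j => by
    rw [hVcoe j]; exact mul_pos (hN j) hσR
  have hVne : ∀ j, V j ≠ 0 := fun j => by
    intro h
    have := hVpos j
    rw [h] at this
    simp at this
  have hgm : ∀ j, Measurable (fun ε : Fin n → ℝ => x j ⬝ᵥ ε) := fun j =>
    Finset.measurable_sum _ fun i _ => (measurable_pi_apply i).const_mul _
  have hlaw : ∀ j, Measure.map (fun ε : Fin n → ℝ => x j ⬝ᵥ ε) μ = gaussianReal 0 (V j) := by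
    intro j
    have h2 : (fun ε : Fin n → ℝ => x j ⬝ᵥ ε) = fun ε => ∑ i, x j i * ε i := rfl
    have h3 : (∑ i, (x j i)^2) = x j ⬝ᵥ x j := by
      simp only [dotProduct, pow_two]
    rw [h2, hμdef, map_weighted_sum_pi σ2 n (x j), h3]
  have hμBad : ∀ j, μ (Bad j)
      = gaussianReal 0 (V j) {y : ℝ | (if β j = 0 then τ j else m j) ≤ |y|} := by
    intro j
    rw [← hlaw j, Measure.map_apply (hgm j)
      (measurableSet_le measurable_const measurable_abs)]
    rfl
  -- key scale r
  set r : ℝ := Real.sqrt ((2 + c₀) * s * L) with hrdef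
  have hr2 : r ^ 2 = (2 + c₀) * s * L := Real.sq_sqrt (by positivity)
  have hsL : 1 ≤ (s:ℝ) * L := by nlinarith [hsR, hL1]
  have hr_ge2 : 2 ≤ r := by
    have h4 : (2:ℝ)^2 ≤ (2 + c₀) * s * L := by
      nlinarith [mul_le_mul (by linarith : (4:ℝ) ≤ 2 + c₀) hsL (by norm_num) (by linarith)]
    rw [hrdef]
    exact Real.le_sqrt' two_pos |>.mpr h4
  have hrpos : 0 < r := by linarith
  have hsqrtV : ∀ j, Real.sqrt (V j) ^ 2 = (x j ⬝ᵥ x j) * σ2 := fun j => by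
    rw [Real.sq_sqrt (V j).coe_nonneg, hVcoe j]
  have hsvpos : ∀ j, 0 < Real.sqrt (V j) := fun j => Real.sqrt_pos.mpr (hVpos j)
  -- τ ≤ √V * r
  have hτle : ∀ j, τ j ≤ Real.sqrt (V j) * r := by
    intro j
    have h1z : 1 + z ≤ (2 + c₀) * s * L := by
      rw [hz]
      nlinarith [hsR, hL1, hc₀0, mul_nonneg (mul_nonneg hc₀0.le (by linarith : (0:ℝ) ≤ L))
        (by linarith : (0:ℝ) ≤ (s:ℝ) - 1)]
    have : τ j ≤ Real.sqrt ((x j ⬝ᵥ x j) * (σ2:ℝ) * ((2+c₀)*s*L)) := by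
      apply Real.sqrt_le_sqrt
      calc (σ2:ℝ) * (x j ⬝ᵥ x j) * (1+z) ≤ (σ2:ℝ) * (x j ⬝ᵥ x j) * ((2+c₀)*s*L) :=
            mul_le_mul_of_nonneg_left h1z (mul_nonneg σ2.coe_nonneg (hN j).le)
        _ = (x j ⬝ᵥ x j) * (σ2:ℝ) * ((2+c₀)*s*L) := by ring
    refine le_trans this (le_of_eq ?_)
    rw [← hr2, Real.sqrt_mul (mul_nonneg (hN j).le σ2.coe_nonneg),
      Real.sqrt_sq hrpos.le]
    congr 1
    rw [← hsqrtV j, Real.sqrt_sq (Real.sqrt_nonneg _)]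
  -- for nonnull coordinates : √V * r ≤ m j
  have hkey : ∀ j, β j ≠ 0 → 2 * (Real.sqrt (V j) * r) ≤ (x j ⬝ᵥ x j) * |β j| := by
    intro j hj
    have hNj := hN j
    have hβsq : M * σ2 * s * L / n < |β j| ^ 2 := by
      calc M * σ2 * s * L / n = Real.sqrt (M * σ2 * s * L / n) ^ 2 :=
            (Real.sq_sqrt (by positivity)).symm
        _ < |β j| ^ 2 := by
            apply pow_lt_pow_left₀ (hmin j hj) (Real.sqrt_nonneg _) two_ne_zero
    have hsq : (2 * (Real.sqrt (V j) * r)) ^ 2 ≤ ((x j ⬝ᵥ x j) * |β j|) ^ 2 := by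
      have e1 : (2 * (Real.sqrt (V j) * r)) ^ 2 = 4 * ((x j ⬝ᵥ x j) * σ2) * ((2+c₀)*s*L) := by
        rw [mul_pow, mul_pow, hsqrtV j, hr2]; ring
      have e2 : ((x j ⬝ᵥ x j) * |β j|) ^ 2 = (x j ⬝ᵥ x j)^2 * |β j|^2 := by ring
      rw [e1, e2]
      have h4 : (x j ⬝ᵥ x j)^2 * (M * σ2 * s * L / n) ≤ (x j ⬝ᵥ x j)^2 * |β j|^2 :=
        mul_le_mul_of_nonneg_left hβsq.le (by positivity)
      refine le_trans ?_ h4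
      rw [hM]
      have hcnj := hcn j
      have hfact : 4 * ((x j ⬝ᵥ x j) * σ2) * ((2+c₀)*s*L) * (c * n)
          ≤ (x j ⬝ᵥ x j)^2 * (4 * (2+c₀) * σ2 * s * L) := by
        have expand : (x j ⬝ᵥ x j)^2 * (4 * (2+c₀) * σ2 * s * L)
            = ((x j ⬝ᵥ x j) * (4 * (2+c₀) * σ2 * s * L)) * (x j ⬝ᵥ x j) := by ring
        have expand2 : 4 * ((x j ⬝ᵥ x j) * σ2) * ((2+c₀)*s*L) * (c * n)
            = ((x j ⬝ᵥ x j) * (4 * (2+c₀) * σ2 * s * L)) * (c * n) := by ring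
        rw [expand, expand2]
        apply mul_le_mul_of_nonneg_left hcnj
        have : (0:ℝ) ≤ 2 + c₀ := by linarith
        positivity
      calc 4 * ((x j ⬝ᵥ x j) * σ2) * ((2+c₀)*s*L)
          = 4 * ((x j ⬝ᵥ x j) * σ2) * ((2+c₀)*s*L) * (c * n) / (c * n) := by
            field_simp
        _ ≤ (x j ⬝ᵥ x j)^2 * (4 * (2+c₀) * σ2 * s * L) / (c * n) := by
            exact div_le_div_of_nonneg_right hfact (mul_pos hcpos hnR).le
        _ = (x j ⬝ᵥ x j)^2 * (4 * (2+c₀) / c * σ2 * s * L / n) := by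
            field_simp
    exact (pow_le_pow_iff_left₀
      (mul_nonneg (by norm_num) (mul_nonneg (Real.sqrt_nonneg _) hrpos.le))
      (mul_nonneg (hN j).le (abs_nonneg _)) two_ne_zero).mp hsq
  have hkeym : ∀ j, β j ≠ 0 → Real.sqrt (V j) * r ≤ m j := by
    intro j hj
    have h1 := hkey j hj
    have h2 := hτle j
    rw [hmdef]
    dsimp only
    linarith
  -- per-coordinate bounds
  set B1 : ℝ := 4/5 * Real.exp (-(1+z)/2) with hB1
  set B2 : ℝ := 4/5 * Real.exp (-((2+c₀)*s*L)/2) with hB2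
  have hbound : ∀ j, μ (Bad j) ≤ ENNReal.ofReal (if β j = 0 then B1 else B2) := by
    intro j
    rw [hμBad j]
    by_cases hj : β j = 0
    · simp only [hj, if_true]
      have hτV : Real.sqrt (V j) ≤ τ j := by
        rw [hτdef]
        dsimp only
        apply Real.sqrt_le_sqrt
        rw [hVcoe j]
        have hnn : 0 ≤ (σ2:ℝ) * (x j ⬝ᵥ x j) * z :=
          mul_nonneg (mul_nonneg σ2.coe_nonneg (hN j).le) hz0
        nlinarith [hnn]
      refine le_trans (gaussian_tail_two_sided (V j) (hVne j) (τ j) hτV) ?_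
      apply ENNReal.ofReal_le_ofReal
      rw [hB1]
      have heq : -(τ j)^2 / (2 * (V j : ℝ)) = -(1+z)/2 := by
        rw [hτsq j, hVcoe j,
          div_eq_div_iff (by nlinarith [hN j, hσR] : (0:ℝ) < 2 * (x j ⬝ᵥ x j * ↑σ2)).ne'
            (by norm_num : (2:ℝ) ≠ 0)]
        ring
      rw [heq]
    · simp only [hj, if_false]
      have hmV : Real.sqrt (V j) ≤ m j := by
        have := hkeym j hj
        nlinarith [hsvpos j, hr_ge2]
      refine le_trans (gaussian_tail_two_sided (V j) (hVne j) (m j) hmV) ?_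
      apply ENNReal.ofReal_le_ofReal
      rw [hB2]
      have hm2 : (V j : ℝ) * ((2+c₀)*s*L) ≤ (m j)^2 := by
        have h1 := hkeym j hj
        have h2 : (Real.sqrt (V j) * r)^2 ≤ (m j)^2 := by
          apply pow_le_pow_left₀ (mul_nonneg (Real.sqrt_nonneg _) hrpos.le) h1
        calc (V j : ℝ) * ((2+c₀)*s*L) = (Real.sqrt (V j))^2 * r^2 := by
              rw [Real.sq_sqrt (V j).coe_nonneg, hr2]
          _ = (Real.sqrt (V j) * r)^2 := by ring
          _ ≤ (m j)^2 := h2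
      have hexp : -(m j)^2 / (2 * (V j : ℝ)) ≤ -((2+c₀)*s*L)/2 := by
        rw [div_le_div_iff₀ (by nlinarith [hVpos j] : (0:ℝ) < 2 * (V j : ℝ)) (by norm_num : (0:ℝ) < 2)]
        nlinarith [hVpos j, hm2]
      exact mul_le_mul_of_nonneg_left (Real.exp_le_exp.mpr hexp) (by norm_num)
  -- summation
  have hsum : ∑ j, μ (Bad j)
      ≤ ENNReal.ofReal ((p:ℝ) * B1) + ENNReal.ofReal ((s:ℝ) * B2) := by
    have hB1pos : 0 ≤ B1 := by rw [hB1]; positivity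
    have hB2pos : 0 ≤ B2 := by rw [hB2]; positivity
    calc ∑ j, μ (Bad j) ≤ ∑ j, ENNReal.ofReal (if β j = 0 then B1 else B2) :=
          Finset.sum_le_sum (fun j _ => hbound j)
      _ = ∑ j ∈ Finset.univ.filter (fun j => β j = 0), ENNReal.ofReal B1
          + ∑ j ∈ Finset.univ.filter (fun j => ¬ β j = 0), ENNReal.ofReal B2 := by
          rw [← Finset.sum_filter_add_sum_filter_not Finset.univ (fun j => β j = 0)]
          congr 1
          · exact Finset.sum_congr rfl fun j hj => by
              rw [if_pos (Finset.mem_filter.mp hj).2]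
          · exact Finset.sum_congr rfl fun j hj => by
              rw [if_neg (Finset.mem_filter.mp hj).2]
      _ = ((Finset.univ.filter (fun j => β j = 0)).card : ℝ≥0∞) * ENNReal.ofReal B1
          + ((Finset.univ.filter (fun j => ¬ β j = 0)).card : ℝ≥0∞) * ENNReal.ofReal B2 := by
          rw [Finset.sum_const, Finset.sum_const, nsmul_eq_mul, nsmul_eq_mul]
      _ ≤ ((p : ℝ≥0∞)) * ENNReal.ofReal B1 + ((s : ℝ≥0∞)) * ENNReal.ofReal B2 := by
          apply add_le_add
          · apply mul_le_mul_left
            have hcard1 : (Finset.univ.filter (fun j => β j = 0)).card ≤ p :=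
              le_trans (Finset.card_filter_le _ _) (by simp)
            exact_mod_cast Nat.cast_le.mpr hcard1
          · apply mul_le_mul_left
            simp only [ne_eq] at hs
            rw [hs]
      _ = ENNReal.ofReal ((p:ℝ) * B1) + ENNReal.ofReal ((s:ℝ) * B2) := by
          rw [← ENNReal.ofReal_natCast p, ← ENNReal.ofReal_natCast s,
            ← ENNReal.ofReal_mul (Nat.cast_nonneg p), ← ENNReal.ofReal_mul (Nat.cast_nonneg s)]
  -- numeric bounds
  have hp_exp : (p:ℝ) = Real.exp L := (Real.exp_log hpR).symm
  have hnum1 : (p:ℝ) * B1 ≤ (p:ℝ)^(-(c₀/2 - 1)) := by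
    rw [Real.rpow_def_of_pos hpR]
    have e1 : (p:ℝ) * B1 = 4/5 * (Real.exp L * Real.exp (-(1+z)/2)) := by
      rw [hB1, hp_exp]; ring
    rw [e1, ← Real.exp_add]
    have e2 : L + -(1+z)/2 = (-(1:ℝ))/2 + L * (-(c₀/2 - 1)) := by rw [hz]; ring
    rw [e2, Real.exp_add]
    have h3 : Real.exp ((-(1:ℝ))/2) ≤ 1 := Real.exp_le_one_iff.mpr (by norm_num)
    nlinarith [Real.exp_pos (L * (-(c₀/2 - 1))), Real.exp_pos ((-(1:ℝ))/2)]
  have hnum2 : (s:ℝ) * B2 ≤ (p:ℝ)^(-(c₀ * s) / 8) := by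
    rw [Real.rpow_def_of_pos hpR]
    have hkey2 : 4/5 * (s:ℝ) ≤ Real.exp ((s:ℝ) * L * (1 + 3*c₀/8)) := by
      have h1 : (s:ℝ) ≤ (s:ℝ) * L * (1 + 3*c₀/8) := by
        nlinarith [hsR, hL1, hc₀0, mul_le_mul hsR hL1 (by norm_num) (by linarith),
          mul_nonneg (mul_nonneg (by linarith : (0:ℝ) ≤ (s:ℝ)) (by linarith : (0:ℝ) ≤ L))
            (by linarith : (0:ℝ) ≤ 3*c₀/8)]
      calc 4/5 * (s:ℝ) ≤ (s:ℝ) := by nlinarith [hsR]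
        _ ≤ Real.exp ((s:ℝ)) := by linarith [Real.add_one_le_exp ((s:ℝ))]
        _ ≤ Real.exp ((s:ℝ) * L * (1 + 3*c₀/8)) := Real.exp_le_exp.mpr h1
    calc (s:ℝ) * B2 = (4/5 * (s:ℝ)) * Real.exp (-((2+c₀)*s*L)/2) := by rw [hB2]; ring
      _ ≤ Real.exp ((s:ℝ) * L * (1 + 3*c₀/8)) * Real.exp (-((2+c₀)*s*L)/2) :=
          mul_le_mul_of_nonneg_right hkey2 (Real.exp_pos _).le
      _ = Real.exp (L * (-(c₀ * s) / 8)) := by rw [← Real.exp_add]; congr 1; ring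
  -- inclusion of the good event
  have hincl : (⋃ j, Bad j)ᶜ ⊆
      {ε : Fin n → ℝ | ∀ j : Fin p, Real.sign (βt ε j) = Real.sign (β j)} := by
    intro ε hε j
    simp only [Set.mem_compl_iff, Set.mem_iUnion, not_exists] at hε
    have hgj : ¬ ((if β j = 0 then τ j else m j) ≤ |x j ⬝ᵥ ε|) := hε j
    push_neg at hgj
    have hT : x j ⬝ᵥ (X.mulVec β + ε) = (x j ⬝ᵥ x j) * β j + x j ⬝ᵥ ε := by
      rw [dotProduct_add, hXb j]
    rw [hβt ε j, hT]
    by_cases hj : β j = 0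
    · rw [if_pos hj] at hgj
      have hle : ((x j ⬝ᵥ x j) * β j + x j ⬝ᵥ ε)^2 ≤ (σ2:ℝ) * (x j ⬝ᵥ x j) * (1+z) := by
        have e0 : (x j ⬝ᵥ x j) * β j + x j ⬝ᵥ ε = x j ⬝ᵥ ε := by rw [hj]; ring
        rw [e0, ← sq_abs]
        calc |x j ⬝ᵥ ε|^2 ≤ (τ j)^2 :=
              pow_le_pow_left₀ (abs_nonneg _) hgj.le 2
          _ = (σ2:ℝ) * (x j ⬝ᵥ x j) * (1+z) := hτsq j
      rw [if_neg (not_lt.mpr hle), hj, Real.sign_zero]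
    · rw [if_neg hj] at hgj
      have hmj := hkeym j hj
      have hmpos : 0 < m j := lt_of_lt_of_le (mul_pos (hsvpos j) hrpos) hmj
      have habs : |(x j ⬝ᵥ x j) * β j| = (x j ⬝ᵥ x j) * |β j| := by
        rw [abs_mul, abs_of_pos (hN j)]
      have hTlow : τ j < |(x j ⬝ᵥ x j) * β j + x j ⬝ᵥ ε| := by
        have h1 : |(x j ⬝ᵥ x j) * β j| - |x j ⬝ᵥ ε| ≤ |(x j ⬝ᵥ x j) * β j + x j ⬝ᵥ ε| := by
          have h3 := abs_add_le ((x j ⬝ᵥ x j) * β j + x j ⬝ᵥ ε) (-(x j ⬝ᵥ ε))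
          simp only [add_neg_cancel_right, abs_neg] at h3
          linarith
        rw [habs] at h1
        rw [hmdef] at hgj
        simp only at hgj
        linarith
      have hthr : (σ2:ℝ) * (x j ⬝ᵥ x j) * (1+z)
          < ((x j ⬝ᵥ x j) * β j + x j ⬝ᵥ ε)^2 := by
        rw [← hτsq j, ← sq_abs ((x j ⬝ᵥ x j) * β j + x j ⬝ᵥ ε)]
        exact pow_lt_pow_left₀ hTlow (hτ0 j) two_ne_zero
      rw [if_pos hthr]
      set T := (x j ⬝ᵥ x j) * β j + x j ⬝ᵥ ε with hTdef
      have hT2 : (x j ⬝ᵥ x j) * (σ2:ℝ) < T * T := by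
        have h1z1 : (1:ℝ) ≤ 1 + z := by linarith
        have := hthr
        nlinarith [mul_nonneg (mul_nonneg σ2.coe_nonneg (hN j).le) hz0, sq_abs T]
      have hdiv : T / (x j ⬝ᵥ x j) - (σ2:ℝ) / T
          = (T * T - (x j ⬝ᵥ x j) * (σ2:ℝ)) / ((x j ⬝ᵥ x j) * T) := by
        have hTne : T ≠ 0 := by
          intro h0
          rw [h0] at hTlow
          simp only [abs_zero] at hTlow
          linarith [hτ0 j]
        rw [div_sub_div T (σ2:ℝ) (hN j).ne' hTne]
      rw [hdiv]
      rcases lt_trichotomy (β j) 0 with hβneg | hβ0 | hβpos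
      · -- T < 0
        have hTneg : T < 0 := by
          have h1 : T ≤ (x j ⬝ᵥ x j) * β j + |x j ⬝ᵥ ε| := by
            rw [hTdef]
            have := le_abs_self (x j ⬝ᵥ ε)
            linarith
          have h2 : (x j ⬝ᵥ x j) * |β j| = -((x j ⬝ᵥ x j) * β j) := by
            rw [abs_of_neg hβneg]; ring
          rw [hmdef] at hgj
          simp only at hgj
          have h3 : |x j ⬝ᵥ ε| < (x j ⬝ᵥ x j) * |β j| - τ j := hgj
          nlinarith [hτ0 j]
        have : (T * T - (x j ⬝ᵥ x j) * (σ2:ℝ)) / ((x j ⬝ᵥ x j) * T) < 0 :=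
          div_neg_of_pos_of_neg (by linarith) (mul_neg_of_pos_of_neg (hN j) hTneg)
        rw [Real.sign_of_neg this, Real.sign_of_neg hβneg]
      · exact absurd hβ0 hj
      · -- T > 0
        have hTpos : 0 < T := by
          have h1 : (x j ⬝ᵥ x j) * β j - |x j ⬝ᵥ ε| ≤ T := by
            rw [hTdef]
            have := neg_abs_le (x j ⬝ᵥ ε)
            linarith
          have h2 : (x j ⬝ᵥ x j) * |β j| = (x j ⬝ᵥ x j) * β j := by
            rw [abs_of_pos hβpos]
          rw [hmdef] at hgj
          simp only at hgj
          nlinarith [hτ0 j]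
        have : 0 < (T * T - (x j ⬝ᵥ x j) * (σ2:ℝ)) / ((x j ⬝ᵥ x j) * T) :=
          div_pos (by linarith) (mul_pos (hN j) hTpos)
        rw [Real.sign_of_pos this, Real.sign_of_pos hβpos]
  -- final assembly
  have hBadm : ∀ j, MeasurableSet (Bad j) := fun j =>
    measurableSet_le measurable_const (hgm j).abs
  have hUm : MeasurableSet (⋃ j, Bad j) := MeasurableSet.iUnion hBadm
  have hU : μ (⋃ j, Bad j) ≤ ENNReal.ofReal ((p:ℝ)^(-(c₀ * s) / 8) + Real.exp (-(s:ℝ))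
      + (p:ℝ)^(-(c₀/2 - 1))) := by
    calc μ (⋃ j, Bad j) ≤ ∑ j, μ (Bad j) := measure_iUnion_fintype_le μ Bad
      _ ≤ ENNReal.ofReal ((p:ℝ) * B1) + ENNReal.ofReal ((s:ℝ) * B2) := hsum
      _ ≤ ENNReal.ofReal ((p:ℝ)^(-(c₀/2 - 1))) + ENNReal.ofReal ((p:ℝ)^(-(c₀ * s) / 8)) :=
          add_le_add (ENNReal.ofReal_le_ofReal hnum1) (ENNReal.ofReal_le_ofReal hnum2)
      _ = ENNReal.ofReal ((p:ℝ)^(-(c₀/2 - 1)) + (p:ℝ)^(-(c₀ * s) / 8)) := by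
          rw [← ENNReal.ofReal_add (by positivity) (by positivity)]
      _ ≤ ENNReal.ofReal ((p:ℝ)^(-(c₀ * s) / 8) + Real.exp (-(s:ℝ)) + (p:ℝ)^(-(c₀/2 - 1))) := by
          apply ENNReal.ofReal_le_ofReal
          have := (Real.exp_pos (-(s:ℝ))).le
          linarith
  calc ENNReal.ofReal (1 - (p:ℝ)^(-(c₀ * s) / 8) - Real.exp (-(s:ℝ)) - (p:ℝ)^(-(c₀/2 - 1)))
      = ENNReal.ofReal (1 - ((p:ℝ)^(-(c₀ * s) / 8) + Real.exp (-(s:ℝ))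
          + (p:ℝ)^(-(c₀/2 - 1)))) := by ring_nf
    _ = ENNReal.ofReal 1 - ENNReal.ofReal ((p:ℝ)^(-(c₀ * s) / 8) + Real.exp (-(s:ℝ))
          + (p:ℝ)^(-(c₀/2 - 1))) := ENNReal.ofReal_sub _ (by positivity)
    _ = 1 - ENNReal.ofReal ((p:ℝ)^(-(c₀ * s) / 8) + Real.exp (-(s:ℝ))
          + (p:ℝ)^(-(c₀/2 - 1))) := by rw [ENNReal.ofReal_one]
    _ ≤ 1 - μ (⋃ j, Bad j) := tsub_le_tsub_left hU 1
    _ = μ ((⋃ j, Bad j)ᶜ) := (prob_compl_eq_one_sub hUm).symm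
    _ ≤ μ {ε : Fin n → ℝ | ∀ j : Fin p, Real.sign (βt ε j) = Real.sign (β j)} :=
        measure_mono hincl
end

section
/- Let Z be a standard Gaussian random variable (law gaussianReal 0 1). Then for every integer k ≥ 2, E[ |Z² − 1|^k ] ≤ k! · 2^{k−2}. -/
set_option maxHeartbeats 1000000

open MeasureTheory ProbabilityTheory Real Filter
open scoped NNReal ENNReal

noncomputable def gcw (x : ℝ) : ℝ := Real.exp (-(x ^ 2 / 2))
noncomputable def gcJ (n : ℕ) : ℝ := ∫ x : ℝ, (x ^ 2 - 1) ^ n * gcw x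


lemma gcw_pos (x : ℝ) : 0 < gcw x := Real.exp_pos _

lemma gcw_continuous : Continuous gcw := by
  unfold gcw; fun_prop

lemma integrable_pow_mul_gcw (n : ℕ) : Integrable (fun x : ℝ => x ^ n * gcw x) := by
  have h := integrable_rpow_mul_exp_neg_mul_sq (b := (1:ℝ)/2) (by norm_num)
    (s := (n:ℝ)) (lt_of_lt_of_le (by norm_num) (Nat.cast_nonneg n))
  have : (fun x : ℝ => x ^ (n:ℝ) * Real.exp (-(1/2) * x ^ 2)) = fun x => x ^ n * gcw x := by
    funext x
    rw [Real.rpow_natCast]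
    congr 1
    unfold gcw
    congr 1
    ring
  rwa [this] at h

lemma integrable_gcw : Integrable gcw := by
  simpa using integrable_pow_mul_gcw 0

lemma integrable_of_poly_bound {f : ℝ → ℝ} (hf : Continuous f) (N : ℕ) (C : ℝ)
    (hbound : ∀ x, |f x| ≤ C * (x ^ (2 * N) + 1)) :
    Integrable (fun x : ℝ => f x * gcw x) := by
  refine Integrable.mono' (g := fun x => C * (x ^ (2 * N) * gcw x + gcw x)) ?_ ?_ ?_
  · exact ((integrable_pow_mul_gcw (2 * N)).add integrable_gcw).const_mul C
  · exact (hf.mul gcw_continuous).aestronglyMeasurable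
  · refine Eventually.of_forall fun x => ?_
    have h1 : (0:ℝ) ≤ gcw x := (gcw_pos x).le
    have h2 := hbound x
    calc ‖f x * gcw x‖ = |f x| * gcw x := by
          rw [norm_mul, Real.norm_eq_abs, Real.norm_eq_abs, abs_of_nonneg h1]
      _ ≤ (C * (x ^ (2*N) + 1)) * gcw x := by
          exact mul_le_mul_of_nonneg_right h2 h1
      _ = C * (x ^ (2*N) * gcw x + gcw x) := by ring

lemma sq_add_one_pow_bound (x : ℝ) (n : ℕ) : (x ^ 2 + 1) ^ n ≤ 2 ^ n * (x ^ (2 * n) + 1) := by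
  rcases le_total (x ^ 2) 1 with h | h
  · have h1 : (x ^ 2 + 1) ^ n ≤ 2 ^ n := by
      apply pow_le_pow_left₀ (by positivity)
      linarith
    have h2 : (0:ℝ) ≤ x ^ (2 * n) := by rw [pow_mul]; positivity
    have h3 : (1:ℝ) ≤ 2 ^ n := one_le_pow₀ (by norm_num)
    nlinarith
  · have h1 : (x ^ 2 + 1) ^ n ≤ (2 * x ^ 2) ^ n := by
      apply pow_le_pow_left₀ (by positivity)
      linarith
    have h2 : (2 * x ^ 2) ^ n = 2 ^ n * x ^ (2 * n) := by
      rw [mul_pow, ← pow_mul]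
    have h3 : (0:ℝ) < 2 ^ n := by positivity
    nlinarith

lemma abs_sq_sub_one_pow_le (x : ℝ) (n : ℕ) : |x ^ 2 - 1| ^ n ≤ (x ^ 2 + 1) ^ n := by
  apply pow_le_pow_left₀ (abs_nonneg _)
  rw [abs_le]
  constructor <;> nlinarith [sq_nonneg x]

lemma integrable_J (n : ℕ) : Integrable (fun x : ℝ => (x ^ 2 - 1) ^ n * gcw x) := by
  apply integrable_of_poly_bound (by fun_prop) n (2 ^ n)
  intro x
  calc |(x ^ 2 - 1) ^ n| = |x ^ 2 - 1| ^ n := abs_pow _ _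
    _ ≤ (x ^ 2 + 1) ^ n := abs_sq_sub_one_pow_le x n
    _ ≤ 2 ^ n * (x ^ (2 * n) + 1) := sq_add_one_pow_bound x n

lemma integrable_absJ (n : ℕ) : Integrable (fun x : ℝ => |x ^ 2 - 1| ^ n * gcw x) := by
  apply integrable_of_poly_bound (by fun_prop) n (2 ^ n)
  intro x
  rw [abs_pow, abs_abs]
  calc |x ^ 2 - 1| ^ n ≤ (x ^ 2 + 1) ^ n := abs_sq_sub_one_pow_le x n
    _ ≤ 2 ^ n * (x ^ (2 * n) + 1) := sq_add_one_pow_bound x n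

lemma integrable_xJ (n : ℕ) : Integrable (fun x : ℝ => x * (x ^ 2 - 1) ^ n * gcw x) := by
  apply integrable_of_poly_bound (by fun_prop) (n + 1) (2 ^ (n + 1))
  intro x
  have hx : |x| ≤ x ^ 2 + 1 := by nlinarith [sq_nonneg (|x| - 1), sq_abs x, abs_nonneg x]
  calc |x * (x ^ 2 - 1) ^ n| = |x| * |x ^ 2 - 1| ^ n := by rw [abs_mul, abs_pow]
    _ ≤ (x ^ 2 + 1) * (x ^ 2 + 1) ^ n := by
        apply mul_le_mul hx (abs_sq_sub_one_pow_le x n) (by positivity) (by positivity)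
    _ = (x ^ 2 + 1) ^ (n + 1) := by rw [pow_succ]; ring
    _ ≤ 2 ^ (n + 1) * (x ^ (2 * (n + 1)) + 1) := sq_add_one_pow_bound x (n + 1)

lemma gcw_hasDerivAt (x : ℝ) : HasDerivAt gcw (-x * gcw x) x := by
  have h1 : HasDerivAt (fun x : ℝ => -(x ^ 2 / 2)) (-x) x := by
    have := ((hasDerivAt_pow 2 x).div_const 2).neg
    refine this.congr_deriv ?_
    simp
  have := h1.exp
  unfold gcw
  simpa [mul_comm] using this

lemma gcJ_one : gcJ 1 = 0 := by
  unfold gcJ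
  have hderiv : ∀ x : ℝ, HasDerivAt (fun x => -(x * gcw x)) ((x ^ 2 - 1) ^ 1 * gcw x) x := by
    intro x
    have h := ((hasDerivAt_id x).mul (gcw_hasDerivAt x)).neg
    refine h.congr_deriv ?_
    simp
    ring
  have hint : Integrable (fun x : ℝ => (x ^ 2 - 1) ^ 1 * gcw x) := integrable_J 1
  have hF : Integrable (fun x : ℝ => -(x * gcw x)) := by
    have h := (integrable_xJ 0)
    simp only [pow_zero, mul_one] at h
    exact h.neg
  exact integral_eq_zero_of_hasDerivAt_of_integrable hderiv hint hF

lemma gcJ_rec (m : ℕ) : gcJ (m + 2) = (2 * (m : ℝ) + 2) * (gcJ (m + 1) + gcJ m) := by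
  unfold gcJ
  set f' : ℝ → ℝ := fun x => (x ^ 2 - 1) ^ (m + 2) * gcw x
    - (2 * (m : ℝ) + 2) * ((x ^ 2 - 1) ^ (m + 1) * gcw x)
    - (2 * (m : ℝ) + 2) * ((x ^ 2 - 1) ^ m * gcw x) with hf'
  have hderiv : ∀ x : ℝ, HasDerivAt (fun x => -(x * (x ^ 2 - 1) ^ (m + 1) * gcw x)) (f' x) x := by
    intro x
    have hpoly : HasDerivAt (fun x : ℝ => x ^ 2 - 1) (2 * x) x := by
      simpa using (hasDerivAt_pow 2 x).sub_const 1
    have hpow : HasDerivAt (fun x : ℝ => (x ^ 2 - 1) ^ (m + 1))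
        ((m + 1 : ℕ) * (x ^ 2 - 1) ^ m * (2 * x)) x := by
      exact (hpoly.pow (m + 1)).congr_deriv (by simp)
    have hG : HasDerivAt (fun x : ℝ => x * (x ^ 2 - 1) ^ (m + 1))
        (1 * (x ^ 2 - 1) ^ (m + 1) + x * ((m + 1 : ℕ) * (x ^ 2 - 1) ^ m * (2 * x))) x :=
      (hasDerivAt_id x).mul hpow
    have h := (hG.mul (gcw_hasDerivAt x)).neg
    refine h.congr_deriv ?_
    rw [hf']
    push_cast
    ring
  have h0 : (∫ x : ℝ, f' x) = 0 := by
    refine integral_eq_zero_of_hasDerivAt_of_integrable hderiv ?_ ?_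
    · exact ((integrable_J (m + 2)).sub ((integrable_J (m + 1)).const_mul _)).sub
        ((integrable_J m).const_mul _)
    · exact (integrable_xJ (m + 1)).neg
  rw [hf'] at h0
  beta_reduce at h0
  have hint2 : Integrable (fun x : ℝ => (2 * (m:ℝ) + 2) * ((x ^ 2 - 1) ^ (m + 1) * gcw x)) :=
    (integrable_J (m + 1)).const_mul _
  have hint3 : Integrable (fun x : ℝ => (2 * (m:ℝ) + 2) * ((x ^ 2 - 1) ^ m * gcw x)) :=
    (integrable_J m).const_mul _
  have hint1 : Integrable (fun x : ℝ => (x ^ 2 - 1) ^ (m + 2) * gcw x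
      - (2 * (m:ℝ) + 2) * ((x ^ 2 - 1) ^ (m + 1) * gcw x)) := (integrable_J (m + 2)).sub hint2
  rw [integral_sub hint1 hint3, integral_sub (integrable_J (m + 2)) hint2,
    MeasureTheory.integral_const_mul, MeasureTheory.integral_const_mul] at h0
  linarith

lemma gcJ_zero : gcJ 0 = Real.sqrt (2 * π) := by
  unfold gcJ
  simp only [pow_zero, one_mul]
  have h := integral_gaussian (1/2 : ℝ)
  have : (fun x : ℝ => Real.exp (-(1/2 : ℝ) * x ^ 2)) = gcw := by
    funext x; unfold gcw; congr 1; ring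
  rw [this] at h
  rw [h]
  congr 1
  ring

lemma gcJ0_nonneg : 0 ≤ gcJ 0 := by rw [gcJ_zero]; positivity

lemma gcJ_two : gcJ 2 = 2 * gcJ 0 := by
  have := gcJ_rec 0
  rw [gcJ_one] at this
  push_cast at this
  linarith

lemma gcJ_three : gcJ 3 = 8 * gcJ 0 := by
  have := gcJ_rec 1
  rw [gcJ_two, gcJ_one] at this
  push_cast at this
  linarith

lemma gcJ_four : gcJ 4 = 60 * gcJ 0 := by
  have := gcJ_rec 2
  rw [gcJ_three, gcJ_two] at this
  push_cast at this
  linarith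

/-- refined bound: `(m+4) * J (m+3) ≤ (m+3)! * 2^(m+1) * (m+3) * J 0`. -/
lemma gcQ : ∀ m : ℕ,
    ((m : ℝ) + 4) * gcJ (m + 3) ≤ ((m + 3).factorial : ℝ) * 2 ^ (m + 1) * ((m : ℝ) + 3) * gcJ 0
    ∧ ((m : ℝ) + 5) * gcJ (m + 4) ≤
      ((m + 4).factorial : ℝ) * 2 ^ (m + 2) * ((m : ℝ) + 4) * gcJ 0 := by
  intro m
  induction m with
  | zero =>
    constructor
    · rw [gcJ_three]
      norm_num [Nat.factorial]
      nlinarith [gcJ0_nonneg]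
    · rw [gcJ_four]
      norm_num [Nat.factorial]
      nlinarith [gcJ0_nonneg]
  | succ n ih =>
    refine ⟨by push_cast; push_cast at ih; linarith [ih.2], ?_⟩
    have hrec := gcJ_rec (n + 3)
    set x : ℝ := (n : ℝ) with hx
    have hx0 : 0 ≤ x := Nat.cast_nonneg n
    set a : ℝ := ((n + 3).factorial : ℝ) with ha
    have ha0 : 0 < a := by positivity
    set t : ℝ := (2 : ℝ) ^ (n + 1) with ht
    have ht0 : 0 < t := by positivity
    have hfac4 : ((n + 4).factorial : ℝ) = (x + 4) * a := by
      rw [ha, hx, show n + 4 = (n + 3) + 1 by ring, Nat.factorial_succ]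
      push_cast; ring
    have hfac5 : ((n + 1 + 4).factorial : ℝ) = (x + 5) * ((x + 4) * a) := by
      rw [show n + 1 + 4 = (n + 4) + 1 by ring, Nat.factorial_succ]
      push_cast
      rw [hfac4]
      push_cast; ring
    have h1 : (x + 5) * gcJ (n + 4) ≤ ((x + 4) * a) * (2 * t) * (x + 4) * gcJ 0 := by
      have := ih.2
      rw [hfac4] at this
      calc (x + 5) * gcJ (n + 4) ≤ ((n + 4).factorial : ℝ) * 2 ^ (n + 2) * ((n:ℝ) + 4) * gcJ 0 := by
            push_cast at this ⊢; linarith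
        _ = ((x + 4) * a) * (2 * t) * (x + 4) * gcJ 0 := by
            rw [hfac4, ht, hx]; ring
    have h2 : (x + 4) * gcJ (n + 3) ≤ a * t * (x + 3) * gcJ 0 := by
      have := ih.1
      calc (x + 4) * gcJ (n + 3) ≤ ((n + 3).factorial : ℝ) * 2 ^ (n + 1) * ((n:ℝ) + 3) * gcJ 0 := by
            push_cast at this ⊢; linarith
        _ = a * t * (x + 3) * gcJ 0 := by rw [ha, ht, hx]
    -- goal: (x+6) * J(n+5) ≤ (n+5)! * 2^(n+3) * (x+5) * J0
    have hgoal : ((n:ℝ) + 1 + 5) * gcJ (n + 1 + 4) ≤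
        ((n + 1 + 4).factorial : ℝ) * 2 ^ (n + 1 + 2) * ((n:ℝ) + 1 + 4) * gcJ 0 := by
      have hrec' : gcJ (n + 1 + 4) = (2 * x + 8) * (gcJ (n + 4) + gcJ (n + 3)) := by
        have : n + 1 + 4 = (n + 3) + 2 := by ring
        rw [this, hrec]
        push_cast
        rw [hx]
        ring_nf
      rw [hrec', hfac5, show (2:ℝ) ^ (n + 1 + 2) = 4 * t by rw [ht]; ring]
      have hpos : (0:ℝ) < (x + 4) * (x + 5) := by positivity
      rw [show ((n:ℝ) + 1 + 5) = x + 6 by rw [hx]; ring, show ((n:ℝ) + 1 + 4) = x + 5 by rw [hx]; ring]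
      rw [← mul_le_mul_iff_right₀ hpos]
      have e1 := mul_le_mul_of_nonneg_left h1 (show (0:ℝ) ≤ 2 * (x + 4) ^ 2 * (x + 6) by positivity)
      have e2 := mul_le_mul_of_nonneg_left h2
        (show (0:ℝ) ≤ 2 * (x + 4) * (x + 5) * (x + 6) by positivity)
      have hpoly : 0 ≤ (x ^ 3 + 16 * x ^ 2 + 83 * x + 142) * (2 * a * t * (x + 4) * gcJ 0) := by
        have h1' : 0 ≤ x ^ 3 + 16 * x ^ 2 + 83 * x + 142 := by positivity
        have h2' : 0 ≤ 2 * a * t * (x + 4) * gcJ 0 := by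
          have := gcJ0_nonneg; positivity
        exact mul_nonneg h1' h2'
      nlinarith [e1, e2, hpoly]
    push_cast at hgoal ⊢
    linarith

lemma gcJ_even_nonneg (j : ℕ) : 0 ≤ gcJ (2 * j) := by
  unfold gcJ
  apply integral_nonneg
  intro x
  have h1 : (0:ℝ) ≤ (x ^ 2 - 1) ^ (2 * j) := by rw [pow_mul]; positivity
  have h2 : (0:ℝ) ≤ gcw x := (Real.exp_pos _).le
  positivity

lemma gc_cauchy_schwarz (j : ℕ) :
    (∫ x : ℝ, |x ^ 2 - 1| ^ (2 * j + 1) * gcw x) ≤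
      Real.sqrt (gcJ (2 * j)) * Real.sqrt (gcJ (2 * j + 2)) := by
  set u : ℝ → ℝ := fun x => Real.exp (-(x ^ 2 / 4)) with hu
  have huc : Continuous u := by fun_prop
  have hu_sq : ∀ x, u x * u x = gcw x := by
    intro x
    rw [hu]
    simp only
    rw [← Real.exp_add]
    congr 1
    ring
  set f : ℝ → ℝ := fun x => |x ^ 2 - 1| ^ j * u x with hf
  set g : ℝ → ℝ := fun x => |x ^ 2 - 1| ^ (j + 1) * u x with hg
  have hfc : Continuous f := by
    apply Continuous.mul _ huc
    exact (((continuous_pow 2).sub continuous_const).abs).pow j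
  have hgc : Continuous g := by
    apply Continuous.mul _ huc
    exact (((continuous_pow 2).sub continuous_const).abs).pow (j + 1)
  have hfsq : ∀ x, f x ^ 2 = (x ^ 2 - 1) ^ (2 * j) * gcw x := by
    intro x
    rw [hf]
    simp only
    rw [mul_pow, ← pow_mul, pow_two (u x), hu_sq, mul_comm j 2, pow_mul, sq_abs, ← pow_mul]
  have hgsq : ∀ x, g x ^ 2 = (x ^ 2 - 1) ^ (2 * j + 2) * gcw x := by
    intro x
    rw [hg]
    simp only
    rw [mul_pow, ← pow_mul, pow_two (u x), hu_sq, mul_comm (j+1) 2, pow_mul, sq_abs, ← pow_mul,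
      show 2 * (j + 1) = 2 * j + 2 from by ring]
  have hfm : MemLp f (ENNReal.ofReal 2) (volume : Measure ℝ) := by
    rw [show ENNReal.ofReal 2 = 2 by norm_num]
    rw [memLp_two_iff_integrable_sq hfc.aestronglyMeasurable]
    have : (fun x => f x ^ 2) = fun x : ℝ => (x ^ 2 - 1) ^ (2 * j) * gcw x := funext hfsq
    rw [this]
    exact integrable_J _
  have hgm : MemLp g (ENNReal.ofReal 2) (volume : Measure ℝ) := by
    rw [show ENNReal.ofReal 2 = 2 by norm_num]
    rw [memLp_two_iff_integrable_sq hgc.aestronglyMeasurable]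
    have : (fun x => g x ^ 2) = fun x : ℝ => (x ^ 2 - 1) ^ (2 * j + 2) * gcw x := funext hgsq
    rw [this]
    exact integrable_J _
  have hpq : Real.HolderConjugate 2 2 := ⟨by norm_num, by norm_num, by norm_num⟩
  have hf0 : 0 ≤ᵐ[(volume : Measure ℝ)] f := Eventually.of_forall fun x => by
    rw [hf]; positivity
  have hg0 : 0 ≤ᵐ[(volume : Measure ℝ)] g := Eventually.of_forall fun x => by
    rw [hg]; positivity
  have hCS := integral_mul_le_Lp_mul_Lq_of_nonneg hpq hf0 hg0 hfm hgm
  have hlhs : (∫ x : ℝ, f x * g x) = ∫ x : ℝ, |x ^ 2 - 1| ^ (2 * j + 1) * gcw x := by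
    congr 1
    funext x
    rw [hf, hg]
    simp only
    calc |x ^ 2 - 1| ^ j * u x * (|x ^ 2 - 1| ^ (j + 1) * u x)
        = |x ^ 2 - 1| ^ (j + (j + 1)) * (u x * u x) := by rw [pow_add]; ring
      _ = |x ^ 2 - 1| ^ (2 * j + 1) * gcw x := by rw [hu_sq]; congr 2; ring
  have hrf : (∫ x : ℝ, f x ^ (2:ℝ)) = gcJ (2 * j) := by
    unfold gcJ
    congr 1
    funext x
    rw [show (2:ℝ) = ((2:ℕ):ℝ) by norm_num, Real.rpow_natCast, hfsq]
  have hrg : (∫ x : ℝ, g x ^ (2:ℝ)) = gcJ (2 * j + 2) := by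
    unfold gcJ
    congr 1
    funext x
    rw [show (2:ℝ) = ((2:ℕ):ℝ) by norm_num, Real.rpow_natCast, hgsq]
  rw [hlhs, hrf, hrg] at hCS
  calc (∫ x : ℝ, |x ^ 2 - 1| ^ (2 * j + 1) * gcw x)
      ≤ gcJ (2 * j) ^ (1/(2:ℝ)) * gcJ (2 * j + 2) ^ (1/(2:ℝ)) := hCS
    _ = Real.sqrt (gcJ (2 * j)) * Real.sqrt (gcJ (2 * j + 2)) := by
        rw [← Real.sqrt_eq_rpow, ← Real.sqrt_eq_rpow]

lemma gauss_integral_eq (f : ℝ → ℝ) :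
    ∫ z, f z ∂(gaussianReal 0 1) = (Real.sqrt (2 * π))⁻¹ * ∫ x, f x * gcw x := by
  rw [gaussianReal_of_var_ne_zero 0 one_ne_zero]
  have hd : gaussianPDF 0 1 = fun x => ((Real.toNNReal (gaussianPDFReal 0 1 x) : ℝ≥0) : ℝ≥0∞) := by
    funext x
    rfl
  rw [hd, integral_withDensity_eq_integral_smul ((measurable_gaussianPDFReal 0 1).real_toNNReal) f]
  have hpdf : ∀ x : ℝ, (Real.toNNReal (gaussianPDFReal 0 1 x) : ℝ) • f x
      = (Real.sqrt (2 * π))⁻¹ * (f x * gcw x) := by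
    intro x
    rw [smul_eq_mul, Real.coe_toNNReal _ (gaussianPDFReal_nonneg 0 1 x)]
    have : gaussianPDFReal 0 1 x = (Real.sqrt (2 * π))⁻¹ * gcw x := by
      unfold gaussianPDFReal gcw
      simp only [NNReal.coe_one, mul_one, sub_zero]
      congr 1
      ring
    rw [this]
    ring
  calc (∫ x, Real.toNNReal (gaussianPDFReal 0 1 x) • f x)
      = ∫ x, (Real.sqrt (2 * π))⁻¹ * (f x * gcw x) := by
        congr 1
        funext x
        rw [← hpdf x]
        rfl
    _ = (Real.sqrt (2 * π))⁻¹ * ∫ x, f x * gcw x := integral_const_mul _ _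

lemma gc_sqrt_bound {A B C S : ℝ} (hA : 0 ≤ A) (hC : 0 ≤ C) (hS : 0 ≤ S)
    (h : A * B ≤ (C * S) ^ 2) : Real.sqrt A * Real.sqrt B ≤ C * S := by
  rw [← Real.sqrt_mul hA]
  calc Real.sqrt (A * B) ≤ Real.sqrt ((C * S) ^ 2) := Real.sqrt_le_sqrt h
    _ = C * S := Real.sqrt_sq (by positivity)

lemma gcJ_le (k : ℕ) (hk : 2 ≤ k) : gcJ k ≤ (k.factorial : ℝ) * 2 ^ (k - 2) * gcJ 0 := by
  match k, hk with
  | 2, _ =>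
    rw [gcJ_two]
    norm_num [Nat.factorial]
  | (m + 3), _ =>
    have h := (gcQ m).1
    have h2 : ((m + 3).factorial : ℝ) * 2 ^ (m + 1) * ((m : ℝ) + 3) * gcJ 0
        ≤ ((m : ℝ) + 4) * (((m + 3).factorial : ℝ) * 2 ^ (m + 1) * gcJ 0) := by
      have hb : (0:ℝ) ≤ ((m + 3).factorial : ℝ) * 2 ^ (m + 1) * gcJ 0 := by
        have := gcJ0_nonneg; positivity
      nlinarith [hb]
    have h3 : ((m : ℝ) + 4) * gcJ (m + 3)
        ≤ ((m : ℝ) + 4) * (((m + 3).factorial : ℝ) * 2 ^ (m + 1) * gcJ 0) := le_trans h h2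
    have h4 := le_of_mul_le_mul_left h3 (by positivity : (0:ℝ) < (m : ℝ) + 4)
    have : m + 3 - 2 = m + 1 := by omega
    rw [this]
    exact h4

/-- Moment bound for a standard Gaussian `Z`: for every integer `k ≥ 2`,
`E[|Z² - 1|^k] ≤ k! 2^{k-2}`. -/
theorem gaussian_centered_chisq_moment_bound (k : ℕ) (hk : 2 ≤ k) :
    ∫ z : ℝ, |z^2 - 1|^k ∂(gaussianReal 0 1) ≤ (k.factorial : ℝ) * 2^(k - 2) := by
  rw [gauss_integral_eq (fun z => |z ^ 2 - 1| ^ k)]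
  have hs : (0:ℝ) < Real.sqrt (2 * π) := by positivity
  rw [inv_mul_le_iff₀ hs]
  have hJ0 : gcJ 0 = Real.sqrt (2 * π) := gcJ_zero
  have key : (∫ x : ℝ, |x ^ 2 - 1| ^ k * gcw x) ≤ (k.factorial : ℝ) * 2 ^ (k - 2) * gcJ 0 := by
    rcases Nat.even_or_odd k with ⟨j, hj⟩ | ⟨j, hj⟩
    · -- even case
      have hjk : k = 2 * j := by omega
      have heq : (∫ x : ℝ, |x ^ 2 - 1| ^ k * gcw x) = gcJ k := by
        unfold gcJ
        congr 1
        funext x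
        congr 1
        exact Even.pow_abs ⟨j, by omega⟩ _
      rw [heq]
      exact gcJ_le k hk
    · -- odd case, k = 2j+1 with j ≥ 1
      have hj1 : 1 ≤ j := by omega
      have hk' : k = 2 * j + 1 := by omega
      subst hk'
      have hcs := gc_cauchy_schwarz j
      refine le_trans hcs ?_
      have hC : (0:ℝ) ≤ ((2 * j + 1).factorial : ℝ) * 2 ^ (2 * j + 1 - 2) := by positivity
      refine gc_sqrt_bound (gcJ_even_nonneg j) hC gcJ0_nonneg ?_
      rcases Nat.lt_or_ge j 2 with hj2 | hj2
      · -- j = 1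
        have : j = 1 := by omega
        subst this
        rw [show 2 * 1 = 2 by norm_num, show 2 * 1 + 2 = 4 by norm_num, gcJ_two, gcJ_four]
        norm_num [Nat.factorial]
        nlinarith [gcJ0_nonneg]
      · -- j = i + 2
        obtain ⟨i, rfl⟩ : ∃ i, j = i + 2 := ⟨j - 2, by omega⟩
        set x : ℝ := (i : ℝ) with hxdef
        have hx0 : (0:ℝ) ≤ x := Nat.cast_nonneg i
        set b : ℝ := ((2 * i + 4).factorial : ℝ) with hbdef
        have hb0 : (0:ℝ) < b := by positivity
        set s : ℝ := (2:ℝ) ^ (2 * i + 2) with hsdef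
        have hs0 : (0:ℝ) < s := by positivity
        -- bounds from gcQ
        have hA := (gcQ (2 * i + 1)).1
        have hB := (gcQ (2 * i + 3)).1
        rw [show 2 * i + 1 + 3 = 2 * (i + 2) by ring] at hA
        rw [show 2 * i + 3 + 3 = 2 * (i + 2) + 2 by ring] at hB
        have hfac5 : ((2 * (i + 2)).factorial : ℝ) = b := by
          rw [show 2 * (i + 2) = 2 * i + 4 from by ring, hbdef]
        have hfac6 : ((2 * (i + 2) + 2).factorial : ℝ) = (2 * x + 6) * ((2 * x + 5) * b) := by
          rw [show 2 * (i + 2) + 2 = (2 * i + 5) + 1 by omega, Nat.factorial_succ]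
          push_cast
          rw [show 2 * i + 5 = (2 * i + 4) + 1 by ring, Nat.factorial_succ]
          push_cast
          rw [← hbdef, ← hxdef]
          ring
        rw [hfac5] at hA
        rw [hfac6] at hB
        have hA' : (2 * x + 5) * gcJ (2 * (i + 2)) ≤ b * s * (2 * x + 4) * gcJ 0 := by
          have : ((2 * i + 1 : ℕ) : ℝ) = 2 * x + 1 := by push_cast; ring
          rw [this] at hA
          calc (2 * x + 5) * gcJ (2 * (i + 2)) = (2 * x + 1 + 4) * gcJ (2 * (i + 2)) := by ring
            _ ≤ b * 2 ^ (2 * i + 1 + 1) * (2 * x + 1 + 3) * gcJ 0 := hA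
            _ = b * s * (2 * x + 4) * gcJ 0 := by rw [hsdef]; try ring_nf
        have hB' : (2 * x + 7) * gcJ (2 * (i + 2) + 2)
            ≤ (2 * x + 6) * ((2 * x + 5) * b) * (4 * s) * (2 * x + 6) * gcJ 0 := by
          have : ((2 * i + 3 : ℕ) : ℝ) = 2 * x + 3 := by push_cast; ring
          rw [this] at hB
          calc (2 * x + 7) * gcJ (2 * (i + 2) + 2) = (2 * x + 3 + 4) * gcJ (2 * (i + 2) + 2) := by
                ring
            _ ≤ (2 * x + 6) * ((2 * x + 5) * b) * 2 ^ (2 * i + 3 + 1) * (2 * x + 3 + 3) * gcJ 0 :=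
                hB
            _ = (2 * x + 6) * ((2 * x + 5) * b) * (4 * s) * (2 * x + 6) * gcJ 0 := by
                rw [hsdef]; try ring_nf
        -- multiply the two bounds
        have hAnn : (0:ℝ) ≤ (2 * x + 5) * gcJ (2 * (i + 2)) :=
          mul_nonneg (by positivity) (gcJ_even_nonneg (i + 2))
        have hBnn : (0:ℝ) ≤ (2 * x + 7) * gcJ (2 * (i + 2) + 2) := by
          have := gcJ_even_nonneg (i + 3)
          rw [show 2 * (i + 3) = 2 * (i + 2) + 2 by ring] at this
          exact mul_nonneg (by positivity) this
        have hRnn : (0:ℝ) ≤ b * s * (2 * x + 4) * gcJ 0 := by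
          have := gcJ0_nonneg; positivity
        have hprod := mul_le_mul hA' hB' hBnn hRnn
        -- the factorial/power arithmetic
        have hCval : ((2 * (i + 2) + 1).factorial : ℝ) * 2 ^ (2 * (i + 2) + 1 - 2)
            = (2 * x + 5) * b * (2 * s) := by
          rw [show 2 * (i + 2) + 1 - 2 = 2 * i + 3 by omega,
            show 2 * (i + 2) + 1 = (2 * i + 4) + 1 by ring, Nat.factorial_succ]
          push_cast
          rw [hsdef, hxdef]
          ring
        rw [hCval]
        have harith : (b * s * (2 * x + 4) * gcJ 0) *
            ((2 * x + 6) * ((2 * x + 5) * b) * (4 * s) * (2 * x + 6) * gcJ 0)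
            ≤ ((2 * x + 5) * (2 * x + 7)) * ((2 * x + 5) * b * (2 * s) * gcJ 0) ^ 2 := by
          have hpoly : (0:ℝ) ≤ (2 * x + 5) * ((2 * x + 5) ^ 2 * (2 * x + 7)
              - (2 * x + 4) * (2 * x + 6) ^ 2) := by nlinarith [hx0]
          nlinarith [mul_nonneg (mul_nonneg (mul_nonneg hpoly (sq_nonneg (b * s)))
            (sq_nonneg (gcJ 0))) (le_of_lt hs0), sq_nonneg (gcJ 0), hb0, hs0, hx0,
            gcJ0_nonneg]
        have hfinal : ((2 * x + 5) * (2 * x + 7)) * (gcJ (2 * (i + 2)) * gcJ (2 * (i + 2) + 2))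
            ≤ ((2 * x + 5) * (2 * x + 7)) * (((2 * x + 5) * b * (2 * s)) * gcJ 0) ^ 2 := by
          calc ((2 * x + 5) * (2 * x + 7)) * (gcJ (2 * (i + 2)) * gcJ (2 * (i + 2) + 2))
              = ((2 * x + 5) * gcJ (2 * (i + 2))) * ((2 * x + 7) * gcJ (2 * (i + 2) + 2)) := by
                ring
            _ ≤ (b * s * (2 * x + 4) * gcJ 0) *
                ((2 * x + 6) * ((2 * x + 5) * b) * (4 * s) * (2 * x + 6) * gcJ 0) := hprod
            _ ≤ ((2 * x + 5) * (2 * x + 7)) * (((2 * x + 5) * b * (2 * s)) * gcJ 0) ^ 2 := by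
                calc (b * s * (2 * x + 4) * gcJ 0) *
                    ((2 * x + 6) * ((2 * x + 5) * b) * (4 * s) * (2 * x + 6) * gcJ 0)
                    ≤ ((2 * x + 5) * (2 * x + 7)) * ((2 * x + 5) * b * (2 * s) * gcJ 0) ^ 2 :=
                      harith
                  _ = ((2 * x + 5) * (2 * x + 7)) * (((2 * x + 5) * b * (2 * s)) * gcJ 0) ^ 2 := by
                      ring
        exact le_of_mul_le_mul_left hfinal (by positivity)
  calc (∫ x : ℝ, |x ^ 2 - 1| ^ k * gcw x) ≤ (k.factorial : ℝ) * 2 ^ (k - 2) * gcJ 0 := key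
    _ = (k.factorial : ℝ) * 2 ^ (k - 2) * Real.sqrt (2 * π) := by rw [hJ0]
    _ = Real.sqrt (2 * π) * ((k.factorial : ℝ) * 2 ^ (k - 2)) := by ring
end

section
/- Let Z be a standard Gaussian random variable, let κ ∈ (0, 1/2) and z ≥ 0. Then E[ exp( κ Z² · 1{Z² > 1 + z} ) ] ≤ 1 + exp( − z(1 − 2κ)/2 ) / (1 − 2κ), where 1{·} denotes the indicator function. -/
open MeasureTheory ProbabilityTheory Real Set

lemma gauss_tail_int (a t : ℝ) (ha : 0 < a) :
    ∫ w in Set.Ioi t, w * Real.exp (-a * w^2) = Real.exp (-a * t^2) / (2*a) := by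
  have hderiv : ∀ x ∈ Set.Ici t,
      HasDerivAt (fun y => -Real.exp (-a*y^2)/(2*a)) (x * Real.exp (-a*x^2)) x := by
    intro x _
    have h1 : HasDerivAt (fun y : ℝ => -a*y^2) (-a*(2*x)) x := by
      simpa using (hasDerivAt_pow 2 x).const_mul (-a)
    have h3 := (h1.exp.neg).div_const (2*a)
    refine h3.congr_deriv ?_
    field_simp
  have hint : IntegrableOn (fun x : ℝ => x * Real.exp (-a*x^2)) (Set.Ioi t) :=
    (integrable_mul_exp_neg_mul_sq ha).integrableOn
  have h2 : Filter.Tendsto (fun y : ℝ => -a*y^2) Filter.atTop Filter.atBot := by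
    have h0 : Filter.Tendsto (fun y : ℝ => a*y^2) Filter.atTop Filter.atTop :=
      (Filter.tendsto_pow_atTop two_ne_zero).const_mul_atTop ha
    simpa [Function.comp_def, neg_mul] using Filter.tendsto_neg_atTop_atBot.comp h0
  have htend : Filter.Tendsto (fun y : ℝ => -Real.exp (-a*y^2)/(2*a))
      Filter.atTop (nhds 0) := by
    have := ((Real.tendsto_exp_atBot.comp h2).neg).div_const (2*a)
    simpa using this
  have := integral_Ioi_of_hasDerivAt_of_tendsto' hderiv hint htend
  rw [this]
  ring

lemma integral_gaussianReal_std (f : ℝ → ℝ) :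
    ∫ w, f w ∂(gaussianReal 0 1) = ∫ w, gaussianPDFReal 0 1 w * f w := by
  rw [gaussianReal_of_var_ne_zero 0 one_ne_zero]
  unfold gaussianPDF
  simp_rw [ENNReal.ofReal]
  rw [integral_withDensity_eq_integral_smul
    ((measurable_gaussianPDFReal 0 1).real_toNNReal) f]
  congr 1
  ext w
  rw [NNReal.smul_def, Real.coe_toNNReal _ (gaussianPDFReal_nonneg _ _ _)]
  rfl

/-- Truncated exponential moment bound for a standard Gaussian `Z`: for `κ ∈ (0, 1/2)`
and `z ≥ 0`, `E[exp(κ Z² 1{Z² > 1 + z})] ≤ 1 + exp(-z(1-2κ)/2)/(1-2κ)`. -/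
theorem gaussian_truncated_exp_moment_bound (κ z : ℝ)
    (hκ0 : 0 < κ) (hκ : κ < 1/2) (hz : 0 ≤ z) :
    ∫ w : ℝ, Real.exp (κ * w^2 * (if 1 + z < w^2 then 1 else 0)) ∂(gaussianReal 0 1)
      ≤ 1 + Real.exp (-(z * (1 - 2*κ)) / 2) / (1 - 2*κ) := by
  have hπ : (0:ℝ) < Real.sqrt (2*Real.pi) := Real.sqrt_pos.2 (by positivity)
  set a : ℝ := 1/2 - κ with ha_def
  have ha : 0 < a := by simp only [ha_def]; linarith
  set C : ℝ := (Real.sqrt (2*Real.pi))⁻¹ with hC_def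
  have hC : 0 < C := inv_pos.2 hπ
  set t : ℝ := Real.sqrt (1 + z) with ht_def
  have ht1 : (1:ℝ) ≤ t := by
    nlinarith [Real.sq_sqrt (show (0:ℝ) ≤ 1+z by linarith), Real.sqrt_nonneg (1+z)]
  have ht2 : t^2 = 1 + z := Real.sq_sqrt (by linarith)
  have hpdf : ∀ w : ℝ, gaussianPDFReal 0 1 w = C * Real.exp (-(1/2) * w^2) := by
    intro w
    unfold gaussianPDFReal
    norm_num
    rw [hC_def, show Real.sqrt (2*Real.pi) = Real.sqrt 2 * Real.sqrt Real.pi from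
      Real.sqrt_mul (by norm_num) _, mul_inv, show (-(1/2 * w^2):ℝ) = -w^2/2 by ring]
    ring
  set S : Set ℝ := {w : ℝ | 1 + z < w^2} with hS_def
  have hSmeas : MeasurableSet S :=
    measurableSet_lt measurable_const (measurable_id.pow_const 2)
  set g : ℝ → ℝ := fun w => Real.exp (κ * w^2 * (if 1 + z < w^2 then 1 else 0)) with hg_def
  have hgmeas : Measurable g := by
    apply Real.measurable_exp.comp
    exact (((measurable_id.pow_const 2)).const_mul κ).mul
      (Measurable.ite hSmeas measurable_const measurable_const)
  -- bound function
  set B : ℝ → ℝ := fun w => C * Real.exp (-a * w^2) with hB_def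
  have hBint : Integrable B := (integrable_exp_neg_mul_sq ha).const_mul C
  have hpdfg_le : ∀ w : ℝ, gaussianPDFReal 0 1 w * g w ≤ B w := by
    intro w
    rw [hpdf w, hg_def, hB_def]
    simp only
    rw [mul_assoc, ← Real.exp_add]
    have harg : -(1/2) * w^2 + κ * w^2 * (if 1 + z < w^2 then 1 else 0) ≤ -a * w^2 := by
      rw [ha_def]
      split <;> nlinarith [sq_nonneg w]
    exact mul_le_mul_of_nonneg_left (Real.exp_le_exp.mpr harg) hC.le
  have hlhs_int : Integrable (fun w => gaussianPDFReal 0 1 w * g w) := by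
    refine Integrable.mono' hBint
      (((measurable_gaussianPDFReal 0 1).mul hgmeas).aestronglyMeasurable) ?_
    filter_upwards with w
    rw [Real.norm_eq_abs, abs_of_nonneg
      (mul_nonneg (gaussianPDFReal_nonneg _ _ _) (Real.exp_pos _).le)]
    exact hpdfg_le w
  have hrhs_int : Integrable (fun w => gaussianPDFReal 0 1 w + S.indicator B w) :=
    (integrable_gaussianPDFReal 0 1).add (hBint.indicator hSmeas)
  have hptwise : ∀ w : ℝ, gaussianPDFReal 0 1 w * g w
      ≤ gaussianPDFReal 0 1 w + S.indicator B w := by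
    intro w
    by_cases hw : w ∈ S
    · have hw' : 1 + z < w^2 := hw
      rw [Set.indicator_of_mem hw, hg_def]
      simp only [if_pos hw']
      have heq : gaussianPDFReal 0 1 w * Real.exp (κ * w ^ 2 * 1) = B w := by
        rw [hpdf w, hB_def, mul_assoc, ← Real.exp_add]
        congr 2
        rw [ha_def]; ring
      rw [heq]
      linarith [gaussianPDFReal_nonneg 0 1 w]
    · have hw' : ¬ (1 + z < w^2) := hw
      rw [Set.indicator_of_notMem hw, hg_def]
      simp only [if_neg hw', mul_zero, Real.exp_zero, mul_one, add_zero, le_refl]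
  -- rewrite the gaussian integral
  rw [integral_gaussianReal_std]
  have hstep1 : ∫ w, gaussianPDFReal 0 1 w * g w
      ≤ ∫ w, (gaussianPDFReal 0 1 w + S.indicator B w) :=
    integral_mono hlhs_int hrhs_int hptwise
  have hstep2 : ∫ w, (gaussianPDFReal 0 1 w + S.indicator B w)
      = 1 + ∫ w in S, B w := by
    rw [integral_add (integrable_gaussianPDFReal 0 1) (hBint.indicator hSmeas),
      integral_gaussianPDFReal_eq_one 0 one_ne_zero, integral_indicator hSmeas]
  -- now bound the set integral
  have hSeq : S = Set.Iio (-t) ∪ Set.Ioi t := by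
    ext w
    simp only [hS_def, Set.mem_setOf_eq, Set.mem_union, Set.mem_Iio, Set.mem_Ioi]
    constructor
    · intro h
      have habs : t < |w| := by
        have : t^2 < |w|^2 := by rw [sq_abs, ht2]; exact h
        exact lt_of_pow_lt_pow_left₀ 2 (abs_nonneg w) this
      rcases lt_abs.mp habs with h' | h'
      · right; exact h'
      · left; linarith
    · intro h
      rcases h with h' | h'
      · nlinarith
      · nlinarith
  set M : ℝ → ℝ := fun w => C * (|w| * Real.exp (-a * w^2)) with hM_def
  have hMint : Integrable M := by
    have := (integrable_mul_exp_neg_mul_sq ha).abs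
    refine Integrable.const_mul ?_ C
    simpa [abs_mul, abs_of_nonneg (Real.exp_pos _).le] using this
  have hBM : ∀ w ∈ S, B w ≤ M w := by
    intro w hw
    have hw' : 1 + z < w^2 := hw
    have habs : 1 ≤ |w| := by nlinarith [sq_abs w, abs_nonneg w]
    have h2 : Real.exp (-a*w^2) ≤ |w| * Real.exp (-a*w^2) := by
      nlinarith [(Real.exp_pos (-a*w^2)).le]
    exact mul_le_mul_of_nonneg_left h2 hC.le
  have hMeven : ∀ w : ℝ, M (-w) = M w := by
    intro w; simp [hM_def, abs_neg, neg_pow]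
  have hstep3 : ∫ w in S, B w ≤ ∫ w in S, M w := by
    refine setIntegral_mono_on (hBint.integrableOn) (hMint.integrableOn) hSmeas hBM
  have hsplit : ∫ w in S, M w = (∫ w in Set.Iio (-t), M w) + ∫ w in Set.Ioi t, M w := by
    rw [hSeq]
    refine setIntegral_union ?_ measurableSet_Ioi hMint.integrableOn hMint.integrableOn
    rw [Set.disjoint_left]
    intro x hx hx'
    simp only [Set.mem_Iio] at hx
    simp only [Set.mem_Ioi] at hx'
    linarith
  have hneg : ∫ w in Set.Iio (-t), M w = ∫ w in Set.Ioi t, M w := by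
    rw [setIntegral_congr_set Iio_ae_eq_Iic]
    have : ∫ w in Set.Iic (-t), M w = ∫ w in Set.Iic (-t), M (-w) := by
      refine setIntegral_congr_fun measurableSet_Iic (fun w _ => ?_)
      rw [hMeven]
    rw [this, integral_comp_neg_Iic, neg_neg]
  have htail : ∫ w in Set.Ioi t, M w = C * (Real.exp (-a * t^2) / (2*a)) := by
    have : ∫ w in Set.Ioi t, M w = ∫ w in Set.Ioi t, C * (w * Real.exp (-a * w^2)) := by
      refine setIntegral_congr_fun measurableSet_Ioi (fun w hw => ?_)
      have : (0:ℝ) < w := lt_of_lt_of_le (by linarith [Set.mem_Ioi.mp hw]) le_rfl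
      rw [hM_def]
      simp only
      rw [abs_of_pos (by linarith [Set.mem_Ioi.mp hw] : (0:ℝ) < w)]
    rw [this, integral_const_mul, gauss_tail_int a t ha]
  have hfinal : ∫ w in S, M w ≤ Real.exp (-(z * (1 - 2*κ)) / 2) / (1 - 2*κ) := by
    rw [hsplit, hneg, htail, ht2]
    have h2a : 1 - 2*κ = 2*a := by rw [ha_def]; ring
    rw [h2a]
    have hexp : Real.exp (-a * (1+z)) = Real.exp (-a) * Real.exp (-(z * (2*a))/2) := by
      rw [← Real.exp_add]; congr 1; ring
    rw [hexp]
    have hCle : 2 * (C * Real.exp (-a)) ≤ 1 := by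
      have h1 : Real.exp (-a) ≤ 1 := Real.exp_le_one_iff.mpr (by linarith)
      have h2 : (2:ℝ) ≤ Real.sqrt (2*Real.pi) := by
        nlinarith [Real.sq_sqrt (show (0:ℝ) ≤ 2*Real.pi by positivity),
          Real.sqrt_nonneg (2*Real.pi), Real.pi_gt_three]
      have h3 : C ≤ 1/2 := by
        rw [hC_def]
        rw [inv_le_comm₀ (by positivity) (by norm_num)]
        simpa using h2
      nlinarith
    have hE := (Real.exp_pos (-(z * (2*a))/2)).le
    have hq : (0:ℝ) ≤ Real.exp (-(z * (2*a))/2) / (2*a) :=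
      div_nonneg hE (by linarith)
    have key : C * (Real.exp (-a) * Real.exp (-(z * (2*a))/2) / (2*a))
        + C * (Real.exp (-a) * Real.exp (-(z * (2*a))/2) / (2*a))
        = (2 * (C * Real.exp (-a))) * (Real.exp (-(z * (2*a))/2) / (2*a)) := by
      ring
    rw [key]
    calc (2 * (C * Real.exp (-a))) * (Real.exp (-(z * (2*a))/2) / (2*a))
        ≤ 1 * (Real.exp (-(z * (2*a))/2) / (2*a)) :=
          mul_le_mul_of_nonneg_right hCle hq
      _ = Real.exp (-(z * (2*a))/2) / (2*a) := one_mul _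
  calc ∫ w, gaussianPDFReal 0 1 w * g w
      ≤ 1 + ∫ w in S, B w := by rw [← hstep2]; exact hstep1
    _ ≤ 1 + ∫ w in S, M w := by linarith
    _ ≤ 1 + Real.exp (-(z * (1 - 2*κ)) / 2) / (1 - 2*κ) := by linarith
end

section
/- Let Z₁,…,Z_p be i.i.d. standard Gaussian random variables, let c₀ ≥ 2, κ ∈ (0, 1/2), and set z⋆ := c₀ log p. Then P[ Σ_{j=1}^p Z_j² · 1{Z_j² > 1 + z⋆} > 4 κ^{−1} p^{c₀ κ} ] ≤ exp( − p^{c₀ κ} ). -/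
open MeasureTheory ProbabilityTheory

open Real Set
open scoped ENNReal NNReal

lemma aux_lintegral_pi_pow {n : ℕ} (μ : Measure ℝ) [IsProbabilityMeasure μ]
    (f : ℝ → ℝ≥0∞) (hf : Measurable f) :
    ∫⁻ ω : Fin n → ℝ, ∏ j, f (ω j) ∂Measure.pi (fun _ => μ) = (∫⁻ x, f x ∂μ) ^ n := by
  induction n with
  | zero => simp
  | succ n ih =>
    have hmp := measurePreserving_piFinSuccAbove (fun _ : Fin (n+1) => μ) 0
    have hin : Measurable fun w : Fin n → ℝ => ∏ j, f (w j) :=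
      Finset.measurable_prod Finset.univ fun j _ => hf.comp (measurable_pi_apply j)
    have hprodm : Measurable fun y : ℝ × (Fin n → ℝ) => f y.1 * ∏ j, f (y.2 j) :=
      (hf.comp measurable_fst).mul (hin.comp measurable_snd)
    calc ∫⁻ ω : Fin (n+1) → ℝ, ∏ j, f (ω j) ∂Measure.pi (fun _ => μ)
        = ∫⁻ y, f y.1 * ∏ j, f (y.2 j)
            ∂(μ.prod (Measure.pi (fun _ : Fin n => μ))) := by
          rw [← hmp.lintegral_comp hprodm]
          refine lintegral_congr fun ω => ?_
          rw [Fin.prod_univ_succAbove (fun j => f (ω j)) 0]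
          rfl
      _ = (∫⁻ x, f x ∂μ) * ∫⁻ ω : Fin n → ℝ, ∏ j, f (ω j) ∂Measure.pi (fun _ => μ) :=
          lintegral_prod_mul hf.aemeasurable hin.aemeasurable
      _ = (∫⁻ x, f x ∂μ) ^ (n+1) := by rw [ih]; ring

lemma aux_single_bound (a t : ℝ) (ha : 0 ≤ a) (ht0 : 0 ≤ t) (ht : t < 1/2) :
    ∫⁻ x, ENNReal.ofReal (Real.exp (t * (x^2 * (if a < x^2 then 1 else 0)))) ∂(gaussianReal 0 1)
      ≤ ENNReal.ofReal (Real.exp ((Real.sqrt (1-2*t))⁻¹ * Real.exp (-((1-2*t)*a)/2))) := by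
  set s : ℝ := 1 - 2*t with hsdef
  have hs0 : 0 < s := by simp only [hsdef]; linarith
  set r : ℝ := Real.sqrt a with hrdef
  have hr0 : 0 ≤ r := Real.sqrt_nonneg a
  have hr2 : r^2 = a := Real.sq_sqrt ha
  have hπ : (0:ℝ) < 2*π := by positivity
  set c : ℝ := (Real.sqrt (2*π))⁻¹ with hcdef
  have hc0 : 0 < c := by rw [hcdef]; positivity
  set K : ℝ := c * Real.exp (-(s*a)/2) with hKdef
  have hK0 : 0 < K := by rw [hKdef]; positivity
  have hpdf : ∀ x : ℝ, gaussianPDFReal 0 1 x = c * Real.exp (-x^2/2) := by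
    intro x
    simp [gaussianPDFReal, hcdef]
  set B : ℝ → ℝ≥0∞ :=
    fun x => if r < x then ENNReal.ofReal (K * Real.exp (-(s/2) * (x - r)^2)) else 0 with hBdef
  have hB_meas : Measurable B := by
    refine Measurable.ite (measurableSet_lt measurable_const measurable_id) ?_ measurable_const
    exact ((((measurable_id.sub_const r).pow_const 2).const_mul (-(s/2))).exp.const_mul K).ennreal_ofReal
  have hg_meas : Measurable fun x : ℝ =>
      ENNReal.ofReal (Real.exp (t * (x^2 * (if a < x^2 then 1 else 0)))) := by
    have : Measurable fun x : ℝ => x^2 * (if a < x^2 then (1:ℝ) else 0) := by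
      refine (measurable_id.pow_const 2).mul ?_
      exact Measurable.ite (measurableSet_lt measurable_const (measurable_id.pow_const 2))
        measurable_const measurable_const
    exact (measurable_exp.comp (this.const_mul t)).ennreal_ofReal
  -- pointwise bound
  have hpoint : ∀ x : ℝ,
      gaussianPDF 0 1 x * ENNReal.ofReal (Real.exp (t * (x^2 * (if a < x^2 then 1 else 0))))
        ≤ ENNReal.ofReal (gaussianPDFReal 0 1 x) + (B x + B (-x)) := by
    intro x
    rw [gaussianPDF, ← ENNReal.ofReal_mul (gaussianPDFReal_nonneg 0 1 x)]
    by_cases hx : a < x^2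
    · rw [if_pos hx, mul_one]
      have habs : r < |x| := by
        rw [hrdef, ← Real.sqrt_sq_eq_abs]
        exact Real.sqrt_lt_sqrt ha hx
      have hval : gaussianPDFReal 0 1 x * Real.exp (t * x^2) = c * Real.exp (-(s/2) * x^2) := by
        rw [hpdf x, mul_assoc, ← Real.exp_add]
        congr 1
        rw [hsdef]; ring
      rw [hval]
      rcases lt_abs.mp habs with hxr | hxr
      · have hBx : ENNReal.ofReal (c * Real.exp (-(s/2) * x^2)) ≤ B x := by
          rw [hBdef]
          simp only [if_pos hxr]
          refine ENNReal.ofReal_le_ofReal ?_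
          rw [hKdef, mul_assoc, ← Real.exp_add]
          refine mul_le_mul_of_nonneg_left (Real.exp_le_exp.2 ?_) hc0.le
          have key : 0 ≤ s * (r * (x - r)) :=
            mul_nonneg hs0.le (mul_nonneg hr0 (sub_nonneg.2 hxr.le))
          nlinarith [key, hr2]
        calc ENNReal.ofReal (c * Real.exp (-(s/2) * x^2)) ≤ B x := hBx
          _ ≤ ENNReal.ofReal (gaussianPDFReal 0 1 x) + (B x + B (-x)) := by
              refine le_trans (le_add_right le_rfl : B x ≤ B x + B (-x)) ?_
              exact le_add_left le_rfl
      · have hxr' : r < -x := hxr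
        have hBx : ENNReal.ofReal (c * Real.exp (-(s/2) * x^2)) ≤ B (-x) := by
          rw [hBdef]
          simp only [if_pos hxr']
          refine ENNReal.ofReal_le_ofReal ?_
          rw [hKdef, mul_assoc, ← Real.exp_add]
          refine mul_le_mul_of_nonneg_left (Real.exp_le_exp.2 ?_) hc0.le
          have key : 0 ≤ s * (r * (-x - r)) :=
            mul_nonneg hs0.le (mul_nonneg hr0 (sub_nonneg.2 hxr'.le))
          nlinarith [key, hr2]
        calc ENNReal.ofReal (c * Real.exp (-(s/2) * x^2)) ≤ B (-x) := hBx
          _ ≤ ENNReal.ofReal (gaussianPDFReal 0 1 x) + (B x + B (-x)) := by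
              refine le_trans (le_add_left le_rfl : B (-x) ≤ B x + B (-x)) ?_
              exact le_add_left le_rfl
    · rw [if_neg hx, mul_zero, mul_zero, Real.exp_zero, mul_one]
      exact le_add_right le_rfl
  -- value of ∫⁻ B
  have hBint : ∫⁻ x, B x = ENNReal.ofReal (K * (Real.sqrt (π / (s/2)) / 2)) := by
    have hfun : ∀ x : ℝ, B x =
        (fun y => if 0 < y then ENNReal.ofReal (K * Real.exp (-(s/2) * y^2)) else 0) (x - r) := by
      intro x
      rw [hBdef]
      simp only [sub_pos]
    rw [lintegral_congr hfun,
      lintegral_sub_right_eq_self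
        (fun y => if 0 < y then ENNReal.ofReal (K * Real.exp (-(s/2) * y^2)) else 0) r]
    have hind : ∀ y : ℝ, (if 0 < y then ENNReal.ofReal (K * Real.exp (-(s/2) * y^2)) else 0)
        = (Ioi (0:ℝ)).indicator (fun y => ENNReal.ofReal (K * Real.exp (-(s/2) * y^2))) y := by
      intro y
      rw [Set.indicator_apply]
      simp [mem_Ioi]
    rw [lintegral_congr hind, lintegral_indicator measurableSet_Ioi]
    have hInt : IntegrableOn (fun y : ℝ => K * Real.exp (-(s/2) * y^2)) (Ioi 0) :=
      ((integrable_exp_neg_mul_sq (by linarith : (0:ℝ) < s/2)).const_mul K).integrableOn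
    rw [← ofReal_integral_eq_lintegral_ofReal hInt (ae_of_all _ fun y => by positivity),
      MeasureTheory.integral_const_mul, integral_gaussian_Ioi (s/2)]
  have hBneg : ∫⁻ x, B (-x) = ∫⁻ x, B x := by
    have h := lintegral_map_equiv (μ := (volume : Measure ℝ)) B (Homeomorph.neg ℝ).toMeasurableEquiv
    rw [show (Measure.map (⇑(Homeomorph.neg ℝ).toMeasurableEquiv) (volume : Measure ℝ)) = volume from
      Measure.map_neg_eq_self (volume : Measure ℝ)] at h
    exact h.symm
  -- assemble
  rw [gaussianReal_of_var_ne_zero 0 one_ne_zero,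
    lintegral_withDensity_eq_lintegral_mul _ (measurable_gaussianPDF 0 1) hg_meas]
  have hq : K * (Real.sqrt (π / (s/2)) / 2) + K * (Real.sqrt (π / (s/2)) / 2)
      = (Real.sqrt s)⁻¹ * Real.exp (-(s*a)/2) := by
    have hcs : c * Real.sqrt (π / (s/2)) = (Real.sqrt s)⁻¹ := by
      rw [hcdef, ← Real.sqrt_inv, ← Real.sqrt_inv, ← Real.sqrt_mul (by positivity)]
      congr 1
      field_simp
    rw [hKdef]
    nlinarith [hcs]
  calc ∫⁻ x, ((gaussianPDF 0 1) * fun x =>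
        ENNReal.ofReal (Real.exp (t * (x^2 * (if a < x^2 then 1 else 0))))) x
      ≤ ∫⁻ x, (ENNReal.ofReal (gaussianPDFReal 0 1 x) + (B x + B (-x))) := by
        refine lintegral_mono fun x => ?_
        simpa using hpoint x
    _ = 1 + ((∫⁻ x, B x) + ∫⁻ x, B (-x)) := by
        rw [lintegral_add_left (measurable_gaussianPDFReal 0 1).ennreal_ofReal,
          lintegral_add_left hB_meas, lintegral_gaussianPDFReal_eq_one 0 one_ne_zero]
    _ = ENNReal.ofReal (1 + ((Real.sqrt s)⁻¹ * Real.exp (-(s*a)/2))) := by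
        rw [hBneg, hBint, ← ENNReal.ofReal_add (by positivity) (by positivity), hq,
          ENNReal.ofReal_add (by norm_num) (by positivity), ENNReal.ofReal_one]
    _ ≤ ENNReal.ofReal (Real.exp ((Real.sqrt s)⁻¹ * Real.exp (-(s*a)/2))) := by
        refine ENNReal.ofReal_le_ofReal ?_
        have := Real.add_one_le_exp ((Real.sqrt s)⁻¹ * Real.exp (-(s*a)/2))
        linarith

lemma aux_markov {α : Type*} [MeasurableSpace α] (μ : Measure α) (F : α → ℝ)
    (hF : Measurable F) (t M : ℝ) (ht : 0 < t) :
    μ {ω | M < F ω} ≤ ENNReal.ofReal (Real.exp (-(t*M))) *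
      ∫⁻ ω, ENNReal.ofReal (Real.exp (t * F ω)) ∂μ := by
  set ε := ENNReal.ofReal (Real.exp (t*M)) with hεdef
  have hε0 : ε ≠ 0 := by
    rw [hεdef]
    simp [ENNReal.ofReal_eq_zero, not_le, Real.exp_pos]
  have hεtop : ε ≠ ⊤ := ENNReal.ofReal_ne_top
  have hmono : μ {ω | M < F ω} ≤ μ {ω | ε ≤ ENNReal.ofReal (Real.exp (t * F ω))} := by
    refine measure_mono fun ω hω => ?_
    have h1 : t * M ≤ t * F ω := mul_le_mul_of_nonneg_left (le_of_lt hω) ht.le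
    exact ENNReal.ofReal_le_ofReal (Real.exp_le_exp.2 h1)
  refine hmono.trans ?_
  have hkey := mul_meas_ge_le_lintegral₀ (μ := μ)
    ((measurable_exp.comp (hF.const_mul t)).ennreal_ofReal.aemeasurable) ε
  have hinv : ENNReal.ofReal (Real.exp (-(t*M))) = ε⁻¹ := by
    rw [hεdef, Real.exp_neg, ENNReal.ofReal_inv_of_pos (Real.exp_pos _)]
  rw [hinv]
  calc μ {ω | ε ≤ ENNReal.ofReal (Real.exp (t * F ω))}
      = ε⁻¹ * (ε * μ {ω | ε ≤ ENNReal.ofReal (Real.exp (t * F ω))}) := by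
        rw [← mul_assoc, ENNReal.inv_mul_cancel hε0 hεtop, one_mul]
    _ ≤ ε⁻¹ * ∫⁻ ω, ENNReal.ofReal (Real.exp (t * F ω)) ∂μ := mul_le_mul_of_nonneg_left hkey zero_le

/-- Tail bound for the thresholded chi-squared sum: if `Z₁,…,Z_p` are i.i.d. standard
Gaussians, `c₀ ≥ 2`, `κ ∈ (0, 1/2)` and `z⋆ = c₀ log p`, then
`P[Σ_j Z_j² 1{Z_j² > 1 + z⋆} > 4 κ⁻¹ p^{c₀κ}] ≤ exp(-p^{c₀κ})`. -/
theorem gaussian_truncated_chisq_sum_tail_bound (p : ℕ) (hp : 1 ≤ p)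
    (c₀ κ : ℝ) (hc₀ : 2 ≤ c₀) (hκ0 : 0 < κ) (hκ : κ < 1/2)
    (z : ℝ) (hz : z = c₀ * Real.log p) :
    Measure.pi (fun _ : Fin p => gaussianReal 0 1)
        {ω : Fin p → ℝ | 4 * κ⁻¹ * (p : ℝ)^(c₀ * κ) <
          ∑ j : Fin p, (ω j)^2 * (if 1 + z < (ω j)^2 then 1 else 0)}
      ≤ ENNReal.ofReal (Real.exp (-(p : ℝ)^(c₀ * κ))) := by
  have hp0 : (0:ℝ) < p := by exact_mod_cast hp
  have hp1 : (1:ℝ) ≤ p := by exact_mod_cast hp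
  set t : ℝ := min κ (3/8) with htdef
  have htκ : t ≤ κ := min_le_left _ _
  have ht38 : t ≤ 3/8 := min_le_right _ _
  have ht0 : 0 < t := lt_min hκ0 (by norm_num)
  have ht12 : t < 1/2 := lt_of_le_of_lt ht38 (by norm_num)
  have hz0 : 0 ≤ z := by
    rw [hz]; exact mul_nonneg (by linarith) (Real.log_nonneg hp1)
  have ha0 : (0:ℝ) ≤ 1 + z := by linarith
  set s : ℝ := 1 - 2*t with hsdef
  have hs0 : 0 < s := by rw [hsdef]; linarith
  have hs14 : 1/4 ≤ s := by rw [hsdef]; linarith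
  set P : ℝ := (p:ℝ)^(c₀*κ) with hPdef
  have hcκ0 : 0 ≤ c₀*κ := mul_nonneg (by linarith) hκ0.le
  have hP1 : 1 ≤ P := by
    rw [hPdef]
    calc (1:ℝ) = (p:ℝ)^(0:ℝ) := (Real.rpow_zero _).symm
      _ ≤ (p:ℝ)^(c₀*κ) := Real.rpow_le_rpow_of_exponent_le hp1 hcκ0
  set β : ℝ := (Real.sqrt s)⁻¹ * Real.exp (-(s*(1+z))/2) with hβdef
  set M : ℝ := 4 * κ⁻¹ * P with hMdef
  set μ := Measure.pi (fun _ : Fin p => gaussianReal 0 1) with hμdef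
  -- measurability
  have hg_meas : Measurable fun x : ℝ => x^2 * (if 1 + z < x^2 then (1:ℝ) else 0) :=
    (measurable_id.pow_const 2).mul
      (Measurable.ite (measurableSet_lt measurable_const (measurable_id.pow_const 2))
        measurable_const measurable_const)
  have hF_meas : Measurable fun ω : Fin p → ℝ =>
      ∑ j, (ω j)^2 * (if 1 + z < (ω j)^2 then (1:ℝ) else 0) :=
    Finset.measurable_sum Finset.univ fun j _ => hg_meas.comp (measurable_pi_apply j)
  have hf1_meas : Measurable fun x : ℝ =>
      ENNReal.ofReal (Real.exp (t * (x^2 * (if 1 + z < x^2 then (1:ℝ) else 0)))) :=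
    (measurable_exp.comp (hg_meas.const_mul t)).ennreal_ofReal
  -- single-variable bound
  have hsingle := aux_single_bound (1+z) t ha0 ht0.le ht12
  rw [← hsdef] at hsingle
  -- product identity
  have hprodEq : ∫⁻ ω, ENNReal.ofReal
        (Real.exp (t * ∑ j, (ω j)^2 * (if 1 + z < (ω j)^2 then (1:ℝ) else 0))) ∂μ
      = (∫⁻ x, ENNReal.ofReal
          (Real.exp (t * (x^2 * (if 1 + z < x^2 then (1:ℝ) else 0)))) ∂gaussianReal 0 1) ^ p := by
    rw [hμdef, ← aux_lintegral_pi_pow (gaussianReal 0 1) _ hf1_meas]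
    refine lintegral_congr fun ω => ?_
    rw [Finset.mul_sum, Real.exp_sum,
      ENNReal.ofReal_prod_of_nonneg (fun i _ => (Real.exp_pos _).le)]
  -- numeric bound
  have hsqrt : (Real.sqrt s)⁻¹ ≤ 2 := by
    have h1 : (1/2:ℝ) ≤ Real.sqrt s := by
      rw [show (1/2:ℝ) = Real.sqrt (1/4) by
        rw [show (1/4:ℝ) = (1/2)^2 by norm_num, Real.sqrt_sq (by norm_num : (0:ℝ) ≤ 1/2)]]
      exact Real.sqrt_le_sqrt hs14
    calc (Real.sqrt s)⁻¹ ≤ ((1:ℝ)/2)⁻¹ := by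
          exact inv_anti₀ (by norm_num) h1
      _ = 2 := by norm_num
  have hexp : Real.exp (-(s*(1+z))/2) ≤ (p:ℝ) ^ (-(c₀*s/2)) := by
    rw [Real.rpow_def_of_pos hp0]
    refine Real.exp_le_exp.2 ?_
    rw [hz]
    have hlog : 0 ≤ Real.log p := Real.log_nonneg hp1
    nlinarith [hs0.le, hlog]
  have hβle : β ≤ 2 * (p:ℝ)^(-(c₀*s/2)) := by
    rw [hβdef]
    exact mul_le_mul hsqrt hexp (Real.exp_nonneg _) (by norm_num)
  have hexpele : (1:ℝ) - c₀*s/2 ≤ c₀*κ := by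
    have hprod : 0 ≤ c₀*(κ - t) := mul_nonneg (by linarith) (by linarith)
    nlinarith [hsdef, hprod]
  have hpβ : (p:ℝ)*β ≤ 2*P := by
    have h1 : (p:ℝ)*β ≤ (p:ℝ)*(2*(p:ℝ)^(-(c₀*s/2))) :=
      mul_le_mul_of_nonneg_left hβle hp0.le
    have h2 : (p:ℝ)*(2*(p:ℝ)^(-(c₀*s/2))) = 2*(p:ℝ)^(1 - c₀*s/2) := by
      rw [show (1:ℝ) - c₀*s/2 = 1 + (-(c₀*s/2)) by ring, Real.rpow_add hp0, Real.rpow_one]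
      ring
    have h3 : (p:ℝ)^(1 - c₀*s/2) ≤ P := by
      rw [hPdef]
      exact Real.rpow_le_rpow_of_exponent_le hp1 hexpele
    linarith
  have htM : 3*P ≤ t*M := by
    have h4t : 3*κ ≤ 4*t := by
      rcases le_total κ (3/8:ℝ) with h | h
      · rw [htdef, min_eq_left h]; linarith
      · rw [htdef, min_eq_right h]; linarith
    have h2 : (3:ℝ) ≤ 4*t*κ⁻¹ := by
      rw [show (4:ℝ)*t*κ⁻¹ = (4*t)/κ by rw [div_eq_mul_inv]]
      exact (le_div_iff₀ hκ0).2 (by linarith)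
    have hP0 : (0:ℝ) ≤ P := by linarith
    calc (3:ℝ)*P ≤ (4*t*κ⁻¹)*P := mul_le_mul_of_nonneg_right h2 hP0
      _ = t*M := by rw [hMdef]; ring
  have hnum : -(t*M) + (p:ℝ)*β ≤ -P := by linarith
  -- assembly
  calc μ {ω : Fin p → ℝ | M < ∑ j, (ω j)^2 * (if 1 + z < (ω j)^2 then 1 else 0)}
      ≤ ENNReal.ofReal (Real.exp (-(t*M))) * ∫⁻ ω, ENNReal.ofReal
          (Real.exp (t * ∑ j, (ω j)^2 * (if 1 + z < (ω j)^2 then (1:ℝ) else 0))) ∂μ :=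
        aux_markov μ (fun ω => ∑ j, (ω j)^2 * (if 1 + z < (ω j)^2 then (1:ℝ) else 0))
          hF_meas t M ht0
    _ = ENNReal.ofReal (Real.exp (-(t*M))) * (∫⁻ x, ENNReal.ofReal
          (Real.exp (t * (x^2 * (if 1 + z < x^2 then (1:ℝ) else 0)))) ∂gaussianReal 0 1) ^ p := by
        rw [hprodEq]
    _ ≤ ENNReal.ofReal (Real.exp (-(t*M))) * (ENNReal.ofReal (Real.exp β)) ^ p := by
        gcongr
    _ = ENNReal.ofReal (Real.exp (-(t*M)) * Real.exp β ^ p) := by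
        rw [← ENNReal.ofReal_pow (Real.exp_nonneg _), ← ENNReal.ofReal_mul (Real.exp_nonneg _)]
    _ = ENNReal.ofReal (Real.exp (-(t*M) + (p:ℝ)*β)) := by
        rw [← Real.exp_nat_mul, ← Real.exp_add]
    _ ≤ ENNReal.ofReal (Real.exp (-P)) :=
        ENNReal.ofReal_le_ofReal (Real.exp_le_exp.2 hnum)
end

section
/- Let w > 0, σ > 0, z ≥ 0, β ∈ ℝ and t ∈ ℝ, set v := w β + t, and define b̃ := v/w − σ²/v if v² > σ² w (1+z) (note v ≠ 0 in that case) and b̃ := 0 otherwise. Then with ζ := t/(σ √w): if v² ≤ σ² w (1+z) then (b̃ − β)² = β² ≤ (2σ²/w)(ζ² + 1 + z); and if v² > σ² w (1+z) then |b̃ − β| = |t/w − σ²/v| ≤ (σ/√w)(1 + |ζ|). -/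
/-- Deterministic per-coordinate bound for the thresholded sparse Bayesian learning
estimator under an orthogonal design: with `w = ‖x_j‖² > 0`, `t = ⟨ε, x_j⟩`, `β = β⋆_j`,
`v = wβ + t`, threshold `z ≥ 0`, and
`b̃ = v/w - σ²/v` if `v² > σ² w (1+z)` and `b̃ = 0` otherwise, setting `ζ = t/(σ√w)`:
if `v² ≤ σ² w (1+z)` then `(b̃-β)² = β² ≤ (2σ²/w)(ζ² + 1 + z)`, while if
`v² > σ² w (1+z)` then `|b̃-β| = |t/w - σ²/v| ≤ (σ/√w)(1 + |ζ|)`. -/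
theorem sbl_threshold_coordinate_bound (w σ z β t : ℝ)
    (hw : 0 < w) (hσ : 0 < σ) (hz : 0 ≤ z)
    (v : ℝ) (hv : v = w * β + t)
    (b : ℝ) (hb : b = if σ^2 * w * (1 + z) < v^2 then v / w - σ^2 / v else 0)
    (ζ : ℝ) (hζ : ζ = t / (σ * Real.sqrt w)) :
    (v^2 ≤ σ^2 * w * (1 + z) →
      (b - β)^2 = β^2 ∧ β^2 ≤ 2 * σ^2 / w * (ζ^2 + 1 + z)) ∧
    (σ^2 * w * (1 + z) < v^2 →
      |b - β| = |t / w - σ^2 / v| ∧ |b - β| ≤ σ / Real.sqrt w * (1 + |ζ|)) := by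
  have hsw : 0 < Real.sqrt w := Real.sqrt_pos.2 hw
  have hsw2 : Real.sqrt w ^ 2 = w := Real.sq_sqrt hw.le
  have ht : t = ζ * (σ * Real.sqrt w) := by
    rw [hζ]; field_simp
  have ht2 : t ^ 2 = ζ ^ 2 * σ ^ 2 * w := by
    rw [ht]; nlinarith [hsw2]
  have hvb : w * β = v - t := by rw [hv]; ring
  constructor
  · intro h
    rw [hb, if_neg (not_lt.2 h)]
    refine ⟨by ring, ?_⟩
    rw [div_mul_eq_mul_div, le_div_iff₀ hw]
    have key : β ^ 2 * w * w ≤ 2 * σ ^ 2 * (ζ ^ 2 + 1 + z) * w := by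
      have hvb2 : (w * β) ^ 2 = (v - t) ^ 2 := by rw [hvb]
      nlinarith [sq_nonneg (v + t), hvb2]
    exact le_of_mul_le_mul_right key hw
  · intro h
    have hv2 : σ ^ 2 * w < v ^ 2 := lt_of_le_of_lt (by nlinarith [mul_pos (pow_pos hσ 2) hw]) h
    have hvne : v ≠ 0 := by
      intro h0; rw [h0] at hv2; nlinarith
    have hvabs : σ * Real.sqrt w < |v| := by
      have h1 : (σ * Real.sqrt w) ^ 2 < |v| ^ 2 := by
        rw [sq_abs]; nlinarith [hsw2]
      exact lt_of_pow_lt_pow_left₀ 2 (abs_nonneg v) h1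
    rw [hb, if_pos h]
    have heq : v / w - σ ^ 2 / v - β = t / w - σ ^ 2 / v := by
      rw [hv] at hvne ⊢; field_simp; ring
    refine ⟨by rw [heq], ?_⟩
    rw [heq]
    have h1 : |t / w| = σ / Real.sqrt w * |ζ| := by
      have : t / w = σ / Real.sqrt w * ζ := by
        rw [ht]; field_simp; linear_combination ζ * hsw2
      rw [this, abs_mul, abs_of_pos (div_pos hσ hsw)]
    have h2 : |σ ^ 2 / v| ≤ σ / Real.sqrt w := by
      rw [abs_div, abs_of_nonneg (sq_nonneg σ)]
      rw [div_le_div_iff₀ (lt_trans (mul_pos hσ hsw) hvabs) hsw]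
      nlinarith [mul_lt_mul_of_pos_left hvabs hσ]
    calc |t / w - σ ^ 2 / v| ≤ |t / w| + |σ ^ 2 / v| := abs_sub _ _
      _ ≤ σ / Real.sqrt w * |ζ| + σ / Real.sqrt w := by rw [h1]; linarith
      _ = σ / Real.sqrt w * (1 + |ζ|) := by ring
end
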